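/- arXiv:2209.09876 — 7 statements merged into one kernel-verified Lean document; each statement's English description precedes it below -/
import Mathlib

section
/- (Worpitzky Circle Theorem) Let D ⊆ ℂ be a domain and let (c_j)_{j≥0} be a sequence of analytic functions c_j : D → ℂ satisfying |c_j(z)| < 1/4 for every z ∈ D and every j ≥ 0. For n ≥ 0 define the n-th convergent f_n(z) = 1/(1 − c_0(z)/(1 − c_1(z)/(1 − ··· /(1 − c_n(z))))). Then the sequence (f_n) converges uniformly on every compact subset of D (to a limit function on D). -/
open Filter

/-- Finite continued fraction tail: `cfrac [c₀, c₁, …, cₙ] = c₀/(1 − c₁/(1 − ⋯/(1 − cₙ)))`. -/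
noncomputable def cfrac : List ℂ → ℂ
  | [] => 0
  | c :: s => c / (1 - cfrac s)

/-- The `n`-th convergent `fₙ(z) = 1/(1 − c₀(z)/(1 − c₁(z)/(1 − ⋯/(1 − cₙ(z)))))`. -/
noncomputable def cfConv (c : ℕ → ℂ → ℂ) (n : ℕ) (z : ℂ) : ℂ :=
  1 / (1 - cfrac (List.ofFn fun i : Fin (n + 1) => c i z))

/-- Tail bound: a fraction of length `m` with entries of norm `≤ 1/4` has norm `≤ m/(2(m+1))`. -/
lemma cfrac_norm_le : ∀ L : List ℂ, (∀ x ∈ L, ‖x‖ ≤ 1/4) →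
    ‖cfrac L‖ ≤ (L.length : ℝ) / (2 * ((L.length : ℝ) + 1))
  | [], _ => by simp [cfrac]
  | a :: L, h => by
    have ih := cfrac_norm_le L (fun x hx => h x (List.mem_cons_of_mem a hx))
    have ha : ‖a‖ ≤ 1/4 := h a List.mem_cons_self
    set m : ℝ := (L.length : ℝ) with hm
    have hm0 : (0:ℝ) ≤ m := Nat.cast_nonneg _
    have hden : (m+2)/(2*(m+1)) ≤ ‖1 - cfrac L‖ := by
      have h1 := norm_sub_norm_le (1 : ℂ) (cfrac L)
      simp only [norm_one] at h1
      have : (m+2)/(2*(m+1)) = 1 - m/(2*(m+1)) := by field_simp; ring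
      rw [this]
      linarith
    have hdpos : (0:ℝ) < (m+2)/(2*(m+1)) := by positivity
    rw [cfrac, norm_div]
    simp only [List.length_cons]
    push_cast
    calc ‖a‖ / ‖1 - cfrac L‖ ≤ (1/4) / ((m+2)/(2*(m+1))) := by
          gcongr
      _ = (m+1) / (2*((m+1)+1)) := by field_simp; ring

lemma one_sub_cfrac_norm (L : List ℂ) (h : ∀ x ∈ L, ‖x‖ ≤ 1/4) :
    ((L.length : ℝ) + 2) / (2 * ((L.length : ℝ) + 1)) ≤ ‖1 - cfrac L‖ := by
  have ih := cfrac_norm_le L h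
  have h1 := norm_sub_norm_le (1 : ℂ) (cfrac L)
  simp only [norm_one] at h1
  have hm0 : (0:ℝ) ≤ (L.length : ℝ) := Nat.cast_nonneg _
  have : ((L.length : ℝ)+2)/(2*((L.length : ℝ)+1)) = 1 - (L.length : ℝ)/(2*((L.length : ℝ)+1)) := by
    field_simp; ring
  rw [this]; linarith

lemma one_sub_cfrac_half (L : List ℂ) (h : ∀ x ∈ L, ‖x‖ ≤ 1/4) :
    (1:ℝ)/2 ≤ ‖1 - cfrac L‖ := by
  refine le_trans ?_ (one_sub_cfrac_norm L h)
  have hm0 : (0:ℝ) ≤ (L.length : ℝ) := Nat.cast_nonneg _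
  rw [div_le_div_iff₀ (by norm_num) (by positivity)]
  linarith

lemma one_sub_cfrac_ne (L : List ℂ) (h : ∀ x ∈ L, ‖x‖ ≤ 1/4) :
    (1 : ℂ) - cfrac L ≠ 0 := by
  intro h0
  have := one_sub_cfrac_half L h
  rw [h0, norm_zero] at this
  norm_num at this

lemma cfrac_append_sub : ∀ (L : List ℂ) (c : ℂ), (∀ x ∈ L, ‖x‖ ≤ 1/4) → ‖c‖ ≤ 1/4 →
    ‖cfrac (L ++ [c]) - cfrac L‖ ≤ 1 / (2 * ((L.length : ℝ) + 1) * ((L.length : ℝ) + 2))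
  | [], c, _, hc => by
    simp only [List.nil_append, List.length_nil]
    rw [cfrac, cfrac, cfrac]
    norm_num
    exact hc
  | a :: L, c, h, hc => by
    have hL : ∀ x ∈ L, ‖x‖ ≤ 1/4 := fun x hx => h x (List.mem_cons_of_mem a hx)
    have ha : ‖a‖ ≤ 1/4 := h a List.mem_cons_self
    have hL' : ∀ x ∈ L ++ [c], ‖x‖ ≤ 1/4 := by
      intro x hx
      rcases List.mem_append.1 hx with h1 | h1
      · exact hL x h1
      · rw [List.mem_singleton.1 h1]; exact hc
    have ih := cfrac_append_sub L c hL hc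
    set m : ℝ := (L.length : ℝ) with hm
    have hm0 : (0:ℝ) ≤ m := Nat.cast_nonneg _
    have hx := one_sub_cfrac_norm (L ++ [c]) hL'
    have hy := one_sub_cfrac_norm L hL
    rw [List.length_append, List.length_singleton] at hx
    push_cast at hx
    have hxne := one_sub_cfrac_ne (L ++ [c]) hL'
    have hyne := one_sub_cfrac_ne L hL
    have key : cfrac ((a :: L) ++ [c]) - cfrac (a :: L)
        = a * (cfrac (L ++ [c]) - cfrac L) / ((1 - cfrac (L ++ [c])) * (1 - cfrac L)) := by
      show cfrac (a :: (L ++ [c])) - cfrac (a :: L) = _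
      rw [cfrac, cfrac]
      field_simp
      ring
    rw [key, norm_div, norm_mul, norm_mul]
    simp only [List.length_cons]
    push_cast
    have hDx : (0:ℝ) < (m+1+2)/(2*(m+1+1)) := by positivity
    have hDy : (0:ℝ) < (m+2)/(2*(m+1)) := by positivity
    calc ‖a‖ * ‖cfrac (L ++ [c]) - cfrac L‖ / (‖1 - cfrac (L ++ [c])‖ * ‖1 - cfrac L‖)
        ≤ (1/4) * (1 / (2 * (m + 1) * (m + 2))) / (((m+1+2)/(2*(m+1+1))) * ((m+2)/(2*(m+1)))) := by
          gcongr
      _ = 1 / (2 * (m + 1 + 1) * (m + 1 + 2)) := by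
          field_simp
          ring

lemma mem_ofFn_bound (c : ℕ → ℂ → ℂ) (z : ℂ) (hb : ∀ j, ‖c j z‖ ≤ 1/4) (n : ℕ) :
    ∀ x ∈ (List.ofFn fun i : Fin (n + 1) => c i z), ‖x‖ ≤ 1/4 := by
  intro x hx
  rw [List.mem_ofFn] at hx
  obtain ⟨i, rfl⟩ := hx
  exact hb i

lemma cfConv_dist_succ (c : ℕ → ℂ → ℂ) (n : ℕ) (z : ℂ) (hb : ∀ j, ‖c j z‖ ≤ 1/4) :
    dist (cfConv c (n+1) z) (cfConv c n z) ≤ 2 / (((n:ℝ)+2) * ((n:ℝ)+3)) := by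
  set L : List ℂ := List.ofFn fun i : Fin (n+1) => c i z with hLdef
  have hL : ∀ x ∈ L, ‖x‖ ≤ 1/4 := mem_ofFn_bound c z hb n
  have hsplit : (List.ofFn fun i : Fin (n+1+1) => c i z) = L ++ [c (n+1) z] := by
    rw [List.ofFn_succ']
    simp [hLdef, List.concat_eq_append, Fin.coe_castSucc, Fin.val_last]
  have hL' : ∀ x ∈ L ++ [c (n+1) z], ‖x‖ ≤ 1/4 := by
    rw [← hsplit]; exact mem_ofFn_bound c z hb (n+1)
  have hdiff := cfrac_append_sub L (c (n+1) z) hL (hb (n+1))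
  have hlen : (L.length : ℝ) = (n:ℝ) + 1 := by simp [hLdef]
  rw [hlen] at hdiff
  have hx := one_sub_cfrac_half (L ++ [c (n+1) z]) hL'
  have hy := one_sub_cfrac_half L hL
  have hxne := one_sub_cfrac_ne (L ++ [c (n+1) z]) hL'
  have hyne := one_sub_cfrac_ne L hL
  rw [dist_eq_norm]
  unfold cfConv
  rw [hsplit, ← hLdef]
  have key : 1 / (1 - cfrac (L ++ [c (n+1) z])) - 1 / (1 - cfrac L)
      = (cfrac (L ++ [c (n+1) z]) - cfrac L)
        / ((1 - cfrac (L ++ [c (n+1) z])) * (1 - cfrac L)) := by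
    field_simp
    ring
  rw [key, norm_div, norm_mul]
  calc ‖cfrac (L ++ [c (n+1) z]) - cfrac L‖ / (‖1 - cfrac (L ++ [c (n+1) z])‖ * ‖1 - cfrac L‖)
      ≤ (1 / (2 * ((n:ℝ) + 1 + 1) * ((n:ℝ) + 1 + 2))) / ((1/2) * (1/2)) := by gcongr
    _ = 2 / (((n:ℝ)+2) * ((n:ℝ)+3)) := by
        have : (0:ℝ) ≤ (n:ℝ) := Nat.cast_nonneg _
        field_simp
        ring

lemma cfConv_dist_le (c : ℕ → ℂ → ℂ) (z : ℂ) (hb : ∀ j, ‖c j z‖ ≤ 1/4) (n : ℕ) :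
    ∀ m, n ≤ m → dist (cfConv c m z) (cfConv c n z) ≤ 2/((n:ℝ)+2) - 2/((m:ℝ)+2) := by
  refine Nat.le_induction ?_ ?_
  · simp
  · intro m hnm ih
    have h1 := cfConv_dist_succ c m z hb
    have h2 := dist_triangle (cfConv c (m+1) z) (cfConv c m z) (cfConv c n z)
    have hm0 : (0:ℝ) ≤ (m:ℝ) := Nat.cast_nonneg _
    have heq : 2 / (((m:ℝ)+2) * ((m:ℝ)+3)) = 2/((m:ℝ)+2) - 2/(((m:ℝ)+1)+2) := by
      field_simp
      ring
    push_cast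
    linarith [heq ▸ h1]

lemma cfConv_dist_le' (c : ℕ → ℂ → ℂ) (z : ℂ) (hb : ∀ j, ‖c j z‖ ≤ 1/4) (n m : ℕ)
    (hnm : n ≤ m) : dist (cfConv c m z) (cfConv c n z) ≤ 2/((n:ℝ)+2) := by
  have h := cfConv_dist_le c z hb n m hnm
  have : (0:ℝ) < (m:ℝ) + 2 := by positivity
  have : 0 ≤ 2/((m:ℝ)+2) := by positivity
  linarith

/-- **Worpitzky Circle Theorem.** If the analytic functions `c_j` on a domain `D` all take
values in the open disk of radius `1/4`, then the convergents of the continued fraction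
`K[1, c₀(z), c₁(z), …]` converge uniformly on every compact subset of `D`. -/
theorem worpitzky_circle (D : Set ℂ) (hD : IsOpen D) (hDconn : IsConnected D)
    (c : ℕ → ℂ → ℂ) (hc : ∀ j, AnalyticOnNhd ℂ (c j) D)
    (hbound : ∀ j, ∀ z ∈ D, ‖c j z‖ < 1 / 4) :
    ∃ f : ℂ → ℂ, ∀ K : Set ℂ, K ⊆ D → IsCompact K →
      TendstoUniformlyOn (cfConv c) f atTop K := by
  classical
  have hb : ∀ z ∈ D, ∀ j, ‖c j z‖ ≤ 1/4 := fun z hz j => (hbound j z hz).le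
  -- each pointwise sequence is Cauchy
  have hcau : ∀ z ∈ D, CauchySeq (fun n => cfConv c n z) := by
    intro z hz
    rw [Metric.cauchySeq_iff']
    intro ε hε
    obtain ⟨N, hN⟩ := exists_nat_gt (2/ε)
    refine ⟨N, fun m hm => ?_⟩
    have h := cfConv_dist_le' c z (hb z hz) N m hm
    have hN2 : (0:ℝ) < (N:ℝ) + 2 := by positivity
    have : 2/((N:ℝ)+2) < ε := by
      rw [div_lt_iff₀ hN2]
      rw [div_lt_iff₀ hε] at hN
      nlinarith
    linarith
  set f : ℂ → ℂ := fun z => if hz : z ∈ D then limUnder atTop (fun n => cfConv c n z) else 0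
    with hf
  have hlim : ∀ z ∈ D, Tendsto (fun n => cfConv c n z) atTop (nhds (f z)) := by
    intro z hz
    simp only [hf, dif_pos hz]
    exact (hcau z hz).tendsto_limUnder
  refine ⟨f, fun K hK _ => ?_⟩
  rw [Metric.tendstoUniformlyOn_iff]
  intro ε hε
  obtain ⟨N, hN⟩ := exists_nat_gt (4/ε)
  rw [eventually_atTop]
  refine ⟨N, fun n hn z hzK => ?_⟩
  have hz := hK hzK
  have hdist : dist (f z) (cfConv c n z) ≤ 2/((n:ℝ)+2) := by
    have : Tendsto (fun m => dist (cfConv c m z) (cfConv c n z)) atTop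
        (nhds (dist (f z) (cfConv c n z))) :=
      ((hlim z hz).dist tendsto_const_nhds)
    refine le_of_tendsto this ?_
    filter_upwards [eventually_ge_atTop n] with m hm
    exact cfConv_dist_le' c z (hb z hz) n m hm
  have hn2 : (0:ℝ) < (n:ℝ) + 2 := by positivity
  have hlt : 2/((n:ℝ)+2) < ε := by
    rw [div_lt_iff₀ hn2]
    rw [div_lt_iff₀ hε] at hN
    have : (N:ℝ) ≤ (n:ℝ) := Nat.cast_le.2 hn
    nlinarith
  linarith
end

section
/- (Pringsheim's Theorem) Let φ(z) = Σ_{n≥0} a_n z^n be a power series with real coefficients a_n ≥ 0 and radius of convergence M ∈ (0, ∞). Then the point z = M is a singularity of φ: there is no open neighborhood U of M in ℂ and analytic function ψ on U such that ψ agrees with the sum of the series on U ∩ {|z| < M}. -/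
open Filter
open scoped NNReal ENNReal

private lemma antidiag_binom {R : Type*} [CommSemiring R] (a : ℕ → R) (N : ℕ) (x y : R) :
    ∑ ij ∈ Finset.HasAntidiagonal.antidiagonal N,
        (((ij.1 + ij.2).choose ij.1 : R) * a (ij.1 + ij.2) * x ^ ij.2 * y ^ ij.1)
      = a N * (x + y) ^ N := by
  rw [Finset.Nat.sum_antidiagonal_eq_sum_range_succ_mk, add_comm x y, add_pow, Finset.mul_sum]
  refine Finset.sum_congr rfl fun k hk => ?_
  have hk' : k ≤ N := Nat.lt_succ_iff.mp (Finset.mem_range.mp hk)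
  rw [Nat.add_sub_cancel' hk']
  ring

private lemma tsum_antidiag {f : ℕ × ℕ → ℂ} (hf : Summable f) :
    ∑' p, f p = ∑' N, ∑ ij ∈ Finset.HasAntidiagonal.antidiagonal N, f ij := by
  conv_rhs => congr; ext; rw [← Finset.sum_finset_coe, ← tsum_fintype (L := SummationFilter.unconditional _)]
  rw [← Finset.HasAntidiagonal.sigmaAntidiagonalEquivProd.tsum_eq f]
  exact Summable.tsum_sigma' (fun n => (hasSum_fintype _).summable)
    (Finset.HasAntidiagonal.sigmaAntidiagonalEquivProd.summable_iff.mpr hf)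

set_option maxHeartbeats 1000000 in
private lemma summable_F_iff (a : ℕ → ℝ) (ha : ∀ n, 0 ≤ a n) (x y : ℝ) (hx : 0 ≤ x)
    (hy : 0 ≤ y) :
    Summable (fun p : ℕ × ℕ => ((p.1 + p.2).choose p.1 : ℝ) * a (p.1 + p.2) * x ^ p.2 * y ^ p.1)
      ↔ Summable (fun N => a N * (x + y) ^ N) := by
  set F : ℕ × ℕ → ℝ :=
    fun p => ((p.1 + p.2).choose p.1 : ℝ) * a (p.1 + p.2) * x ^ p.2 * y ^ p.1 with hF
  have hFnn : ∀ p, 0 ≤ F p := fun p => by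
    have := ha (p.1 + p.2); positivity
  have key : ∀ N : ℕ, ∑' (c : (Finset.HasAntidiagonal.antidiagonal N : Finset (ℕ × ℕ))), F c
      = a N * (x + y) ^ N := by
    intro N
    rw [tsum_fintype, Finset.sum_coe_sort]
    exact antidiag_binom a N x y
  rw [← Finset.HasAntidiagonal.sigmaAntidiagonalEquivProd.summable_iff]
  have hiff := summable_sigma_of_nonneg
    (f := F ∘ ⇑(Finset.HasAntidiagonal.sigmaAntidiagonalEquivProd)) (fun z => hFnn _)
  rw [hiff]
  constructor
  · rintro ⟨-, h⟩
    exact h.congr fun N => key N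
  · intro h
    exact ⟨fun N => (hasSum_fintype _).summable, h.congr fun N => (key N).symm⟩

/-- **Pringsheim's Theorem.** If `φ(z) = Σ aₙ zⁿ` has nonnegative real coefficients and
radius of convergence `M ∈ (0, ∞)`, then `z = M` is a singularity of `φ`: no analytic
function on a neighborhood of `M` agrees with the sum of the series on the part of the
neighborhood inside the disk of convergence. -/
theorem pringsheim (a : ℕ → ℝ) (ha : ∀ n, 0 ≤ a n) (M : ℝ) (hM : 0 < M)
    (hconv : ∀ r : ℝ, 0 ≤ r → r < M → Summable fun n => a n * r ^ n)
    (hdiv : ∀ r : ℝ, M < r → ¬ Summable fun n => a n * r ^ n) :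
    ¬ ∃ (U : Set ℂ) (ψ : ℂ → ℂ), IsOpen U ∧ (M : ℂ) ∈ U ∧ AnalyticOnNhd ℂ ψ U ∧
      ∀ z ∈ U, ‖z‖ < M → ψ z = ∑' n, (a n : ℂ) * z ^ n := by
  rintro ⟨U, ψ, hU, hMU, hψ, heq⟩
  obtain ⟨ε0, hε0, hball0⟩ := Metric.isOpen_iff.mp hU _ hMU
  set ε : ℝ := min ε0 M with hεdef
  have hε : 0 < ε := lt_min hε0 hM
  have hεM : ε ≤ M := min_le_right _ _
  have hball : Metric.ball (M : ℂ) ε ⊆ U :=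
    (Metric.ball_subset_ball (min_le_left _ _)).trans hball0
  set ρ : ℝ := M - ε / 3 with hρdef
  have hρ0 : 0 < ρ := by simp only [hρdef]; linarith
  have hρM : ρ < M := by simp only [hρdef]; linarith
  -- the double-indexed family
  set F : ℝ → ℕ × ℕ → ℝ := fun s p =>
    ((p.1 + p.2).choose p.1 : ℝ) * a (p.1 + p.2) * ρ ^ p.2 * s ^ p.1 with hFdef
  have hFsum : ∀ s : ℝ, 0 ≤ s → ρ + s < M → Summable (F s) := by
    intro s hs h
    exact (summable_F_iff a ha ρ s hρ0.le hs).mpr (hconv _ (by positivity) h)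
  -- the coefficients of the recentered series
  set c : ℕ → ℝ := fun m => ∑' n, ((m + n).choose m : ℝ) * a (m + n) * ρ ^ n with hcdef
  have hcs : ∀ m, Summable (fun n => ((m + n).choose m : ℝ) * a (m + n) * ρ ^ n) := by
    intro m
    have h0 : (0:ℝ) < (M - ρ) / 2 := by linarith
    have hF0 := (hFsum ((M - ρ) / 2) h0.le (by linarith)).prod_factor m
    have := hF0.mul_right (((M - ρ) / 2) ^ m)⁻¹
    refine this.congr fun n => ?_
    simp only [hFdef]
    rw [mul_inv_cancel_right₀ (by positivity : (((M - ρ) / 2) ^ m) ≠ (0:ℝ))]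
  have hcnn : ∀ m, 0 ≤ c m := by
    intro m
    refine tsum_nonneg fun n => ?_
    have := ha (m + n); positivity
  -- row sums
  have hrow : ∀ s : ℝ, ∀ m : ℕ, ∑' n, F s (m, n) = c m * s ^ m := by
    intro s m
    rw [hcdef]
    simp only [hFdef]
    rw [← tsum_mul_right]
  set q : FormalMultilinearSeries ℂ ℂ ℂ :=
    FormalMultilinearSeries.ofScalars ℂ (fun m => (c m : ℂ)) with hqdef
  have hqnorm : ∀ m, ‖q m‖ = c m := by
    intro m
    rw [hqdef, FormalMultilinearSeries.ofScalars_norm, Complex.norm_real,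
      Real.norm_of_nonneg (hcnn m)]
  set φ : ℂ → ℂ := fun z => ∑' n, (a n : ℂ) * z ^ n with hφdef
  -- φ has the power series q at ρ on the ball of radius M - ρ
  have hqball : HasFPowerSeriesOnBall φ q (ρ : ℂ) (ENNReal.ofReal (M - ρ)) := by
    constructor
    · -- radius bound
      refine ENNReal.le_of_forall_nnreal_lt fun r hr => ?_
      apply FormalMultilinearSeries.le_radius_of_summable
      have hrM : ρ + (r : ℝ) < M := by
        have h1 : (r : ℝ≥0∞) < ENNReal.ofReal (M - ρ) := hr
        rw [← ENNReal.ofReal_coe_nnreal,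
          ENNReal.ofReal_lt_ofReal_iff (by linarith : (0:ℝ) < M - ρ)] at h1
        linarith
      have hF := hFsum r r.coe_nonneg hrM
      have h2 := ((summable_prod_of_nonneg (fun p => by
        have := ha (p.1 + p.2)
        have : (0:ℝ) ≤ F (r : ℝ) p := by simp only [hFdef]; positivity
        exact this)).1 hF).2
      have h3 : Summable fun m => c m * (r : ℝ) ^ m := h2.congr fun m => hrow _ m
      exact h3.congr fun m => by rw [hqnorm m]
    · exact ENNReal.ofReal_pos.2 (by linarith)
    · intro w hw
      have hw' : ‖w‖ < M - ρ := by
        rw [EMetric.mem_ball, edist_zero_right, ← ofReal_norm,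
          ENNReal.ofReal_lt_ofReal_iff (by linarith)] at hw
        exact hw
      have hw0 : (0:ℝ) ≤ ‖w‖ := norm_nonneg w
      -- complex double family
      set G : ℕ × ℕ → ℂ := fun p =>
        ((p.1 + p.2).choose p.1 : ℂ) * (a (p.1 + p.2) : ℂ) * (ρ : ℂ) ^ p.2 * w ^ p.1 with hGdef
      have hGnorm : ∀ p, ‖G p‖ = F ‖w‖ p := by
        intro p
        simp only [hGdef, hFdef, norm_mul, norm_pow, Complex.norm_real, Complex.norm_natCast]
        rw [Real.norm_of_nonneg (ha _), Real.norm_of_nonneg hρ0.le]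
      have hGs : Summable G := by
        apply Summable.of_norm
        exact ((hFsum ‖w‖ hw0 (by linarith)).congr fun p => (hGnorm p).symm)
      have hGrow : ∀ m, ∑' n, G (m, n) = (c m : ℂ) * w ^ m := by
        intro m
        have : ∀ n : ℕ, G (m, n)
            = ((((m + n).choose m : ℝ) * a (m + n) * ρ ^ n : ℝ) : ℂ) * w ^ m := by
          intro n; simp only [hGdef]; push_cast; ring
        rw [tsum_congr this, tsum_mul_right, hcdef, Complex.ofReal_tsum]
      have hsum : Summable fun m => (c m : ℂ) * w ^ m :=
        (hGs.prod).congr fun m => hGrow m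
      have htsum : ∑' m, (c m : ℂ) * w ^ m = φ ((ρ : ℂ) + w) := by
        rw [← tsum_congr hGrow, ← Summable.tsum_prod' hGs fun m => hGs.prod_factor m,
          tsum_antidiag hGs]
        simp only [hφdef]
        refine tsum_congr fun N => ?_
        exact antidiag_binom (fun n => (a n : ℂ)) N (ρ : ℂ) w
      have happ : ∀ m : ℕ, (q m fun _ => w) = (c m : ℂ) * w ^ m := by
        intro m
        rw [hqdef, FormalMultilinearSeries.ofScalars_apply_eq, smul_eq_mul]
      rw [show (fun m => q m fun _ => w) = fun m => (c m : ℂ) * w ^ m from funext happ]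
      exact hsum.hasSum_iff.mpr htsum
  -- ψ has a power series at ρ of radius ε/2
  have hρdist : dist (ρ : ℂ) (M : ℂ) = ε / 3 := by
    have h3 : (ρ : ℝ) - M = -(ε / 3) := by simp only [hρdef]; ring
    rw [Complex.dist_eq, ← Complex.ofReal_sub, Complex.norm_real, Real.norm_eq_abs, h3, abs_neg,
      abs_of_nonneg (by linarith : (0:ℝ) ≤ ε / 3)]
  have hsub : Metric.closedBall (ρ : ℂ) ((ε / 2 : ℝ)) ⊆ U := by
    intro z hz
    apply hball
    rw [Metric.mem_closedBall] at hz
    rw [Metric.mem_ball]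
    calc dist z (M : ℂ) ≤ dist z (ρ : ℂ) + dist (ρ : ℂ) (M : ℂ) := dist_triangle _ _ _
      _ ≤ ε / 2 + ε / 3 := by rw [hρdist]; linarith
      _ < ε := by linarith
  have hR0 : (0 : ℝ≥0) < (ε / 2 : ℝ).toNNReal := by
    simp [Real.toNNReal_pos]; linarith
  have hψball : HasFPowerSeriesOnBall ψ
      (cauchyPowerSeries ψ (ρ : ℂ) ((ε / 2 : ℝ).toNNReal)) (ρ : ℂ) ((ε / 2 : ℝ).toNNReal) := by
    apply DifferentiableOn.hasFPowerSeriesOnBall _ hR0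
    refine (hψ.differentiableOn).mono ?_
    rwa [Real.coe_toNNReal _ (by linarith : (0:ℝ) ≤ ε / 2)]
  -- ψ agrees with φ near ρ
  have hρU : (ρ : ℂ) ∈ U := by
    apply hball
    rw [Metric.mem_ball, hρdist]
    linarith
  have heqn : ψ =ᶠ[nhds (ρ : ℂ)] φ := by
    have hopen : IsOpen (U ∩ {z : ℂ | ‖z‖ < M}) :=
      hU.inter (isOpen_lt (by continuity) continuous_const)
    have hmem : (ρ : ℂ) ∈ U ∩ {z : ℂ | ‖z‖ < M} := by
      refine ⟨hρU, ?_⟩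
      simp only [Set.mem_setOf_eq, Complex.norm_real, Real.norm_of_nonneg hρ0.le]
      exact hρM
    filter_upwards [hopen.mem_nhds hmem] with z hz
    exact heq z hz.1 hz.2
  have hq'at : HasFPowerSeriesAt φ (cauchyPowerSeries ψ (ρ : ℂ) ((ε / 2 : ℝ).toNNReal)) (ρ : ℂ) :=
    hψball.hasFPowerSeriesAt.congr heqn
  have hqq' : q = cauchyPowerSeries ψ (ρ : ℂ) ((ε / 2 : ℝ).toNNReal) :=
    hqball.hasFPowerSeriesAt.eq_formalMultilinearSeries hq'at
  have hrad : ((ε / 2 : ℝ).toNNReal : ℝ≥0∞) ≤ q.radius := by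
    rw [hqq']; exact hψball.r_le
  -- now sum the coefficients at s = 5ε/12 > M - ρ = ε/3
  set s : ℝ := 5 * ε / 12 with hsdef
  have hs0 : 0 < s := by simp only [hsdef]; linarith
  have hslt : (s.toNNReal : ℝ≥0∞) < q.radius := by
    refine lt_of_lt_of_le ?_ hrad
    rw [ENNReal.coe_lt_coe, Real.toNNReal_lt_toNNReal_iff (by linarith : (0:ℝ) < ε / 2)]
    simp only [hsdef]; linarith
  have hnorm_sum := q.summable_norm_mul_pow hslt
  have hcs' : Summable fun m => c m * s ^ m := by
    refine hnorm_sum.congr fun m => ?_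
    rw [hqnorm m, Real.coe_toNNReal _ hs0.le]
  have hFs : Summable (F s) := by
    refine (summable_prod_of_nonneg fun p => ?_).2 ⟨fun m => ?_, ?_⟩
    · have := ha (p.1 + p.2)
      have : (0:ℝ) ≤ F s p := by simp only [hFdef]; positivity
      exact this
    · exact (hcs m).mul_right (s ^ m)
    · exact hcs'.congr fun m => (hrow s m).symm
  have hfinal : Summable fun N => a N * (ρ + s) ^ N :=
    (summable_F_iff a ha ρ s hρ0.le hs0.le).mp hFs
  exact hdiv (ρ + s) (by simp only [hρdef, hsdef]; linarith) hfinal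
end

section
/- (Corollary 3.2: meromorphic extension) Assume a_j → 0 as j → ∞. Then there exists a function F meromorphic on all of ℂ such that F(z) = g(z) for every z with |z| < M. In other words, the generating function of the weighted Catalan numbers extends to a meromorphic function on the whole complex plane. -/
open Filter Finset

/-- Final height of a `±1` path started at height `j`; `true` is a rise step,
`false` is a fall step. -/
def endH : ℕ → List Bool → ℕ
  | j, [] => j
  | j, true :: s => endH (j + 1) s
  | j, false :: s => endH (j - 1) s

/-- `isDyck j s` holds when the path `s` started at height `j` never goes below height 0
(every fall step occurs from height ≥ 1). -/
def isDyck : ℕ → List Bool → Bool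
  | _, [] => true
  | j, true :: s => isDyck (j + 1) s
  | j, false :: s => decide (1 ≤ j) && isDyck (j - 1) s

/-- `isJump j s` holds when the path `s` started at height `j` stays at height ≥ 1
(every fall step occurs from height ≥ 2). -/
def isJump : ℕ → List Bool → Bool
  | _, [] => true
  | j, true :: s => isJump (j + 1) s
  | j, false :: s => decide (2 ≤ j) && isJump (j - 1) s

/-- Weight of a lattice path: a rise step from height `j` has weight `u j`, a fall step
from height `j+1` to `j` has weight `v j`. -/
noncomputable def dwt (u v : ℕ → ℝ) : ℕ → List Bool → ℝ
  | _, [] => 1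
  | j, true :: s => u j * dwt u v (j + 1) s
  | j, false :: s => v (j - 1) * dwt u v (j - 1) s

/-- Weight `p(γ)` of a jump-chain path: an up-step from height `j` has weight
`λ_j/(1+λ_j+D_j)`, a down-step from height `j` has weight `1/(1+λ_j+D_j)`. -/
noncomputable def jwt (lam Dd : ℕ → ℝ) : ℕ → List Bool → ℝ
  | _, [] => 1
  | j, true :: s => lam j / (1 + lam j + Dd j) * jwt lam Dd (j + 1) s
  | j, false :: s => 1 / (1 + lam j + Dd j) * jwt lam Dd (j - 1) s

/-- `D_j = Σ_{i=1}^j ρ_i`. -/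
noncomputable def Dd (rho : ℕ → ℝ) (j : ℕ) : ℝ := ∑ i ∈ Finset.Icc 1 j, rho i

/-- `u(j) = λ_{j+1}/(1+λ_{j+1}+D_{j+1})`. -/
noncomputable def uWt (lam rho : ℕ → ℝ) (j : ℕ) : ℝ :=
  lam (j + 1) / (1 + lam (j + 1) + Dd rho (j + 1))

/-- `v(j) = 1/(1+λ_{j+2}+D_{j+2})`. -/
noncomputable def vWt (lam rho : ℕ → ℝ) (j : ℕ) : ℝ :=
  1 / (1 + lam (j + 2) + Dd rho (j + 2))

/-- The weighted Catalan number `C_k`: the sum of `ω(γ)` over all Dyck paths `γ` of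
length `2k` (paths of `k` rise and `k` fall steps from height 0 staying at height ≥ 0). -/
noncomputable def Ck (lam rho : ℕ → ℝ) (k : ℕ) : ℝ :=
  ∑ γ : Fin (2 * k) → Bool,
    if isDyck 0 (List.ofFn γ) = true ∧ endH 0 (List.ofFn γ) = 0 then
      dwt (uWt lam rho) (vWt lam rho) 0 (List.ofFn γ)
    else 0

/-- The power series `Σ_k C_k z^k` as a formal multilinear series over `ℂ`. -/
noncomputable def gSeries (lam rho : ℕ → ℝ) : FormalMultilinearSeries ℂ ℂ ℂ :=
  fun n => FormalMultilinearSeries.ofScalars ℂ (fun k => (Ck lam rho k : ℂ)) n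

/-- `M`, the radius of convergence of `g(z) = Σ_k C_k z^k`. -/
noncomputable def radiusM (lam rho : ℕ → ℝ) : ENNReal := (gSeries lam rho).radius

/-- `σ(ℓ) = ∏_{n=1}^ℓ 1/(1+D_n)`. -/
noncomputable def sigmaWt (rho : ℕ → ℝ) (l : ℕ) : ℝ :=
  ∏ n ∈ Finset.Icc 1 l, 1 / (1 + Dd rho n)

/-- `q_ℓ^{(k)} = Σ_{γ ∈ Γ_ℓ^{(k)}} p(γ) σ(ℓ)`, where `Γ_ℓ^{(k)}` is the set of jump-chain
paths of length `2k − ℓ − 1` that start at height 1, stay at height ≥ 1, and whose final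
step is an up-step ending at height `ℓ`. -/
noncomputable def qsum (lam rho : ℕ → ℝ) (k l : ℕ) : ℝ :=
  (∑ γ : Fin (2 * k - l - 1) → Bool,
    if isJump 1 (List.ofFn γ) = true ∧ endH 1 (List.ofFn γ) = l ∧
        (List.ofFn γ).getLast? = some true then
      jwt lam (Dd rho) 1 (List.ofFn γ)
    else 0) * sigmaWt rho l

/-- `Γ_ℓ^{(k)}`, as a set of step lists. -/
def Gamma (k l : ℕ) : Set (List Bool) :=
  {s | s.length = 2 * k - l - 1 ∧ isJump 1 s = true ∧ endH 1 s = l ∧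
    s.getLast? = some true}

/-- The path modification `γ ↦ γ̃`: insert `ℓ − 2` consecutive down-steps immediately
before the final (upward) step. -/
def tilde (l : ℕ) (s : List Bool) : List Bool :=
  s.dropLast ++ List.replicate (l - 2) false ++ [true]


namespace CW

@[simp] lemma endH_nil (j : ℕ) : endH j [] = j := rfl
@[simp] lemma endH_true (j : ℕ) (s : List Bool) : endH j (true :: s) = endH (j+1) s := rfl
@[simp] lemma endH_false (j : ℕ) (s : List Bool) : endH j (false :: s) = endH (j-1) s := rfl
@[simp] lemma isDyck_nil (j : ℕ) : isDyck j [] = true := rfl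
@[simp] lemma isDyck_true (j : ℕ) (s : List Bool) : isDyck j (true :: s) = isDyck (j+1) s := rfl
@[simp] lemma isDyck_false (j : ℕ) (s : List Bool) :
    isDyck j (false :: s) = (decide (1 ≤ j) && isDyck (j-1) s) := rfl
@[simp] lemma isJump_nil (j : ℕ) : isJump j [] = true := rfl
@[simp] lemma isJump_true (j : ℕ) (s : List Bool) : isJump j (true :: s) = isJump (j+1) s := rfl
@[simp] lemma isJump_false (j : ℕ) (s : List Bool) :
    isJump j (false :: s) = (decide (2 ≤ j) && isJump (j-1) s) := rfl
@[simp] lemma dwt_nil (u v : ℕ → ℝ) (j : ℕ) : dwt u v j [] = 1 := rfl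
@[simp] lemma dwt_true (u v : ℕ → ℝ) (j : ℕ) (s : List Bool) :
    dwt u v j (true :: s) = u j * dwt u v (j+1) s := rfl
@[simp] lemma dwt_false (u v : ℕ → ℝ) (j : ℕ) (s : List Bool) :
    dwt u v j (false :: s) = v (j-1) * dwt u v (j-1) s := rfl

lemma endH_append (s t : List Bool) : ∀ j, endH j (s ++ t) = endH (endH j s) t := by
  induction s with
  | nil => intro j; rfl
  | cons b s ih => intro j; cases b <;> simp [ih]

lemma isDyck_append (s t : List Bool) : ∀ j,
    isDyck j (s ++ t) = (isDyck j s && isDyck (endH j s) t) := by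
  induction s with
  | nil => intro j; simp
  | cons b s ih => intro j; cases b <;> simp [ih, Bool.and_assoc]

lemma isJump_append (s t : List Bool) : ∀ j,
    isJump j (s ++ t) = (isJump j s && isJump (endH j s) t) := by
  induction s with
  | nil => intro j; simp
  | cons b s ih => intro j; cases b <;> simp [ih, Bool.and_assoc]

lemma dwt_append (u v : ℕ → ℝ) (s t : List Bool) : ∀ j,
    dwt u v j (s ++ t) = dwt u v j s * dwt u v (endH j s) t := by
  induction s with
  | nil => intro j; simp
  | cons b s ih => intro j; cases b <;> simp [ih, mul_assoc]

lemma isJump_shift (s : List Bool) : ∀ j, isJump (j+1) s = isDyck j s := by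
  induction s with
  | nil => intro j; rfl
  | cons b s ih =>
    intro j; cases b
    · cases j with
      | zero => simp
      | succ m => simp [ih m]
    · simp [ih]

lemma isJump_isDyck {s : List Bool} : ∀ {j}, isJump j s = true → isDyck j s = true := by
  induction s with
  | nil => intro j _; rfl
  | cons b s ih =>
    intro j h; cases b
    · simp only [isJump_false, Bool.and_eq_true, decide_eq_true_eq] at h
      simp only [isDyck_false, Bool.and_eq_true, decide_eq_true_eq]
      exact ⟨by omega, ih h.2⟩
    · exact ih h

lemma endH_shift {s : List Bool} : ∀ {j}, isDyck j s = true → endH (j+1) s = endH j s + 1 := by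
  induction s with
  | nil => intro j _; rfl
  | cons b s ih =>
    intro j h; cases b
    · simp only [isDyck_false, Bool.and_eq_true, decide_eq_true_eq] at h
      obtain ⟨h1, h2⟩ := h
      simp only [endH_false]
      have : j + 1 - 1 = (j - 1) + 1 := by omega
      rw [this, ih h2]
    · simpa using ih h

lemma dwt_shift (u v : ℕ → ℝ) {s : List Bool} :
    ∀ {j}, isJump (j+1) s = true →
      dwt u v (j+1) s = dwt (fun i => u (i+1)) (fun i => v (i+1)) j s := by
  induction s with
  | nil => intro j _; rfl
  | cons b s ih =>
    intro j h; cases b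
    · simp only [isJump_false, Bool.and_eq_true, decide_eq_true_eq] at h
      obtain ⟨h1, h2⟩ := h
      obtain ⟨m, rfl⟩ : ∃ m, j = m + 1 := ⟨j - 1, by omega⟩
      simp only [dwt_false]
      have : m + 1 + 1 - 1 = m + 1 := rfl
      rw [this, ih (by simpa using h2)]
      simp
    · simp only [dwt_true, isJump_true] at h ⊢
      rw [ih h]

lemma endH_parity {s : List Bool} : ∀ {j}, isDyck j s = true →
    (endH j s + s.length) % 2 = j % 2 := by
  induction s with
  | nil => intro j _; simp
  | cons b s ih =>
    intro j h; cases b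
    · simp only [isDyck_false, Bool.and_eq_true, decide_eq_true_eq] at h
      obtain ⟨h1, h2⟩ := h
      have := ih h2
      simp only [endH_false, List.length_cons]
      omega
    · have := ih (j := j+1) h
      simp only [endH_true, List.length_cons]
      omega

/-- break function: splits a path starting at counter `c` (height `c+1`) at the first
fall step below height 1. -/
def brk : ℕ → List Bool → List Bool × List Bool
  | _, [] => ([], [])
  | c, true :: s => ((brk (c+1) s).1.cons true, (brk (c+1) s).2)
  | 0, false :: s => ([], s)
  | (c+1), false :: s => ((brk c s).1.cons false, (brk c s).2)

lemma brk_spec {t : List Bool} : ∀ {c}, isDyck (c+1) t = true → endH (c+1) t = 0 →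
    t = (brk c t).1 ++ false :: (brk c t).2 ∧
    isJump (c+1) (brk c t).1 = true ∧ endH (c+1) (brk c t).1 = 1 ∧
    isDyck 0 (brk c t).2 = true ∧ endH 0 (brk c t).2 = 0 := by
  induction t with
  | nil => intro c _ h2; simp at h2
  | cons b t ih =>
    intro c hd he; cases b
    · simp only [isDyck_false, Bool.and_eq_true, decide_eq_true_eq] at hd
      obtain ⟨-, hd⟩ := hd
      simp only [endH_false] at he
      cases c with
      | zero => exact ⟨rfl, rfl, rfl, by simpa [brk] using hd, by simpa [brk] using he⟩
      | succ m =>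
        have hd' : isDyck (m+1) t = true := by simpa using hd
        have he' : endH (m+1) t = 0 := by simpa using he
        obtain ⟨e1, e2, e3, e4, e5⟩ := ih hd' he'
        refine ⟨by simpa [brk] using congrArg (List.cons false) e1, ?_, ?_, by simpa [brk] using e4, by simpa [brk] using e5⟩
        · simp [brk, e2]
        · simpa [brk] using e3
    · simp only [isDyck_true] at hd
      simp only [endH_true] at he
      obtain ⟨e1, e2, e3, e4, e5⟩ := ih hd he
      exact ⟨by simpa [brk] using congrArg (List.cons true) e1, by simpa [brk] using e2,
        by simpa [brk] using e3, by simpa [brk] using e4, by simpa [brk] using e5⟩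

lemma brk_eq {a : List Bool} : ∀ {c} (b : List Bool), isJump (c+1) a = true →
    endH (c+1) a = 1 → brk c (a ++ false :: b) = (a, b) := by
  induction a with
  | nil => intro c b _ he; simp at he; subst he; rfl
  | cons x a ih =>
    intro c b hj he; cases x
    · simp only [isJump_false, Bool.and_eq_true, decide_eq_true_eq] at hj
      obtain ⟨h1, h2⟩ := hj
      obtain ⟨m, rfl⟩ : ∃ m, c = m + 1 := ⟨c - 1, by omega⟩
      have h2' : isJump (m+1) a = true := by simpa using h2
      have he' : endH (m+1) a = 1 := by simpa using he
      simp [brk, ih b h2' he']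
    · simp only [isJump_true] at hj
      simp only [endH_true] at he
      simp [brk, ih b hj he]

end CW
namespace CW

noncomputable def Cgen (u v : ℕ → ℝ) (k : ℕ) : ℝ :=
  ∑ γ : Fin (2 * k) → Bool,
    if isDyck 0 (List.ofFn γ) = true ∧ endH 0 (List.ofFn γ) = 0 then
      dwt u v 0 (List.ofFn γ)
    else 0

def allB (n : ℕ) : Finset (List Bool) := (Finset.univ : Finset (Fin n → Bool)).image List.ofFn

lemma mem_allB {n : ℕ} {s : List Bool} : s ∈ allB n ↔ s.length = n := by
  constructor
  · rintro h
    simp only [allB, Finset.mem_image] at h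
    obtain ⟨γ, -, rfl⟩ := h
    simp
  · rintro rfl
    simp only [allB, Finset.mem_image]
    exact ⟨s.get, Finset.mem_univ _, List.ofFn_get s⟩

lemma sum_ofFn (n : ℕ) (f : List Bool → ℝ) :
    ∑ γ : Fin n → Bool, f (List.ofFn γ) = ∑ s ∈ allB n, f s :=
  (Finset.sum_image (fun _ _ _ _ h => List.ofFn_injective h)).symm

open Classical in
lemma Cgen_eq_list (u v : ℕ → ℝ) (k : ℕ) :
    Cgen u v k = ∑ s ∈ (allB (2*k)).filter
      (fun s => isDyck 0 s = true ∧ endH 0 s = 0), dwt u v 0 s := by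
  rw [Cgen, sum_ofFn (2*k) (fun s => if isDyck 0 s = true ∧ endH 0 s = 0 then dwt u v 0 s else 0),
    Finset.sum_filter]

lemma Cgen_zero (u v : ℕ → ℝ) : Cgen u v 0 = 1 := by
  simp [Cgen]

open Classical in
lemma Cgen_succ (u v : ℕ → ℝ) (k : ℕ) :
    Cgen u v (k+1) = ∑ i ∈ Finset.range (k+1),
      u 0 * v 0 * Cgen (fun i => u (i+1)) (fun i => v (i+1)) i * Cgen u v (k - i) := by
  have main : Cgen u v (k+1) = ∑ x ∈ (Finset.range (k+1)).sigma (fun i =>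
        ((allB (2*i)).filter (fun a => isJump 1 a = true ∧ endH 1 a = 1)) ×ˢ
        ((allB (2*(k-i))).filter (fun b => isDyck 0 b = true ∧ endH 0 b = 0))),
      u 0 * v 0 * dwt u v 1 x.2.1 * dwt u v 0 x.2.2 := by
    rw [Cgen_eq_list]
    refine Finset.sum_nbij' (fun s => ⟨(brk 0 s.tail).1.length / 2,
        ((brk 0 s.tail).1, (brk 0 s.tail).2)⟩)
      (fun x => true :: (x.2.1 ++ false :: x.2.2)) ?_ ?_ ?_ ?_ ?_
    · intro s hs
      simp only [Finset.mem_filter, mem_allB] at hs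
      obtain ⟨hlen, hd, he⟩ := hs
      obtain ⟨t, rfl⟩ : ∃ t, s = true :: t := by
        match s, hd with
        | true :: t, _ => exact ⟨t, rfl⟩
      simp only [List.tail_cons]
      obtain ⟨e1, e2, e3, e4, e5⟩ := brk_spec (c := 0) (by simpa using hd) (by simpa using he)
      set a := (brk 0 t).1 with ha
      set b := (brk 0 t).2 with hb
      have hab : a.length + b.length + 1 = t.length := by
        rw [e1]; simp only [List.length_append, List.length_cons]; omega
      have htl : t.length = 2*k+1 := by
        simp only [List.length_cons] at hlen; omega
      have haeven : a.length % 2 = 0 := by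
        have hda : isDyck 0 a = true := by rw [← isJump_shift]; exact e2
        have := endH_parity hda
        have h0 : endH 0 a = 0 := by
          have := endH_shift hda
          omega
        omega
      simp only [Finset.mem_sigma, Finset.mem_range, Finset.mem_product, Finset.mem_filter,
        mem_allB]
      refine ⟨by omega, ⟨by omega, e2, e3⟩, ⟨by omega, e4, e5⟩⟩
    · intro x hx
      simp only [Finset.mem_sigma, Finset.mem_range, Finset.mem_product, Finset.mem_filter,
        mem_allB] at hx
      obtain ⟨hi, ⟨hal, haj, hae⟩, ⟨hbl, hbd, hbe⟩⟩ := hx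
      simp only [Finset.mem_filter, mem_allB]
      have hja : isDyck 1 x.2.1 = true := isJump_isDyck haj
      refine ⟨by simp [hal, hbl]; omega, ?_, ?_⟩
      · simp only [isDyck_true, isDyck_append, hja, Bool.true_and, hae]
        simp [hbd]
      · simp only [endH_true, endH_append, hae]
        simpa using hbe
    · intro s hs
      simp only [Finset.mem_filter, mem_allB] at hs
      obtain ⟨hlen, hd, he⟩ := hs
      obtain ⟨t, rfl⟩ : ∃ t, s = true :: t := by
        match s, hd with
        | true :: t, _ => exact ⟨t, rfl⟩
      simp only [List.tail_cons]
      obtain ⟨e1, -, -, -, -⟩ := brk_spec (c := 0) (by simpa using hd) (by simpa using he)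
      exact congrArg (List.cons true) e1.symm
    · intro x hx
      simp only [Finset.mem_sigma, Finset.mem_range, Finset.mem_product, Finset.mem_filter,
        mem_allB] at hx
      obtain ⟨hi, ⟨hal, haj, hae⟩, ⟨hbl, hbd, hbe⟩⟩ := hx
      have := brk_eq (c := 0) x.2.2 haj hae
      obtain ⟨i, a, b⟩ := x
      simp only [List.tail_cons] at this ⊢
      have hl2 : a.length / 2 = i := by simp only at hal; omega
      rw [this]
      simp [hl2]
    · intro s hs
      simp only [Finset.mem_filter, mem_allB] at hs
      obtain ⟨hlen, hd, he⟩ := hs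
      obtain ⟨t, rfl⟩ : ∃ t, s = true :: t := by
        match s, hd with
        | true :: t, _ => exact ⟨t, rfl⟩
      simp only [List.tail_cons]
      obtain ⟨e1, e2, e3, e4, e5⟩ := brk_spec (c := 0) (by simpa using hd) (by simpa using he)
      conv_lhs => rw [show (true :: t) = true :: ((brk 0 t).1 ++ false :: (brk 0 t).2) from
        congrArg (List.cons true) e1]
      simp only [dwt_true, dwt_append, e3, dwt_false]
      ring
  rw [main, Finset.sum_sigma]
  refine Finset.sum_congr rfl fun i hi => ?_
  rw [Finset.sum_product]
  have hJ : ∑ a ∈ (allB (2*i)).filter (fun a => isJump 1 a = true ∧ endH 1 a = 1),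
      dwt u v 1 a = Cgen (fun i => u (i+1)) (fun i => v (i+1)) i := by
    rw [Cgen_eq_list]
    refine Finset.sum_congr ?_ ?_
    · apply Finset.filter_congr
      intro s _
      constructor
      · rintro ⟨hj, he⟩
        have hd : isDyck 0 s = true := by rw [← isJump_shift]; exact hj
        refine ⟨hd, ?_⟩
        have := endH_shift hd
        simp only [Nat.zero_add] at this
        omega
      · rintro ⟨hd, he⟩
        refine ⟨by rw [isJump_shift]; exact hd, ?_⟩
        have := endH_shift hd
        simp only [Nat.zero_add] at this
        omega
    · intro s hs
      simp only [Finset.mem_filter, mem_allB] at hs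
      exact dwt_shift u v (by rw [isJump_shift]; exact hs.2.1)
  have hB : ∑ b ∈ (allB (2*(k-i))).filter (fun b => isDyck 0 b = true ∧ endH 0 b = 0),
      dwt u v 0 b = Cgen u v (k-i) := (Cgen_eq_list u v (k-i)).symm
  rw [← hJ, ← hB, eq_comm, Finset.mul_sum, Finset.sum_comm]
  refine Finset.sum_congr rfl fun b _ => ?_
  rw [Finset.mul_sum, Finset.sum_mul]

end CW
namespace CW

lemma catalan_le_four_pow (n : ℕ) : catalan n ≤ 4 ^ n := by
  rw [catalan_eq_centralBinom_div]
  refine (Nat.div_le_self _ _).trans ?_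
  have h1 : (2*n).choose n ≤ ∑ m ∈ Finset.range (2*n + 1), (2*n).choose m :=
    Finset.single_le_sum (fun i _ => Nat.zero_le _) (Finset.mem_range.mpr (by omega))
  rw [Nat.sum_range_choose] at h1
  calc Nat.centralBinom n ≤ 2 ^ (2*n) := h1
    _ = 4 ^ n := by rw [pow_mul]; norm_num

lemma dwt_nonneg {u v : ℕ → ℝ} (hu : ∀ j, 0 ≤ u j) (hv : ∀ j, 0 ≤ v j) (s : List Bool) :
    ∀ j, 0 ≤ dwt u v j s := by
  induction s with
  | nil => intro j; simp
  | cons b s ih => intro j; cases b <;> simp [mul_nonneg (hu _) (ih _), mul_nonneg (hv _) (ih _)]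

lemma Cgen_nonneg {u v : ℕ → ℝ} (hu : ∀ j, 0 ≤ u j) (hv : ∀ j, 0 ≤ v j) (k : ℕ) :
    0 ≤ Cgen u v k := by
  refine Finset.sum_nonneg fun γ _ => ?_
  split
  · exact dwt_nonneg hu hv _ _
  · exact le_refl 0

lemma Cgen_le {ε : ℝ} (hε : 0 ≤ ε) : ∀ (k : ℕ) (u v : ℕ → ℝ), (∀ j, 0 ≤ u j) →
    (∀ j, 0 ≤ v j) → (∀ j, u j * v j ≤ ε) → Cgen u v k ≤ (catalan k : ℝ) * ε ^ k := by
  intro k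
  induction k using Nat.strong_induction_on with
  | _ k ih =>
    intro u v hu hv ha
    match k with
    | 0 => simp [Cgen_zero]
    | (k+1) =>
      rw [Cgen_succ]
      have hcat : ((catalan (k+1) : ℕ) : ℝ) = ∑ i ∈ Finset.range (k+1),
          (catalan i : ℝ) * (catalan (k-i) : ℝ) := by
        rw [catalan_succ]
        push_cast
        rw [← Finset.sum_range fun i => (catalan i : ℝ) * (catalan (k-i) : ℝ)]
      rw [hcat, Finset.sum_mul]
      refine Finset.sum_le_sum fun i hi => ?_
      have hi' : i ≤ k := by simp at hi; omega
      have hu' : ∀ j, 0 ≤ u (j+1) := fun j => hu _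
      have hv' : ∀ j, 0 ≤ v (j+1) := fun j => hv _
      have hb1 : Cgen (fun i => u (i+1)) (fun i => v (i+1)) i ≤ (catalan i : ℝ) * ε ^ i :=
        ih i (by omega) _ _ hu' hv' (fun j => ha _)
      have hb2 : Cgen u v (k-i) ≤ (catalan (k-i) : ℝ) * ε ^ (k-i) :=
        ih (k-i) (by omega) _ _ hu hv ha
      have hnn1 : (0:ℝ) ≤ Cgen (fun i => u (i+1)) (fun i => v (i+1)) i := Cgen_nonneg hu' hv' i
      have hnn2 : (0:ℝ) ≤ Cgen u v (k-i) := Cgen_nonneg hu hv (k-i)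
      have heps : ε ^ i * ε ^ (k - i) = ε ^ k := by
        rw [← pow_add]; congr 1; omega
      calc u 0 * v 0 * Cgen (fun i => u (i+1)) (fun i => v (i+1)) i * Cgen u v (k-i)
          ≤ ε * ((catalan i : ℝ) * ε ^ i) * ((catalan (k-i) : ℝ) * ε ^ (k-i)) := by
            apply mul_le_mul
            · apply mul_le_mul (ha 0) hb1 hnn1 (le_trans (mul_nonneg (hu 0) (hv 0)) (ha 0))
            · exact hb2
            · exact hnn2
            · positivity
        _ = (catalan i : ℝ) * (catalan (k-i) : ℝ) * ε ^ (k+1) := by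
            rw [pow_succ, ← heps]; ring

lemma Cgen_le_pow {ε : ℝ} (hε : 0 ≤ ε) (k : ℕ) (u v : ℕ → ℝ) (hu : ∀ j, 0 ≤ u j)
    (hv : ∀ j, 0 ≤ v j) (ha : ∀ j, u j * v j ≤ ε) : Cgen u v k ≤ (4*ε) ^ k := by
  refine (Cgen_le hε k u v hu hv ha).trans ?_
  rw [mul_pow]
  apply mul_le_mul_of_nonneg_right _ (pow_nonneg hε k)
  calc ((catalan k : ℕ) : ℝ) ≤ ((4^k : ℕ) : ℝ) := by exact_mod_cast catalan_le_four_pow k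
    _ = 4 ^ k := by push_cast; ring

end CW
namespace CW

variable {lam rho : ℕ → ℝ}

/-- `a_j = u(j) v(j)`. -/
noncomputable def aa (lam rho : ℕ → ℝ) (j : ℕ) : ℝ := uWt lam rho j * vWt lam rho j

/-- Weighted Catalan numbers for the level-`j` shifted weight family. -/
noncomputable def ccJ (lam rho : ℕ → ℝ) (j : ℕ) : ℕ → ℝ :=
  Cgen (fun i => uWt lam rho (i + j)) (fun i => vWt lam rho (i + j))

section nonneg
variable (hlam : ∀ i, 1 ≤ i → 0 ≤ lam i) (hrho : ∀ i, 1 ≤ i → 0 ≤ rho i)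
include hlam hrho

lemma Dd_nonneg' (j : ℕ) : 0 ≤ Dd rho j :=
  Finset.sum_nonneg fun i hi => hrho i (Finset.mem_Icc.mp hi).1

lemma uWt_nonneg (j : ℕ) : 0 ≤ uWt lam rho j := by
  have h1 := hlam (j+1) (by omega)
  have h2 := Dd_nonneg' hlam hrho (j+1)
  exact div_nonneg h1 (by linarith)

lemma uWt_le_one (j : ℕ) : uWt lam rho j ≤ 1 := by
  have h1 := hlam (j+1) (by omega)
  have h2 := Dd_nonneg' hlam hrho (j+1)
  rw [uWt, div_le_one (by linarith)]
  linarith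

lemma vWt_nonneg (j : ℕ) : 0 ≤ vWt lam rho j := by
  have h1 := hlam (j+2) (by omega)
  have h2 := Dd_nonneg' hlam hrho (j+2)
  exact div_nonneg zero_le_one (by linarith)

lemma vWt_le_one (j : ℕ) : vWt lam rho j ≤ 1 := by
  have h1 := hlam (j+2) (by omega)
  have h2 := Dd_nonneg' hlam hrho (j+2)
  rw [vWt, div_le_one (by linarith)]
  linarith

lemma aa_nonneg (j : ℕ) : 0 ≤ aa lam rho j :=
  mul_nonneg (uWt_nonneg hlam hrho j) (vWt_nonneg hlam hrho j)

lemma aa_le_one (j : ℕ) : aa lam rho j ≤ 1 := by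
  have := mul_le_mul (uWt_le_one hlam hrho j) (vWt_le_one hlam hrho j)
    (vWt_nonneg hlam hrho j) zero_le_one
  simpa [aa] using this

end nonneg

lemma ccJ_zero (j : ℕ) : ccJ lam rho j 0 = 1 := Cgen_zero _ _

lemma ccJ_succ (j k : ℕ) : ccJ lam rho j (k+1) = ∑ i ∈ Finset.range (k+1),
    aa lam rho j * ccJ lam rho (j+1) i * ccJ lam rho j (k - i) := by
  have h1 : (fun i => uWt lam rho (i + 1 + j)) = (fun i => uWt lam rho (i + (j+1))) := by
    funext i; congr 1; omega
  have h2 : (fun i => vWt lam rho (i + 1 + j)) = (fun i => vWt lam rho (i + (j+1))) := by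
    funext i; congr 1; omega
  unfold ccJ
  rw [Cgen_succ]
  simp only [Nat.zero_add, h1, h2]
  rfl

lemma ccJ_nonneg (hlam : ∀ i, 1 ≤ i → 0 ≤ lam i) (hrho : ∀ i, 1 ≤ i → 0 ≤ rho i)
    (j k : ℕ) : 0 ≤ ccJ lam rho j k :=
  Cgen_nonneg (fun i => uWt_nonneg hlam hrho _) (fun i => vWt_nonneg hlam hrho _) k

lemma ccJ_abs_le (hlam : ∀ i, 1 ≤ i → 0 ≤ lam i) (hrho : ∀ i, 1 ≤ i → 0 ≤ rho i)
    {j : ℕ} {ε : ℝ} (hε : 0 ≤ ε) (h : ∀ i, j ≤ i → aa lam rho i ≤ ε) (k : ℕ) :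
    |ccJ lam rho j k| ≤ (4*ε) ^ k := by
  rw [abs_of_nonneg (ccJ_nonneg hlam hrho j k)]
  exact Cgen_le_pow hε k _ _ (fun i => uWt_nonneg hlam hrho _)
    (fun i => vWt_nonneg hlam hrho _) (fun i => h (i + j) (by omega))

lemma ccJ_abs_le_four (hlam : ∀ i, 1 ≤ i → 0 ≤ lam i) (hrho : ∀ i, 1 ≤ i → 0 ≤ rho i)
    (j k : ℕ) : |ccJ lam rho j k| ≤ 4 ^ k := by
  have := ccJ_abs_le hlam hrho (j := j) zero_le_one (fun i _ => aa_le_one hlam hrho i) k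
  simpa using this

/-- The `j`-th tail generating function. -/
noncomputable def ff (lam rho : ℕ → ℝ) (j : ℕ) (z : ℂ) : ℂ :=
  ∑' k, (ccJ lam rho j k : ℂ) * z ^ k

lemma ff_summable_norm (hlam : ∀ i, 1 ≤ i → 0 ≤ lam i) (hrho : ∀ i, 1 ≤ i → 0 ≤ rho i)
    {j : ℕ} {ε : ℝ} (hε : 0 ≤ ε) (h : ∀ i, j ≤ i → aa lam rho i ≤ ε) {z : ℂ}
    (hz : 4 * ε * ‖z‖ < 1) :
    Summable fun k => ‖(ccJ lam rho j k : ℂ) * z ^ k‖ := by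
  refine Summable.of_nonneg_of_le (fun _ => norm_nonneg _) (fun k => ?_)
    (summable_geometric_of_lt_one (by positivity) hz)
  rw [norm_mul, norm_pow, Complex.norm_real]
  calc |ccJ lam rho j k| * ‖z‖ ^ k ≤ (4*ε)^k * ‖z‖^k := by
        apply mul_le_mul_of_nonneg_right (ccJ_abs_le hlam hrho hε h k) (by positivity)
    _ = (4*ε*‖z‖)^k := by rw [← mul_pow]

lemma ffeq (j : ℕ) {z : ℂ}
    (h1 : Summable fun k => ‖(ccJ lam rho (j+1) k : ℂ) * z ^ k‖)
    (h2 : Summable fun k => ‖(ccJ lam rho j k : ℂ) * z ^ k‖) :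
    ff lam rho j z = 1 + (aa lam rho j : ℂ) * z * (ff lam rho (j+1) z * ff lam rho j z) := by
  have hsB : Summable fun k => (ccJ lam rho j k : ℂ) * z ^ k := h2.of_norm
  have e0 : ff lam rho j z = 1 + ∑' k, (ccJ lam rho j (k+1) : ℂ) * z ^ (k+1) := by
    rw [ff, Summable.tsum_eq_zero_add hsB]
    simp [ccJ_zero]
  have hterm : ∀ k : ℕ, ((ccJ lam rho j (k+1) : ℝ) : ℂ) * z ^ (k+1) =
      (aa lam rho j : ℂ) * z * ∑ i ∈ Finset.range (k+1),
        ((ccJ lam rho (j+1) i : ℂ) * z ^ i) * ((ccJ lam rho j (k-i) : ℂ) * z ^ (k-i)) := by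
    intro k
    rw [ccJ_succ]
    push_cast
    rw [Finset.sum_mul, Finset.mul_sum]
    refine Finset.sum_congr rfl fun i hi => ?_
    have hik : i ≤ k := by simp at hi; omega
    have hzz : z ^ i * z ^ (k-i) = z ^ k := by rw [← pow_add]; congr 1; omega
    rw [show z ^ (k+1) = z * z ^ k from by rw [pow_succ]; ring, ← hzz]
    ring
  have eprod := tsum_mul_tsum_eq_tsum_sum_antidiagonal_of_summable_norm h1 h2
  have e2 : ff lam rho (j+1) z * ff lam rho j z = ∑' k, ∑ i ∈ Finset.range (k+1),
      ((ccJ lam rho (j+1) i : ℂ) * z ^ i) * ((ccJ lam rho j (k-i) : ℂ) * z ^ (k-i)) := by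
    rw [ff, ff, eprod]
    exact tsum_congr fun n => Finset.Nat.sum_antidiagonal_eq_sum_range_succ_mk _ n
  conv_lhs => rw [e0, tsum_congr hterm, tsum_mul_left, ← e2]

/-- Numerator/denominator recursion for the finite continued fraction. -/
noncomputable def PQ (a : ℕ → ℝ) (f : ℂ → ℂ) (J : ℕ) : ℕ → (ℂ → ℂ) × (ℂ → ℂ)
  | 0 => (f, fun _ => 1)
  | m+1 => ((PQ a f J m).2,
      fun z => (PQ a f J m).2 z - (a (J - (m+1)) : ℂ) * z * (PQ a f J m).1 z)

lemma PQ_analytic {a : ℕ → ℝ} {f : ℂ → ℂ} {J : ℕ} {S : Set ℂ}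
    (hf : AnalyticOnNhd ℂ f S) (m : ℕ) :
    AnalyticOnNhd ℂ (PQ a f J m).1 S ∧ AnalyticOnNhd ℂ (PQ a f J m).2 S := by
  induction m with
  | zero => exact ⟨hf, analyticOnNhd_const⟩
  | succ m ih =>
    refine ⟨ih.2, ih.2.sub ((analyticOnNhd_const.mul analyticOnNhd_id).mul ih.1)⟩

lemma PQ_zero_val {a : ℕ → ℝ} {f : ℂ → ℂ} {J : ℕ} (m : ℕ) : (PQ a f J m).2 0 = 1 := by
  induction m with
  | zero => rfl
  | succ m ih => simp [PQ, ih]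

lemma PQ_spec (hlam : ∀ i, 1 ≤ i → 0 ≤ lam i) (hrho : ∀ i, 1 ≤ i → 0 ≤ rho i)
    (J : ℕ) {z : ℂ} (hz : ‖z‖ < 1/5) : ∀ m, m ≤ J →
    (PQ (aa lam rho) (ff lam rho J) J m).1 z
      = (PQ (aa lam rho) (ff lam rho J) J m).2 z * ff lam rho (J - m) z ∧
    (PQ (aa lam rho) (ff lam rho J) J m).2 z ≠ 0 := by
  have hsum : ∀ j : ℕ, Summable fun k => ‖(ccJ lam rho j k : ℂ) * z ^ k‖ := by
    intro j
    refine ff_summable_norm hlam hrho zero_le_one (fun i _ => aa_le_one hlam hrho i) ?_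
    linarith
  intro m
  induction m with
  | zero => exact fun _ => ⟨(one_mul _).symm, one_ne_zero⟩
  | succ m ih =>
    intro hm
    obtain ⟨e1, e2⟩ := ih (by omega)
    have hi1 : J - (m+1) + 1 = J - m := by omega
    have heq := ffeq (lam := lam) (rho := rho) (J - (m+1)) (by rw [hi1]; exact hsum _) (hsum _)
    rw [hi1] at heq
    have key : (1 - (aa lam rho (J-(m+1)) : ℂ) * z * ff lam rho (J - m) z)
        * ff lam rho (J-(m+1)) z = 1 := by
      rw [sub_mul, one_mul]
      nth_rewrite 1 [heq]
      ring
    have hBval : (PQ (aa lam rho) (ff lam rho J) J (m+1)).2 z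
        = (PQ (aa lam rho) (ff lam rho J) J m).2 z
          * (1 - (aa lam rho (J-(m+1)) : ℂ) * z * ff lam rho (J - m) z) := by
      show (PQ (aa lam rho) (ff lam rho J) J m).2 z - _ = _
      rw [e1]
      ring
    constructor
    · show (PQ (aa lam rho) (ff lam rho J) J m).2 z = _
      rw [hBval, mul_assoc, key, mul_one]
    · rw [hBval]
      exact mul_ne_zero e2 (left_ne_zero_of_mul_eq_one key)

lemma ff_analyticOnNhd (hlam : ∀ i, 1 ≤ i → 0 ≤ lam i) (hrho : ∀ i, 1 ≤ i → 0 ≤ rho i)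
    {j : ℕ} {ε : ℝ} (hε : 0 < ε) (h : ∀ i, j ≤ i → aa lam rho i ≤ ε) {r : NNReal}
    (hr : (r : ℝ) * (4*ε) ≤ 1) :
    AnalyticOnNhd ℂ (ff lam rho j) (Metric.ball (0:ℂ) r) := by
  set p := FormalMultilinearSeries.ofScalars ℂ (fun k => (ccJ lam rho j k : ℂ)) with hp
  have hrad : (r : ENNReal) ≤ p.radius := by
    refine p.le_radius_of_bound 1 fun n => ?_
    rw [hp, FormalMultilinearSeries.ofScalars_norm, Complex.norm_real]
    calc |ccJ lam rho j n| * (r:ℝ) ^ n ≤ (4*ε)^n * (r:ℝ)^n :=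
          mul_le_mul_of_nonneg_right (ccJ_abs_le hlam hrho hε.le h n) (by positivity)
      _ = ((r:ℝ) * (4*ε))^n := by rw [← mul_pow]; ring_nf
      _ ≤ 1^n := pow_le_pow_left₀ (by positivity) hr n
      _ = 1 := one_pow n
  rcases eq_or_lt_of_le (zero_le : (0:NNReal) ≤ r) with hr0 | hr0
  · intro x hx
    simp [← hr0] at hx
  have hpos : 0 < p.radius := lt_of_lt_of_le (by exact_mod_cast hr0) hrad
  have hsum : p.sum = ff lam rho j := by
    funext w
    refine tsum_congr fun n => ?_
    rw [hp, FormalMultilinearSeries.ofScalars_apply_eq, smul_eq_mul]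
  have ha := (p.hasFPowerSeriesOnBall hpos).analyticOnNhd
  rw [hsum] at ha
  refine ha.mono fun w hw => ?_
  rw [Metric.mem_ball, dist_zero_right] at hw
  rw [EMetric.mem_ball, edist_zero_right]
  calc (‖w‖₊ : ENNReal) < (r : ENNReal) := by exact_mod_cast hw
    _ ≤ p.radius := hrad

end CW

open CW in
/-- **Corollary 3.2 (meromorphic extension).** If `a_j = u(j)v(j) → 0`, then the
generating function `g` of the weighted Catalan numbers extends to a function
meromorphic on all of `ℂ`. -/
theorem meromorphic_extension (lam rho : ℕ → ℝ)
    (hlam : ∀ i, 1 ≤ i → 0 ≤ lam i) (hrho : ∀ i, 1 ≤ i → 0 ≤ rho i)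
    (ha : Tendsto (fun j => uWt lam rho j * vWt lam rho j) atTop (nhds 0)) :
    ∃ F : ℂ → ℂ, MeromorphicOn F (Set.univ : Set ℂ) ∧
      ∀ z : ℂ, (‖z‖₊ : ENNReal) < radiusM lam rho →
        F z = ∑' k, (Ck lam rho k : ℂ) * z ^ k := by
  classical
  -- choice of truncation levels
  have hJex : ∀ n : ℕ, ∃ N : ℕ, ∀ i, N ≤ i → aa lam rho i ≤ 1/(8*((n:ℝ)+1)) := by
    intro n
    have hpos : (0:ℝ) < 1/(8*((n:ℝ)+1)) := by positivity
    have hev : ∀ᶠ j in atTop, aa lam rho j ≤ 1/(8*((n:ℝ)+1)) :=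
      ha.eventually (eventually_le_nhds hpos)
    exact eventually_atTop.mp hev
  choose J hJ using hJex
  set P : ℕ → ℂ → ℂ := fun n => (PQ (aa lam rho) (ff lam rho (J n)) (J n) (J n)).1 with hPdef
  set Q : ℕ → ℂ → ℂ := fun n => (PQ (aa lam rho) (ff lam rho (J n)) (J n) (J n)).2 with hQdef
  have hffan : ∀ n : ℕ, AnalyticOnNhd ℂ (ff lam rho (J n)) (Metric.ball (0:ℂ) (n:ℝ)) := by
    intro n
    have h := ff_analyticOnNhd hlam hrho (by positivity : (0:ℝ) < 1/(8*((n:ℝ)+1)))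
      (hJ n) (r := (n : NNReal)) ?_
    · simpa using h
    · have h8 : (0:ℝ) < 8*((n:ℝ)+1) := by positivity
      rw [div_eq_inv_mul, mul_one]
      calc ((n:NNReal):ℝ) * (4 * (8*((n:ℝ)+1))⁻¹) = 4*(n:ℝ) * (8*((n:ℝ)+1))⁻¹ := by
            push_cast; ring
        _ ≤ 1 := by
            rw [mul_inv_le_iff₀ h8]
            push_cast; linarith [Nat.cast_nonneg (α := ℝ) n]
  have hPQan : ∀ n : ℕ, AnalyticOnNhd ℂ (P n) (Metric.ball (0:ℂ) (n:ℝ)) ∧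
      AnalyticOnNhd ℂ (Q n) (Metric.ball (0:ℂ) (n:ℝ)) := fun n =>
    PQ_analytic (hffan n) (J n)
  have hPQf : ∀ (n : ℕ) (z : ℂ), ‖z‖ < 1/5 →
      P n z = Q n z * ff lam rho 0 z ∧ Q n z ≠ 0 := by
    intro n z hz
    have h := PQ_spec hlam hrho (J n) hz (J n) le_rfl
    rw [Nat.sub_self] at h
    exact h
  have hQ0 : ∀ n, Q n 0 = 1 := fun n => PQ_zero_val _
  -- the sum of the generating series
  have hgsum : ∀ w : ℂ, (gSeries lam rho).sum w = ∑' k, (Ck lam rho k : ℂ) * w ^ k := by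
    intro w
    refine tsum_congr fun n => ?_
    rw [show gSeries lam rho n
        = FormalMultilinearSeries.ofScalars ℂ (fun k => (Ck lam rho k : ℂ)) n from rfl,
      FormalMultilinearSeries.ofScalars_apply_eq, smul_eq_mul]
  have hg0 : ∀ w : ℂ, (gSeries lam rho).sum w = ff lam rho 0 w := by
    intro w
    rw [hgsum w]
    exact tsum_congr fun k => by rw [show Ck lam rho k = ccJ lam rho 0 k from rfl]
  have hradpos : 0 < radiusM lam rho := by
    have hb : ((1/8 : NNReal) : ENNReal) ≤ (gSeries lam rho).radius := by
      refine (gSeries lam rho).le_radius_of_bound 1 fun n => ?_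
      rw [show gSeries lam rho n
          = FormalMultilinearSeries.ofScalars ℂ (fun k => (Ck lam rho k : ℂ)) n from rfl,
        FormalMultilinearSeries.ofScalars_norm, Complex.norm_real]
      have h1 : |Ck lam rho n| ≤ 4 ^ n := ccJ_abs_le_four hlam hrho 0 n
      have h2 : ((1/8 : NNReal) : ℝ) = 1/8 := by norm_num
      rw [h2]
      calc |Ck lam rho n| * (1/8:ℝ)^n ≤ 4^n * (1/8)^n := by
            apply mul_le_mul_of_nonneg_right h1 (by positivity)
        _ = (1/2 : ℝ)^n := by rw [← mul_pow]; norm_num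
        _ ≤ 1 := pow_le_one₀ (by norm_num) (by norm_num)
    calc (0:ENNReal) < ((1/8 : NNReal) : ENNReal) := by norm_num
      _ ≤ radiusM lam rho := hb
  have hgan : AnalyticOnNhd ℂ (gSeries lam rho).sum (EMetric.ball 0 (radiusM lam rho)) :=
    ((gSeries lam rho).hasFPowerSeriesOnBall hradpos).analyticOnNhd
  -- cross identity
  have hcross : ∀ (n m : ℕ) (z : ℂ), 1 ≤ n → 1 ≤ m → ‖z‖ < n → ‖z‖ < m →
      P n z * Q m z = P m z * Q n z := by
    intro n m z hn hm hzn hzm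
    set U := Metric.ball (0:ℂ) (min (n:ℝ) (m:ℝ)) with hU
    have hUn : U ⊆ Metric.ball (0:ℂ) (n:ℝ) := Metric.ball_subset_ball (min_le_left _ _)
    have hUm : U ⊆ Metric.ball (0:ℂ) (m:ℝ) := Metric.ball_subset_ball (min_le_right _ _)
    have h1 : AnalyticOnNhd ℂ (fun w => P n w * Q m w) U :=
      ((hPQan n).1.mono hUn).mul ((hPQan m).2.mono hUm)
    have h2 : AnalyticOnNhd ℂ (fun w => P m w * Q n w) U :=
      ((hPQan m).1.mono hUm).mul ((hPQan n).2.mono hUn)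
    have h0U : (0:ℂ) ∈ U := by
      rw [hU, Metric.mem_ball, dist_zero_right, norm_zero, lt_min_iff]
      constructor <;> [exact_mod_cast Nat.lt_of_lt_of_le Nat.zero_lt_one hn;
        exact_mod_cast Nat.lt_of_lt_of_le Nat.zero_lt_one hm]
    have hev : (fun w => P n w * Q m w) =ᶠ[nhds (0:ℂ)] (fun w => P m w * Q n w) := by
      filter_upwards [Metric.ball_mem_nhds (0:ℂ) (by norm_num : (0:ℝ) < 1/5)] with w hw
      rw [Metric.mem_ball, dist_zero_right] at hw
      obtain ⟨e1, -⟩ := hPQf n w hw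
      obtain ⟨e2, -⟩ := hPQf m w hw
      rw [e1, e2]; ring
    have heq := h1.eqOn_of_preconnected_of_eventuallyEq h2
      ((convex_ball _ _).isPreconnected) h0U hev
    have hzU : z ∈ U := by
      rw [hU, Metric.mem_ball, dist_zero_right, lt_min_iff]; exact ⟨hzn, hzm⟩
    exact heq hzU
  -- P = Q * g inside the radius
  have hPQg : ∀ (n : ℕ) (z : ℂ), 1 ≤ n → ‖z‖ < n → (‖z‖₊ : ENNReal) < radiusM lam rho →
      P n z = Q n z * (gSeries lam rho).sum z := by
    intro n z hn hzn hzr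
    obtain ⟨r, hr1, hr2⟩ := ENNReal.lt_iff_exists_nnreal_btwn.mp hzr
    set U := Metric.ball (0:ℂ) (min (n:ℝ) (r:ℝ)) with hU
    have hUn : U ⊆ Metric.ball (0:ℂ) (n:ℝ) := Metric.ball_subset_ball (min_le_left _ _)
    have hUr : U ⊆ Metric.eball (0:ℂ) (radiusM lam rho) := by
      intro w hw
      rw [hU, Metric.mem_ball, dist_zero_right, lt_min_iff] at hw
      rw [EMetric.mem_ball, edist_zero_right]
      calc (‖w‖₊ : ENNReal) < (r : ENNReal) := by exact_mod_cast hw.2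
        _ < radiusM lam rho := hr2
    have h1 : AnalyticOnNhd ℂ (P n) U := (hPQan n).1.mono hUn
    have h2 : AnalyticOnNhd ℂ (fun w => Q n w * (gSeries lam rho).sum w) U :=
      ((hPQan n).2.mono hUn).mul (hgan.mono hUr)
    have h0U : (0:ℂ) ∈ U := by
      rw [hU, Metric.mem_ball, dist_zero_right, norm_zero, lt_min_iff]
      constructor
      · exact_mod_cast Nat.lt_of_lt_of_le Nat.zero_lt_one hn
      · have : (0:ℝ) ≤ ‖z‖ := norm_nonneg z
        have h' : ‖z‖ < (r:ℝ) := by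
          have := hr1
          rw [show (‖z‖₊ : ENNReal) < (r : ENNReal) ↔ ‖z‖₊ < r from ENNReal.coe_lt_coe] at this
          exact_mod_cast this
        linarith
    have hev : P n =ᶠ[nhds (0:ℂ)] (fun w => Q n w * (gSeries lam rho).sum w) := by
      filter_upwards [Metric.ball_mem_nhds (0:ℂ) (by norm_num : (0:ℝ) < 1/5)] with w hw
      rw [Metric.mem_ball, dist_zero_right] at hw
      obtain ⟨e1, -⟩ := hPQf n w hw
      rw [e1, hg0 w]
    have heq := h1.eqOn_of_preconnected_of_eventuallyEq h2
      ((convex_ball _ _).isPreconnected) h0U hev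
    have hzU : z ∈ U := by
      rw [hU, Metric.mem_ball, dist_zero_right, lt_min_iff]
      refine ⟨hzn, ?_⟩
      rw [show (‖z‖₊ : ENNReal) < (r : ENNReal) ↔ ‖z‖₊ < r from ENNReal.coe_lt_coe] at hr1
      exact_mod_cast hr1
    exact heq hzU
  -- the global function
  refine ⟨fun z => if h : ∃ n, Nat.floor ‖z‖ + 1 ≤ n ∧ Q n z ≠ 0 then
      P (Nat.find h) z / Q (Nat.find h) z else ff lam rho 0 z, ?_, ?_⟩
  · -- meromorphy
    intro x _
    set N : ℕ := Nat.floor ‖x‖ + 2 with hN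
    have hxN : ‖x‖ < (N:ℝ) := by
      have := Nat.lt_floor_add_one ‖x‖
      push_cast [hN]
      linarith
    have hxball : x ∈ Metric.ball (0:ℂ) (N:ℝ) := by
      rw [Metric.mem_ball, dist_zero_right]; exact hxN
    have hPA : AnalyticAt ℂ (P N) x := (hPQan N).1 x hxball
    have hQA : AnalyticAt ℂ (Q N) x := (hPQan N).2 x hxball
    have hmero : MeromorphicAt (fun z => P N z / Q N z) x :=
      hPA.meromorphicAt.div hQA.meromorphicAt
    refine hmero.congr ?_
    have hQne : ∀ᶠ z in nhdsWithin x {x}ᶜ, Q N z ≠ 0 := by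
      rcases hQA.eventually_eq_zero_or_eventually_ne_zero with h | h
      · exfalso
        have hzero := AnalyticOnNhd.eqOn_zero_of_preconnected_of_eventuallyEq_zero
          (hPQan N).2 ((convex_ball _ _).isPreconnected) hxball h
        have h0b : (0:ℂ) ∈ Metric.ball (0:ℂ) (N:ℝ) := by
          rw [Metric.mem_ball, dist_zero_right, norm_zero]
          have : (0:ℝ) < ((Nat.floor ‖x‖ + 2 : ℕ) : ℝ) := by positivity
          simpa [hN] using this
        have := hzero h0b
        rw [hQ0 N] at this
        simp at this
      · exact h
    have hfloor : ∀ᶠ z in nhdsWithin x {x}ᶜ, Nat.floor ‖z‖ + 1 ≤ N := by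
      have hball : Metric.ball (0:ℂ) (N:ℝ) ∈ nhds x := Metric.isOpen_ball.mem_nhds hxball
      refine Filter.Eventually.filter_mono nhdsWithin_le_nhds ?_
      filter_upwards [hball] with z hz
      rw [Metric.mem_ball, dist_zero_right] at hz
      have : Nat.floor ‖z‖ < N := by
        rw [Nat.floor_lt (norm_nonneg z)]
        exact_mod_cast hz
      omega
    filter_upwards [hQne, hfloor] with z hz1 hz2
    have hex : ∃ n, Nat.floor ‖z‖ + 1 ≤ n ∧ Q n z ≠ 0 := ⟨N, by omega, hz1⟩
    rw [dif_pos hex]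
    obtain ⟨hfind1, hfind2⟩ := Nat.find_spec hex
    set n₀ := Nat.find hex with hn₀
    have hzn₀ : ‖z‖ < (n₀:ℝ) := by
      have h1 := Nat.lt_floor_add_one ‖z‖
      have : ((Nat.floor ‖z‖ + 1 : ℕ):ℝ) ≤ (n₀:ℝ) := by exact_mod_cast hfind1
      push_cast at this
      linarith
    have hzN : ‖z‖ < (N:ℝ) := by
      have h1 := Nat.lt_floor_add_one ‖z‖
      have h2 : ((Nat.floor ‖z‖ : ℕ):ℝ) + 1 ≤ (N:ℝ) := by exact_mod_cast hz2
      linarith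
    have hc := hcross n₀ N z (by omega) (by omega) hzn₀ hzN
    rw [div_eq_div_iff hz1 hfind2]
    linear_combination -hc
  · -- equality with the power series on the disc of convergence
    intro z hz
    rw [← hgsum z]
    by_cases hex : ∃ n, Nat.floor ‖z‖ + 1 ≤ n ∧ Q n z ≠ 0
    · beta_reduce
      rw [dif_pos hex]
      obtain ⟨hfind1, hfind2⟩ := Nat.find_spec hex
      set n₀ := Nat.find hex with hn₀
      have hzn₀ : ‖z‖ < (n₀:ℝ) := by
        have h1 := Nat.lt_floor_add_one ‖z‖
        have : ((Nat.floor ‖z‖ + 1 : ℕ):ℝ) ≤ (n₀:ℝ) := by exact_mod_cast hfind1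
        push_cast at this
        linarith
      rw [hPQg n₀ z (by omega) hzn₀ hz]
      field_simp
    · beta_reduce
      rw [dif_neg hex]
      exact (hg0 z).symm
end

section
/- (Lemma 3.3) Assume a_j → 0 as j → ∞. Then for every real d > 0: M ≤ d if and only if the series g(d) = Σ_{k≥0} C_k d^k diverges (i.e., equals +∞). -/
open Filter Finset

-- Part 1: list lemmas
lemma endH_append (s t : List Bool) : ∀ j, endH j (s ++ t) = endH (endH j s) t := by
  induction s with
  | nil => intro j; rfl
  | cons b s ih =>
    intro j
    cases b <;> simp only [List.cons_append, endH] <;> exact ih _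

lemma isDyck_append (s t : List Bool) :
    ∀ j, isDyck j (s ++ t) = (isDyck j s && isDyck (endH j s) t) := by
  induction s with
  | nil => intro j; rfl
  | cons b s ih =>
    intro j
    cases b <;>
      simp only [List.cons_append, List.append_eq, isDyck, endH, Bool.and_assoc] <;> rw [ih]

lemma isDyck_mono (s : List Bool) :
    ∀ j m, isDyck j s = true → isDyck (j + m) s = true := by
  induction s with
  | nil => intros; rfl
  | cons b s ih =>
    intro j m h
    cases b
    · simp only [isDyck, Bool.and_eq_true, decide_eq_true_eq] at h ⊢
      obtain ⟨h1, h2⟩ := h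
      refine ⟨by omega, ?_⟩
      have := ih (j - 1) m h2
      have hjm : j + m - 1 = j - 1 + m := by omega
      rwa [hjm]
    · simp only [isDyck] at h ⊢
      have := ih (j + 1) m h
      have : j + m + 1 = j + 1 + m := by omega
      rw [this]
      exact ih (j + 1) m h

lemma endH_add (s : List Bool) :
    ∀ j m, isDyck j s = true → endH (j + m) s = endH j s + m := by
  induction s with
  | nil => intros; rfl
  | cons b s ih =>
    intro j m h
    cases b
    · simp only [isDyck, Bool.and_eq_true, decide_eq_true_eq] at h
      obtain ⟨h1, h2⟩ := h
      simp only [endH]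
      have hjm : j + m - 1 = j - 1 + m := by omega
      rw [hjm]
      exact ih _ _ h2
    · simp only [isDyck] at h
      simp only [endH]
      have : j + m + 1 = j + 1 + m := by omega
      rw [this]
      exact ih _ _ h

lemma endH_parity (s : List Bool) :
    ∀ j, isDyck j s = true → (endH j s + s.length + j) % 2 = 0 := by
  induction s with
  | nil => intro j _; simp [endH]; omega
  | cons b s ih =>
    intro j h
    cases b
    · simp only [isDyck, Bool.and_eq_true, decide_eq_true_eq] at h
      obtain ⟨h1, h2⟩ := h
      have := ih (j - 1) h2
      simp only [endH, List.length_cons]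
      omega
    · simp only [isDyck] at h
      have := ih (j + 1) h
      simp only [endH, List.length_cons]
      omega

lemma dwt_append (u v : ℕ → ℝ) (s t : List Bool) :
    ∀ j, dwt u v j (s ++ t) = dwt u v j s * dwt u v (endH j s) t := by
  induction s with
  | nil => intro j; simp [dwt, endH]
  | cons b s ih =>
    intro j
    cases b <;> simp only [List.cons_append, List.append_eq, dwt, endH] <;> rw [ih] <;> ring

lemma dwt_shift (u v : ℕ → ℝ) (s : List Bool) :
    ∀ j, isDyck j s = true →
      dwt u v (j + 1) s = dwt (fun i => u (i + 1)) (fun i => v (i + 1)) j s := by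
  induction s with
  | nil => intros; rfl
  | cons b s ih =>
    intro j h
    cases b
    · simp only [isDyck, Bool.and_eq_true, decide_eq_true_eq] at h
      obtain ⟨h1, h2⟩ := h
      simp only [dwt]
      have e1 : j + 1 - 1 = j - 1 + 1 := by omega
      have e2 : j - 1 + 1 = j := by omega
      rw [e1, ih _ h2, e2]
    · simp only [isDyck] at h
      simp only [dwt]
      rw [ih _ h]

lemma dwt_nonneg (u v : ℕ → ℝ) (hu : ∀ i, 0 ≤ u i) (hv : ∀ i, 0 ≤ v i) (s : List Bool) :
    ∀ j, 0 ≤ dwt u v j s := by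
  induction s with
  | nil => intro j; exact zero_le_one
  | cons b s ih =>
    intro j
    cases b <;> simp only [dwt] <;> exact mul_nonneg (by solve_by_elim) (ih _)

-- Part 2: decomposition
lemma exists_split : ∀ (n : ℕ) (s : List Bool) (j : ℕ), s.length ≤ n →
    isDyck (j + 1) s = true → endH (j + 1) s ≤ j →
    ∃ A B, s = A ++ false :: B ∧ isDyck 0 A = true ∧ endH 0 A = 0 := by
  intro n
  induction n with
  | zero =>
    intro s j hlen hD hE
    have : s = [] := List.length_eq_zero_iff.mp (by omega)
    subst this
    simp [endH] at hE
  | succ n ih =>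
    intro s j hlen hD hE
    match s with
    | [] => simp [endH] at hE
    | false :: t =>
      exact ⟨[], t, rfl, rfl, rfl⟩
    | true :: t =>
      simp only [isDyck] at hD
      simp only [endH] at hE
      simp only [List.length_cons] at hlen
      obtain ⟨A', B', rfl, hA'D, hA'E⟩ :=
        ih t (j + 1) (by omega) hD (by omega)
      -- analyze B'
      have hend : endH (j + 1 + 1) A' = j + 2 := by
        have := endH_add A' 0 (j + 2) hA'D
        simpa [hA'E] using this
      rw [isDyck_append] at hD
      simp only [Bool.and_eq_true] at hD
      rw [hend] at hD
      simp only [isDyck, Bool.and_eq_true, decide_eq_true_eq] at hD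
      have hB'D : isDyck (j + 1) B' = true := by
        have := hD.2.2
        simpa using this
      have hB'E : endH (j + 1) B' ≤ j := by
        rw [endH_append, hend] at hE
        simpa [endH] using hE
      obtain ⟨A'', B'', rfl, hA''D, hA''E⟩ :=
        ih B' j (by simp at hlen ⊢; omega) hB'D hB'E
      refine ⟨true :: A' ++ false :: A'', B'', by simp, ?_, ?_⟩
      · show isDyck 1 (A' ++ false :: A'') = true
        rw [isDyck_append]
        have h1 : isDyck 1 A' = true := by
          have := isDyck_mono A' 0 1 hA'D
          simpa using this
        have h2 : endH 1 A' = 1 := by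
          have := endH_add A' 0 1 hA'D
          simpa [hA'E] using this
        rw [h1, h2]
        simpa [isDyck] using hA''D
      · show endH 1 (A' ++ false :: A'') = 0
        rw [endH_append]
        have h2 : endH 1 A' = 1 := by
          have := endH_add A' 0 1 hA'D
          simpa [hA'E] using this
        rw [h2]
        simpa [endH] using hA''E

lemma split_unique {A A' B B' : List Bool}
    (hA : isDyck 0 A = true) (hA' : isDyck 0 A' = true)
    (hAe : endH 0 A = 0) (hAe' : endH 0 A' = 0)
    (heq : A ++ false :: B = A' ++ false :: B') : A = A' ∧ B = B' := by
  rcases lt_trichotomy A.length A'.length with hlt | heqlen | hgt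
  · exfalso
    have hpre1 : (A ++ [false]) <+: (A' ++ false :: B') := by
      rw [← heq]
      refine ⟨B, by simp⟩
    have hpre2 : A' <+: (A' ++ false :: B') := ⟨false :: B', rfl⟩
    have hpre : (A ++ [false]) <+: A' :=
      List.prefix_of_prefix_length_le hpre1 hpre2 (by simp; omega)
    obtain ⟨C, hC⟩ := hpre
    rw [← hC] at hA'
    rw [List.append_assoc, isDyck_append, hAe] at hA'
    simp [isDyck] at hA'
  · have := List.append_inj heq heqlen
    exact ⟨this.1, by simpa using this.2⟩
  · exfalso
    have hpre1 : (A' ++ [false]) <+: (A ++ false :: B) := by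
      rw [heq]
      refine ⟨B', by simp⟩
    have hpre2 : A <+: (A ++ false :: B) := ⟨false :: B, rfl⟩
    have hpre : (A' ++ [false]) <+: A :=
      List.prefix_of_prefix_length_le hpre1 hpre2 (by simp; omega)
    obtain ⟨C, hC⟩ := hpre
    rw [← hC, List.append_assoc, isDyck_append, hAe'] at hA
    simp [isDyck] at hA

-- Part 3: finsets and the recursion
def BL (n : ℕ) : Finset (List Bool) :=
  (Finset.univ : Finset (Fin n → Bool)).image List.ofFn

lemma mem_BL {n : ℕ} {l : List Bool} : l ∈ BL n ↔ l.length = n := by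
  constructor
  · rintro h
    simp only [BL, Finset.mem_image] at h
    obtain ⟨f, _, rfl⟩ := h
    simp
  · intro h
    simp only [BL, Finset.mem_image]
    refine ⟨fun i => l.get (Fin.cast h.symm i), Finset.mem_univ _, ?_⟩
    subst h
    simp [List.ofFn_getElem]

def DyckF (n : ℕ) : Finset (List Bool) :=
  (BL n).filter (fun l => isDyck 0 l = true ∧ endH 0 l = 0)

noncomputable def Cg (u v : ℕ → ℝ) (k : ℕ) : ℝ :=
  ∑ l ∈ DyckF (2 * k), dwt u v 0 l

lemma Ck_eq_Cg (lam rho : ℕ → ℝ) (k : ℕ) :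
    Ck lam rho k = Cg (uWt lam rho) (vWt lam rho) k := by
  rw [Ck, Cg, DyckF, Finset.sum_filter, BL, Finset.sum_image]
  · intro a _ b _ h
    exact List.ofFn_injective h

-- Part 4: the recursion formula
lemma glue_wt (u v : ℕ → ℝ) {A : List Bool} (B : List Bool)
    (hA : isDyck 0 A = true) (hAe : endH 0 A = 0) :
    dwt u v 0 (true :: A ++ false :: B) =
      u 0 * v 0 * dwt (fun m => u (m + 1)) (fun m => v (m + 1)) 0 A * dwt u v 0 B := by
  have h1 : endH 1 A = 1 := by
    have := endH_add A 0 1 hA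
    simpa [hAe] using this
  show dwt u v 0 (true :: (A ++ false :: B)) = _
  rw [show dwt u v 0 (true :: (A ++ false :: B)) = u 0 * dwt u v 1 (A ++ false :: B) from rfl,
    dwt_append, h1]
  have h2 : dwt u v 1 (false :: B) = v 0 * dwt u v 0 B := rfl
  rw [h2]
  have h3 : dwt u v 1 A = dwt (fun m => u (m + 1)) (fun m => v (m + 1)) 0 A := by
    have := dwt_shift u v A 0 hA
    simpa using this
  rw [h3]; ring

lemma glue_mem {k i : ℕ} (hik : i ≤ k) {A B : List Bool}
    (hA : A ∈ DyckF (2 * i)) (hB : B ∈ DyckF (2 * (k - i))) :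
    (true :: A ++ false :: B) ∈ DyckF (2 * (k + 1)) := by
  simp only [DyckF, Finset.mem_filter, mem_BL] at hA hB ⊢
  obtain ⟨hAl, hAD, hAe⟩ := hA
  obtain ⟨hBl, hBD, hBe⟩ := hB
  have h1 : endH 1 A = 1 := by
    have := endH_add A 0 1 hAD
    simpa [hAe] using this
  have hi1 : isDyck 1 A = true := by
    have := isDyck_mono A 0 1 hAD
    simpa using this
  refine ⟨by simp [hAl, hBl]; omega, ?_, ?_⟩
  · show isDyck 1 (A ++ false :: B) = true
    rw [isDyck_append, h1, hi1]
    simpa [isDyck] using hBD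
  · show endH 1 (A ++ false :: B) = 0
    rw [endH_append, h1]
    simpa [endH] using hBe

lemma unglue {k : ℕ} {l : List Bool} (hl : l ∈ DyckF (2 * (k + 1))) :
    ∃ i, i ≤ k ∧ ∃ A B, A ∈ DyckF (2 * i) ∧ B ∈ DyckF (2 * (k - i)) ∧
      l = true :: A ++ false :: B := by
  simp only [DyckF, Finset.mem_filter, mem_BL] at hl
  obtain ⟨hlen, hD, hE⟩ := hl
  match l, hlen with
  | true :: t, hlen =>
    have hDt : isDyck 1 t = true := hD
    have hEt : endH 1 t = 0 := hE
    obtain ⟨A, B, rfl, hAD, hAe⟩ :=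
      exists_split t.length t 0 le_rfl hDt (by simp [hEt])
    have h1 : endH 1 A = 1 := by
      have := endH_add A 0 1 hAD
      simpa [hAe] using this
    rw [isDyck_append, h1] at hDt
    simp only [Bool.and_eq_true] at hDt
    have hBD : isDyck 0 B = true := by
      have := hDt.2
      simpa [isDyck] using this
    have hBe : endH 0 B = 0 := by
      rw [endH_append, h1] at hEt
      simpa [endH] using hEt
    have hpar : A.length % 2 = 0 := by
      have := endH_parity A 0 hAD
      simpa [hAe] using this
    simp only [List.length_cons, List.length_append] at hlen
    refine ⟨A.length / 2, by omega, A, B, ?_, ?_, rfl⟩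
    · simp only [DyckF, Finset.mem_filter, mem_BL]
      exact ⟨by omega, hAD, hAe⟩
    · simp only [DyckF, Finset.mem_filter, mem_BL]
      exact ⟨by omega, hBD, hBe⟩
  | false :: t, hlen => simp [isDyck] at hD

lemma rec_formula (u v : ℕ → ℝ) (k : ℕ) :
    Cg u v (k + 1) =
      ∑ i ∈ Finset.range (k + 1),
        (u 0 * v 0) * Cg (fun m => u (m + 1)) (fun m => v (m + 1)) i * Cg u v (k - i) := by
  have hterm : ∀ i ∈ Finset.range (k + 1),
      (u 0 * v 0) * Cg (fun m => u (m + 1)) (fun m => v (m + 1)) i * Cg u v (k - i) =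
      ∑ p ∈ (DyckF (2 * i)) ×ˢ (DyckF (2 * (k - i))),
        u 0 * v 0 * dwt (fun m => u (m + 1)) (fun m => v (m + 1)) 0 p.1 * dwt u v 0 p.2 := by
    intro i _
    rw [Cg, Cg, mul_assoc, Finset.sum_mul_sum, Finset.mul_sum, Finset.sum_product]
    refine Finset.sum_congr rfl fun A _ => ?_
    rw [Finset.mul_sum]
    exact Finset.sum_congr rfl fun B _ => by ring
  rw [Finset.sum_congr rfl hterm, Finset.sum_sigma']
  rw [Cg]
  symm
  refine Finset.sum_bij (i := fun p _ => true :: p.2.1 ++ false :: p.2.2) ?_ ?_ ?_ ?_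
  · rintro ⟨i, A, B⟩ hp
    simp only [Finset.mem_sigma, Finset.mem_range, Finset.mem_product] at hp
    exact glue_mem (by omega) hp.2.1 hp.2.2
  · rintro ⟨i1, A1, B1⟩ h1 ⟨i2, A2, B2⟩ h2 heq
    simp only [Finset.mem_sigma, Finset.mem_range, Finset.mem_product,
      DyckF, Finset.mem_filter, mem_BL] at h1 h2
    simp only [List.cons_append, List.cons.injEq, true_and] at heq
    obtain ⟨hA, hB⟩ := split_unique h1.2.1.2.1 h2.2.1.2.1 h1.2.1.2.2 h2.2.1.2.2 heq
    have : i1 = i2 := by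
      have e1 := h1.2.1.1
      have e2 := h2.2.1.1
      rw [hA] at e1
      omega
    subst this; subst hA; subst hB; rfl
  · intro l hl
    obtain ⟨i, hik, A, B, hA, hB, rfl⟩ := unglue hl
    refine ⟨⟨i, A, B⟩, ?_, rfl⟩
    simp only [Finset.mem_sigma, Finset.mem_range, Finset.mem_product]
    exact ⟨by omega, hA, hB⟩
  · rintro ⟨i, A, B⟩ hp
    simp only [Finset.mem_sigma, Finset.mem_range, Finset.mem_product,
      DyckF, Finset.mem_filter, mem_BL] at hp
    exact (glue_wt u v B hp.2.1.2.1 hp.2.1.2.2).symm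

-- Part 5: levels
noncomputable def uS (u : ℕ → ℝ) (j : ℕ) : ℕ → ℝ := fun i => u (i + j)

noncomputable def CL (u v : ℕ → ℝ) (j k : ℕ) : ℝ := Cg (uS u j) (uS v j) k

lemma uS_succ (u : ℕ → ℝ) (j : ℕ) : (fun m => uS u j (m + 1)) = uS u (j + 1) :=
  funext fun m => congrArg u (by omega)

lemma uS_zero (u : ℕ → ℝ) : uS u 0 = u := funext fun m => congrArg u (by omega)

lemma CL_rec (u v : ℕ → ℝ) (j k : ℕ) :
    CL u v j (k + 1) = ∑ i ∈ Finset.range (k + 1),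
      (u j * v j) * CL u v (j + 1) i * CL u v j (k - i) := by
  rw [CL, rec_formula, uS_succ, uS_succ]
  simp only [uS, Nat.zero_add]
  rfl

lemma Cg_zero (u v : ℕ → ℝ) : Cg u v 0 = 1 := by
  have h : DyckF (2 * 0) = {[]} := by
    ext l
    simp only [DyckF, Finset.mem_filter, mem_BL, Finset.mem_singleton]
    constructor
    · rintro ⟨h1, _, _⟩
      exact List.length_eq_zero_iff.mp (by omega)
    · rintro rfl
      exact ⟨rfl, rfl, rfl⟩
  rw [Cg, h, Finset.sum_singleton]
  rfl

lemma CL_zero (u v : ℕ → ℝ) (j : ℕ) : CL u v j 0 = 1 := Cg_zero _ _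

lemma Cg_nonneg (u v : ℕ → ℝ) (hu : ∀ i, 0 ≤ u i) (hv : ∀ i, 0 ≤ v i) (k : ℕ) :
    0 ≤ Cg u v k :=
  Finset.sum_nonneg fun l _ => dwt_nonneg u v hu hv l 0

lemma CL_nonneg (u v : ℕ → ℝ) (hu : ∀ i, 0 ≤ u i) (hv : ∀ i, 0 ≤ v i) (j k : ℕ) :
    0 ≤ CL u v j k :=
  Cg_nonneg _ _ (fun i => hu _) (fun i => hv _) k

-- Part 6: catalan bound
lemma catalan_le_four_pow (n : ℕ) : (catalan n : ℝ) ≤ 4 ^ n := by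
  have h1 : catalan n ≤ n.centralBinom := by
    rw [catalan_eq_centralBinom_div]
    exact Nat.div_le_self _ _
  have h2 : n.centralBinom ≤ 4 ^ n := by
    have h3 : n.centralBinom ≤ ∑ m ∈ Finset.range (2 * n + 1), (2 * n).choose m :=
      Finset.single_le_sum (f := fun m => (2 * n).choose m)
        (fun i _ => Nat.zero_le _) (by simp [Finset.mem_range]; omega)
    rw [Nat.sum_range_choose] at h3
    calc n.centralBinom ≤ 2 ^ (2 * n) := h3
    _ = 4 ^ n := by rw [pow_mul]; norm_num
  calc (catalan n : ℝ) ≤ (n.centralBinom : ℝ) := by exact_mod_cast h1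
  _ ≤ ((4 ^ n : ℕ) : ℝ) := by exact_mod_cast h2
  _ = 4 ^ n := by push_cast; ring

lemma catalan_succ_real (k : ℕ) :
    (catalan (k + 1) : ℝ) =
      ∑ i ∈ Finset.range (k + 1), (catalan i : ℝ) * (catalan (k - i) : ℝ) := by
  rw [catalan_succ']
  rw [Finset.Nat.sum_antidiagonal_eq_sum_range_succ (f := fun x y => catalan x * catalan y)]
  push_cast
  rfl

lemma CL_le_catalan (u v : ℕ → ℝ) (hu : ∀ i, 0 ≤ u i) (hv : ∀ i, 0 ≤ v i)
    (j0 : ℕ) (ε : ℝ) (hε : 0 ≤ ε) (hbd : ∀ j, j0 ≤ j → u j * v j ≤ ε) :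
    ∀ k j, j0 ≤ j → CL u v j k ≤ (catalan k : ℝ) * ε ^ k := by
  intro k
  induction k using Nat.strong_induction_on with
  | _ k ih =>
    match k with
    | 0 => intro j _; simp [CL_zero, catalan_zero]
    | k + 1 =>
      intro j hj
      rw [CL_rec]
      have hterm : ∀ i ∈ Finset.range (k + 1),
          (u j * v j) * CL u v (j + 1) i * CL u v j (k - i) ≤
            ((catalan i : ℝ) * (catalan (k - i) : ℝ)) * ε ^ (k + 1) := by
        intro i hi
        simp only [Finset.mem_range] at hi
        have h1 : CL u v (j + 1) i ≤ (catalan i : ℝ) * ε ^ i :=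
          ih i (by omega) (j + 1) (by omega)
        have h2 : CL u v j (k - i) ≤ (catalan (k - i) : ℝ) * ε ^ (k - i) :=
          ih (k - i) (by omega) j hj
        have h3 : u j * v j ≤ ε := hbd j hj
        have hc1 := CL_nonneg u v hu hv (j + 1) i
        have hc2 := CL_nonneg u v hu hv j (k - i)
        have huv : 0 ≤ u j * v j := mul_nonneg (hu j) (hv j)
        calc (u j * v j) * CL u v (j + 1) i * CL u v j (k - i)
            ≤ ε * ((catalan i : ℝ) * ε ^ i) * ((catalan (k - i) : ℝ) * ε ^ (k - i)) := by
              apply mul_le_mul (mul_le_mul h3 h1 hc1 hε) h2 hc2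
              positivity
        _ = ((catalan i : ℝ) * (catalan (k - i) : ℝ)) * (ε ^ i * ε ^ (k - i) * ε) := by
              ring
        _ = ((catalan i : ℝ) * (catalan (k - i) : ℝ)) * ε ^ (k + 1) := by
              rw [← pow_add, ← pow_succ]
              congr 2
              omega
      calc ∑ i ∈ Finset.range (k + 1), (u j * v j) * CL u v (j + 1) i * CL u v j (k - i)
          ≤ ∑ i ∈ Finset.range (k + 1),
              ((catalan i : ℝ) * (catalan (k - i) : ℝ)) * ε ^ (k + 1) :=
            Finset.sum_le_sum hterm
      _ = (∑ i ∈ Finset.range (k + 1), (catalan i : ℝ) * (catalan (k - i) : ℝ))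
            * ε ^ (k + 1) := by rw [Finset.sum_mul]
      _ = (catalan (k + 1) : ℝ) * ε ^ (k + 1) := by rw [catalan_succ_real]

lemma CL_base_summable (u v : ℕ → ℝ) (hu : ∀ i, 0 ≤ u i) (hv : ∀ i, 0 ≤ v i)
    (j0 : ℕ) (ε x : ℝ) (hε : 0 ≤ ε) (hx : 0 ≤ x) (hεx : 4 * ε * x ≤ 2⁻¹)
    (hbd : ∀ j, j0 ≤ j → u j * v j ≤ ε) :
    Summable (fun k => CL u v j0 k * x ^ k) := by
  refine Summable.of_nonneg_of_le
    (fun k => mul_nonneg (CL_nonneg u v hu hv j0 k) (pow_nonneg hx k))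
    (fun k => ?_)
    (summable_geometric_of_lt_one (r := (2⁻¹ : ℝ)) (by norm_num) (by norm_num))
  have h1 : CL u v j0 k ≤ (catalan k : ℝ) * ε ^ k := CL_le_catalan u v hu hv j0 ε hε hbd k j0 le_rfl
  calc CL u v j0 k * x ^ k ≤ ((catalan k : ℝ) * ε ^ k) * x ^ k := by
        apply mul_le_mul_of_nonneg_right h1 (pow_nonneg hx k)
  _ ≤ (4 ^ k * ε ^ k) * x ^ k := by
        apply mul_le_mul_of_nonneg_right _ (pow_nonneg hx k)
        exact mul_le_mul_of_nonneg_right (catalan_le_four_pow k) (pow_nonneg hε k)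
  _ = (4 * ε * x) ^ k := by rw [mul_pow, mul_pow]
  _ ≤ (2⁻¹ : ℝ) ^ k := pow_le_pow_left₀ (by positivity) hεx k

-- Part 7: up and down
lemma CL_lower (u v : ℕ → ℝ) (hu : ∀ i, 0 ≤ u i) (hv : ∀ i, 0 ≤ v i) (j k : ℕ) :
    (u j * v j) * CL u v (j + 1) k ≤ CL u v j (k + 1) := by
  rw [CL_rec]
  have h := Finset.single_le_sum
    (f := fun i => (u j * v j) * CL u v (j + 1) i * CL u v j (k - i))
    (fun i _ => mul_nonneg (mul_nonneg (mul_nonneg (hu j) (hv j))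
      (CL_nonneg u v hu hv (j + 1) i)) (CL_nonneg u v hu hv j (k - i)))
    (Finset.self_mem_range_succ k)
  simpa [CL_zero] using h

lemma CL_up (u v : ℕ → ℝ) (hu : ∀ i, 0 ≤ u i) (hv : ∀ i, 0 ≤ v i) (j : ℕ) (x : ℝ)
    (hx : 0 < x) (ha : 0 < u j * v j)
    (hs : Summable fun k => CL u v j k * x ^ k) :
    Summable fun k => CL u v (j + 1) k * x ^ k := by
  have h1 : Summable (fun k => CL u v j (k + 1) * x ^ (k + 1)) := by
    exact (summable_nat_add_iff (f := fun k => CL u v j k * x ^ k) 1).mpr hs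
  have h2 : Summable (fun k => (u j * v j * x)⁻¹ * (CL u v j (k + 1) * x ^ (k + 1))) :=
    h1.mul_left _
  refine Summable.of_nonneg_of_le
    (fun k => mul_nonneg (CL_nonneg u v hu hv (j + 1) k) (pow_nonneg hx.le k))
    (fun k => ?_) h2
  have h3 : (u j * v j) * CL u v (j + 1) k * x ^ (k + 1) ≤ CL u v j (k + 1) * x ^ (k + 1) :=
    mul_le_mul_of_nonneg_right (CL_lower u v hu hv j k) (pow_nonneg hx.le _)
  have hpos : 0 < u j * v j * x := by positivity
  have heq : CL u v (j + 1) k * x ^ k =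
      (u j * v j * x)⁻¹ * ((u j * v j) * CL u v (j + 1) k * x ^ (k + 1)) := by
    rw [eq_inv_mul_iff_mul_eq₀ hpos.ne']
    ring
  rw [heq]
  exact mul_le_mul_of_nonneg_left h3 (inv_nonneg.mpr hpos.le)

lemma sum_conv_le (f g : ℕ → ℝ) (hf : ∀ i, 0 ≤ f i) (hg : ∀ i, 0 ≤ g i) (K : ℕ) :
    ∑ k ∈ Finset.range K, ∑ i ∈ Finset.range (k + 1), f i * g (k - i) ≤
      (∑ i ∈ Finset.range K, f i) * ∑ m ∈ Finset.range K, g m := by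
  rw [Finset.sum_sigma', Finset.sum_mul_sum, ← Finset.sum_product']
  have hinj : Set.InjOn (fun q : Σ _ : ℕ, ℕ => (q.2, q.1 - q.2))
      ((Finset.range K).sigma fun k => Finset.range (k + 1)) := by
    rintro ⟨k1, i1⟩ h1 ⟨k2, i2⟩ h2 heq
    simp only [Finset.coe_sigma, Set.mem_sigma_iff, Finset.mem_coe, Finset.mem_range] at h1 h2
    simp only [Prod.mk.injEq] at heq
    obtain ⟨e1, e2⟩ := heq
    have hk : k1 = k2 := by omega
    subst hk
    have hi : i1 = i2 := by omega
    subst hi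
    rfl
  rw [← Finset.sum_image (g := fun q : Σ _ : ℕ, ℕ => (q.2, q.1 - q.2))
    (f := fun p : ℕ × ℕ => f p.1 * g p.2) (fun x hx y hy h => hinj hx hy h)]
  apply Finset.sum_le_sum_of_subset_of_nonneg
  · intro p hp
    simp only [Finset.mem_image] at hp
    obtain ⟨q, hq, rfl⟩ := hp
    obtain ⟨k1, i1⟩ := q
    simp only [Finset.mem_sigma, Finset.mem_range] at hq
    simp only [Finset.mem_product, Finset.mem_range]
    exact ⟨by omega, by omega⟩
  · intro p _ _
    exact mul_nonneg (hf _) (hg _)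

lemma CL_rec_pow (u v : ℕ → ℝ) (j k : ℕ) (z : ℝ) :
    CL u v j (k + 1) * z ^ (k + 1) = (u j * v j) * z *
      ∑ i ∈ Finset.range (k + 1), (CL u v (j + 1) i * z ^ i) * (CL u v j (k - i) * z ^ (k - i)) := by
  rw [CL_rec, Finset.sum_mul, Finset.mul_sum]
  refine Finset.sum_congr rfl fun i hi => ?_
  simp only [Finset.mem_range] at hi
  have hz : z ^ (k + 1) = z ^ i * z ^ (k - i) * z := by
    rw [← pow_add, ← pow_succ]
    congr 1
    omega
  rw [hz]
  ring

-- Part 8: the descend lemma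
open scoped Topology in
lemma descend (u v : ℕ → ℝ) (hu : ∀ i, 0 ≤ u i) (hv : ∀ i, 0 ≤ v i) (j : ℕ) (d x : ℝ)
    (hd : 0 < d) (hdx : d < x)
    (hsd : Summable fun k => CL u v j k * d ^ k)
    (hsx : Summable fun k => CL u v (j + 1) k * x ^ k) :
    ∃ y, d < y ∧ Summable fun k => CL u v j k * y ^ k := by
  have hCL1 : ∀ i k, 0 ≤ CL u v i k := fun i k => CL_nonneg u v hu hv i k
  rcases eq_or_lt_of_le (mul_nonneg (hu j) (hv j)) with ha0 | ha
  · -- a = 0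
    refine ⟨x, hdx, ?_⟩
    have hz : ∀ k, CL u v j (k + 1) = 0 := by
      intro k
      rw [CL_rec]
      apply Finset.sum_eq_zero
      intro i _
      rw [← ha0, zero_mul, zero_mul]
    refine (summable_nat_add_iff (f := fun k => CL u v j k * x ^ k) 1).mp ?_
    have he : (fun k : ℕ => CL u v j (k + 1) * x ^ (k + 1)) = fun _ => (0 : ℝ) :=
      funext fun k => by rw [hz k, zero_mul]
    exact he ▸ summable_zero
  · -- a > 0
    set a := u j * v j with ha_def
    have hsz : ∀ z, 0 ≤ z → z ≤ x → Summable (fun k => CL u v (j + 1) k * z ^ k) := by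
      intro z hz0 hzx
      refine Summable.of_nonneg_of_le
        (fun k => mul_nonneg (hCL1 _ _) (pow_nonneg hz0 k)) (fun k => ?_) hsx
      exact mul_le_mul_of_nonneg_left (pow_le_pow_left₀ hz0 hzx k) (hCL1 _ _)
    set t : ℝ → ℝ := fun z => ∑' k, CL u v (j + 1) k * z ^ k with ht_def
    set s : ℝ := ∑' k, CL u v j k * d ^ k with hs_def
    have hs1 : 1 ≤ s := by
      have := Summable.le_tsum hsd 0 (fun i _ => mul_nonneg (hCL1 _ _) (pow_nonneg hd.le i))
      simpa [CL_zero] using this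
    have hs0 : 0 < s := lt_of_lt_of_le zero_lt_one hs1
    have htd0 : 0 ≤ t d := tsum_nonneg fun k => mul_nonneg (hCL1 _ _) (pow_nonneg hd.le k)
    -- Cauchy product identity at d
    have hnorm1 : Summable (fun k => ‖CL u v (j + 1) k * d ^ k‖) := by
      refine (hsz d hd.le hdx.le).congr fun k => ?_
      rw [Real.norm_eq_abs, abs_of_nonneg (mul_nonneg (hCL1 _ _) (pow_nonneg hd.le k))]
    have hnorm2 : Summable (fun k => ‖CL u v j k * d ^ k‖) := by
      refine hsd.congr fun k => ?_
      rw [Real.norm_eq_abs, abs_of_nonneg (mul_nonneg (hCL1 _ _) (pow_nonneg hd.le k))]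
    have hCauchy : t d * s = ∑' k, ∑ i ∈ Finset.range (k + 1),
        (CL u v (j + 1) i * d ^ i) * (CL u v j (k - i) * d ^ (k - i)) :=
      tsum_mul_tsum_eq_tsum_sum_range_of_summable_norm hnorm1 hnorm2
    have hident : s = 1 + a * d * (t d * s) := by
      have h1 : s = CL u v j 0 * d ^ 0 + ∑' k, CL u v j (k + 1) * d ^ (k + 1) :=
        Summable.tsum_eq_zero_add hsd
      have h2 : (fun k : ℕ => CL u v j (k + 1) * d ^ (k + 1)) =
          (fun k => a * d * ∑ i ∈ Finset.range (k + 1),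
            (CL u v (j + 1) i * d ^ i) * (CL u v j (k - i) * d ^ (k - i))) :=
        funext fun k => CL_rec_pow u v j k d
      rw [h2, tsum_mul_left, ← hCauchy] at h1
      simpa [CL_zero] using h1
    set c : ℝ := a * d * t d with hc_def
    have hc0 : 0 ≤ c := by positivity
    have hclt : c < 1 := by
      have h3 : c * s = s - 1 := by
        have := hident
        nlinarith [this]
      have h4 : c = (s - 1) / s := by
        field_simp at h3 ⊢
        linarith [h3]
      rw [h4]
      rw [div_lt_one hs0]
      linarith
    -- tail control
    have htail : Tendsto (fun N => ∑' k, CL u v (j + 1) (k + N) * x ^ (k + N)) atTop (𝓝 0) :=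
      tendsto_sum_nat_add (f := fun k => CL u v (j + 1) k * x ^ k)
    set δ : ℝ := (1 - c) / (8 * a * d + 1) with hδ_def
    have hδ : 0 < δ := by
      apply div_pos (by linarith)
      positivity
    obtain ⟨N, hN⟩ : ∃ N, ∑' k, CL u v (j + 1) (k + N) * x ^ (k + N) < δ :=
      (htail.eventually_lt_const hδ).exists
    set F : ℝ → ℝ := fun r => r ^ (N + 1) * c + a * r * d * δ with hF_def
    have hF1 : F 1 < 1 := by
      have had : 0 < a * d := by positivity
      have h8 : a * d * δ < 1 - c := by
        rw [hδ_def, mul_div_assoc']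
        rw [div_lt_iff₀ (by positivity)]
        nlinarith [hclt]
      simp only [hF_def, one_pow, mul_one, one_mul]
      linarith
    have hFc : ContinuousAt F 1 := by fun_prop
    have hev : ∀ᶠ r in 𝓝 (1 : ℝ), F r < 1 :=
      Filter.Tendsto.eventually_lt_const hF1 hFc.tendsto
    obtain ⟨ε, hε, hball⟩ := Metric.eventually_nhds_iff.mp hev
    set η : ℝ := min (ε / 2) (min ((x - d) / (2 * d)) (1 / 2)) with hη_def
    have hη0 : 0 < η := by
      apply lt_min (by linarith)
      apply lt_min _ (by norm_num)
      apply div_pos (by linarith) (by linarith)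
    set r : ℝ := 1 + η with hr_def
    have hr1 : 1 < r := by simp [hr_def]; linarith
    have hrdist : dist r 1 < ε := by
      rw [Real.dist_eq, hr_def]
      rw [abs_of_nonneg (by linarith)]
      have : η ≤ ε / 2 := min_le_left _ _
      linarith
    have hFr : F r < 1 := hball hrdist
    set y : ℝ := r * d with hy_def
    have hy : d < y := by
      rw [hy_def]
      nlinarith
    have hyx : y ≤ x := by
      have h1 : η ≤ (x - d) / (2 * d) := le_trans (min_le_right _ _) (min_le_left _ _)
      have h2 : η * (2 * d) ≤ x - d := by
        rw [div_eq_mul_inv] at h1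
        have := mul_le_mul_of_nonneg_right h1 (by linarith : (0:ℝ) ≤ 2 * d)
        rwa [mul_assoc, inv_mul_cancel₀ (by positivity), mul_one] at this
      rw [hy_def, hr_def]
      nlinarith
    have hy0 : 0 < y := lt_trans hd hy
    -- t y bound
    have hty : t y ≤ r ^ N * t d + δ := by
      have hsplit := (Summable.sum_add_tsum_nat_add (f := fun k => CL u v (j + 1) k * y ^ k) N
        (hsz y hy0.le hyx)).symm
      have htail_le : ∑' k, CL u v (j + 1) (k + N) * y ^ (k + N) ≤
          ∑' k, CL u v (j + 1) (k + N) * x ^ (k + N) := by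
        apply Summable.tsum_le_tsum _
          ((summable_nat_add_iff (f := fun k => CL u v (j + 1) k * y ^ k) N).mpr
            (hsz y hy0.le hyx))
          ((summable_nat_add_iff (f := fun k => CL u v (j + 1) k * x ^ k) N).mpr hsx)
        intro k
        exact mul_le_mul_of_nonneg_left (pow_le_pow_left₀ hy0.le hyx _) (hCL1 _ _)
      have hhead : ∑ i ∈ Finset.range N, CL u v (j + 1) i * y ^ i ≤
          r ^ N * ∑ i ∈ Finset.range N, CL u v (j + 1) i * d ^ i := by
        rw [Finset.mul_sum]
        apply Finset.sum_le_sum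
        intro i hi
        simp only [Finset.mem_range] at hi
        have : y ^ i = r ^ i * d ^ i := by rw [hy_def, mul_pow]
        rw [this]
        have hri : r ^ i ≤ r ^ N := by
          apply pow_le_pow_right₀ hr1.le (by omega)
        calc CL u v (j + 1) i * (r ^ i * d ^ i)
            ≤ CL u v (j + 1) i * (r ^ N * d ^ i) := by
              apply mul_le_mul_of_nonneg_left _ (hCL1 _ _)
              exact mul_le_mul_of_nonneg_right hri (pow_nonneg hd.le i)
        _ = r ^ N * (CL u v (j + 1) i * d ^ i) := by ring
      have hheadle : ∑ i ∈ Finset.range N, CL u v (j + 1) i * d ^ i ≤ t d := by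
        apply Summable.sum_le_tsum
        · intro i _
          exact mul_nonneg (hCL1 _ _) (pow_nonneg hd.le i)
        · exact hsz d hd.le hdx.le
      have hrN : (0:ℝ) ≤ r ^ N := pow_nonneg (by linarith) N
      have h4 := mul_le_mul_of_nonneg_left hheadle hrN
      have h5 := htail_le.trans hN.le
      have hsplit2 : t y = ∑ i ∈ Finset.range N, CL u v (j + 1) i * y ^ i
            + ∑' (i : ℕ), CL u v (j + 1) (i + N) * y ^ (i + N) := by
        rw [ht_def]
        exact hsplit
      rw [hsplit2]
      linarith [hhead, h4, h5]
    -- a * y * t y < 1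
    have hty0 : 0 ≤ t y := tsum_nonneg fun k => mul_nonneg (hCL1 _ _) (pow_nonneg hy0.le k)
    have hcy : a * y * t y < 1 := by
      have h1 : a * y * t y ≤ a * y * (r ^ N * t d + δ) :=
        mul_le_mul_of_nonneg_left hty (by positivity)
      have hFr' : r ^ (N + 1) * c + a * r * d * δ < 1 := by
        have := hFr
        rw [hF_def] at this
        simpa using this
      have h2 : a * y * (r ^ N * t d + δ) = r ^ (N + 1) * c + a * r * d * δ := by
        rw [hy_def, hc_def, pow_succ]
        ring
      calc a * y * t y ≤ a * y * (r ^ N * t d + δ) := h1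
      _ = r ^ (N + 1) * c + a * r * d * δ := h2
      _ < 1 := hFr'
    set c' : ℝ := a * y * t y with hc'_def
    have hc'0 : 0 ≤ c' := by positivity
    set Q : ℝ := (1 - c')⁻¹ with hQ_def
    have hQ0 : 0 < Q := by
      rw [hQ_def]
      apply inv_pos.mpr
      linarith
    have hQfix : 1 + c' * Q = Q := by
      have hpos : (0:ℝ) < 1 - c' := by linarith
      rw [hQ_def]
      field_simp
      ring
    have hP : ∀ K, ∑ k ∈ Finset.range K, CL u v j k * y ^ k ≤ Q := by
      intro K
      induction K with
      | zero => simpa using hQ0.le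
      | succ K ihK =>
        rw [Finset.sum_range_succ']
        have hf0 : CL u v j 0 * y ^ 0 = 1 := by simp [CL_zero]
        have hstep : ∑ k ∈ Finset.range K, CL u v j (k + 1) * y ^ (k + 1) ≤ c' * Q := by
          have he : ∀ k, CL u v j (k + 1) * y ^ (k + 1) = a * y *
              ∑ i ∈ Finset.range (k + 1),
                (CL u v (j + 1) i * y ^ i) * (CL u v j (k - i) * y ^ (k - i)) :=
            fun k => CL_rec_pow u v j k y
          rw [Finset.sum_congr rfl (fun k _ => he k), ← Finset.mul_sum]
          have hbox := sum_conv_le (fun i => CL u v (j + 1) i * y ^ i)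
            (fun i => CL u v j i * y ^ i)
            (fun i => mul_nonneg (hCL1 _ _) (pow_nonneg hy0.le i))
            (fun i => mul_nonneg (hCL1 _ _) (pow_nonneg hy0.le i)) K
          have hsum1 : ∑ i ∈ Finset.range K, CL u v (j + 1) i * y ^ i ≤ t y := by
            apply Summable.sum_le_tsum
            · intro i _
              exact mul_nonneg (hCL1 _ _) (pow_nonneg hy0.le i)
            · exact hsz y hy0.le hyx
          have hsum1' : 0 ≤ ∑ i ∈ Finset.range K, CL u v (j + 1) i * y ^ i :=
            Finset.sum_nonneg fun i _ => mul_nonneg (hCL1 _ _) (pow_nonneg hy0.le i)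
          have hsum2' : 0 ≤ ∑ m ∈ Finset.range K, CL u v j m * y ^ m :=
            Finset.sum_nonneg fun i _ => mul_nonneg (hCL1 _ _) (pow_nonneg hy0.le i)
          have hprod : (∑ i ∈ Finset.range K, CL u v (j + 1) i * y ^ i) *
              (∑ m ∈ Finset.range K, CL u v j m * y ^ m) ≤ t y * Q :=
            mul_le_mul hsum1 ihK hsum2' hty0
          have hay : (0:ℝ) ≤ a * y := by positivity
          calc a * y * ∑ k ∈ Finset.range K, ∑ i ∈ Finset.range (k + 1),
                (CL u v (j + 1) i * y ^ i) * (CL u v j (k - i) * y ^ (k - i))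
              ≤ a * y * ((∑ i ∈ Finset.range K, CL u v (j + 1) i * y ^ i) *
                (∑ m ∈ Finset.range K, CL u v j m * y ^ m)) :=
                mul_le_mul_of_nonneg_left hbox hay
          _ ≤ a * y * (t y * Q) := mul_le_mul_of_nonneg_left hprod hay
          _ = c' * Q := by rw [hc'_def]; ring
        calc (∑ k ∈ Finset.range K, CL u v j (k + 1) * y ^ (k + 1)) + CL u v j 0 * y ^ 0
            ≤ c' * Q + 1 := by rw [hf0]; linarith
        _ = Q := by linarith [hQfix]
    refine ⟨y, hy, ?_⟩
    exact summable_of_sum_range_le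
      (fun k => mul_nonneg (hCL1 _ _) (pow_nonneg hy0.le k)) hP

-- Part 9: chain and key lemma
lemma uS_uS (u : ℕ → ℝ) (a b : ℕ) : uS (uS u a) b = uS u (b + a) :=
  funext fun i => congrArg u (by omega)

lemma CL_shift (u v : ℕ → ℝ) (l k : ℕ) :
    CL (uS u 1) (uS v 1) l k = CL u v (l + 1) k := by
  rw [CL, CL, uS_uS, uS_uS]

lemma CL_level_zero (u v : ℕ → ℝ) (k : ℕ) : CL u v 0 k = Cg u v k := by
  rw [CL, uS_zero, uS_zero]

lemma CL_summable_of_zero (u v : ℕ → ℝ) (j : ℕ) (h : u j * v j = 0) (x : ℝ) :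
    Summable fun k => CL u v j k * x ^ k := by
  have hz : ∀ k, CL u v j (k + 1) = 0 := by
    intro k
    rw [CL_rec]
    apply Finset.sum_eq_zero
    intro i _
    rw [h, zero_mul, zero_mul]
  refine (summable_nat_add_iff (f := fun k => CL u v j k * x ^ k) 1).mp ?_
  have he : (fun k : ℕ => CL u v j (k + 1) * x ^ (k + 1)) = fun _ => (0 : ℝ) :=
    funext fun k => by rw [hz k, zero_mul]
  exact he ▸ summable_zero

lemma chain : ∀ (h : ℕ) (u v : ℕ → ℝ), (∀ i, 0 ≤ u i) → (∀ i, 0 ≤ v i) →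
    (∀ l, l < h → 0 < u l * v l) →
    ∀ (d : ℝ), 0 < d → (Summable fun k => CL u v 0 k * d ^ k) →
    (∃ yb, d < yb ∧ Summable fun k => CL u v h k * yb ^ k) →
    ∃ y, d < y ∧ Summable fun k => CL u v 0 k * y ^ k := by
  intro h
  induction h with
  | zero => exact fun u v _ _ _ d _ _ hbase => hbase
  | succ h ih =>
    intro u v hu hv hpos d hd hs hbase
    have ha0 : 0 < u 0 * v 0 := hpos 0 (Nat.succ_pos h)
    have hs1 : Summable fun k => CL u v 1 k * d ^ k :=
      CL_up u v hu hv 0 d hd ha0 hs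
    have hu' : ∀ i, 0 ≤ uS u 1 i := fun i => hu _
    have hv' : ∀ i, 0 ≤ uS v 1 i := fun i => hv _
    have hpos' : ∀ l, l < h → 0 < uS u 1 l * uS v 1 l := by
      intro l hl
      exact hpos (l + 1) (by omega)
    have hs1' : Summable fun k => CL (uS u 1) (uS v 1) 0 k * d ^ k := by
      refine hs1.congr fun k => ?_
      rw [CL_shift]
    have hbase' : ∃ yb, d < yb ∧ Summable fun k => CL (uS u 1) (uS v 1) h k * yb ^ k := by
      obtain ⟨yb, hyb, hsb⟩ := hbase
      refine ⟨yb, hyb, hsb.congr fun k => ?_⟩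
      rw [CL_shift]
    obtain ⟨y, hy, hsy⟩ := ih (uS u 1) (uS v 1) hu' hv' hpos' d hd hs1' hbase'
    have hsy1 : Summable fun k => CL u v 1 k * y ^ k := by
      refine hsy.congr fun k => ?_
      rw [CL_shift]
    exact descend u v hu hv 0 d y hd hy hs hsy1

open scoped Topology in
lemma key_lemma (u v : ℕ → ℝ) (hu : ∀ i, 0 ≤ u i) (hv : ∀ i, 0 ≤ v i)
    (ha : Tendsto (fun j => u j * v j) atTop (𝓝 0)) (d : ℝ) (hd : 0 < d)
    (hs : Summable fun k => Cg u v k * d ^ k) :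
    ∃ y, d < y ∧ Summable fun k => Cg u v k * y ^ k := by
  have hs0 : Summable fun k => CL u v 0 k * d ^ k :=
    hs.congr fun k => by rw [CL_level_zero]
  set ε : ℝ := 1 / (8 * (d + 1)) with hε_def
  have hε : 0 < ε := by positivity
  have hεx : 4 * ε * (d + 1) ≤ 2⁻¹ := by
    have heq : 4 * ε * (d + 1) = 2⁻¹ := by
      rw [hε_def]
      have hne : (d + 1 : ℝ) ≠ 0 := by positivity
      field_simp
      ring
    exact le_of_eq heq
  obtain ⟨j0, hj0⟩ : ∃ j0, ∀ j, j0 ≤ j → u j * v j < ε := by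
    have := (Filter.Tendsto.eventually_lt_const hε ha)
    rw [Filter.eventually_atTop] at this
    exact this
  by_cases hzero : ∃ l, l < j0 ∧ u l * v l = 0
  · -- minimal zero level
    have hex : ∃ l, u l * v l = 0 := ⟨hzero.choose, hzero.choose_spec.2⟩
    classical
    set l0 := Nat.find hex with hl0_def
    have hl0 : u l0 * v l0 = 0 := Nat.find_spec hex
    have hpos : ∀ l, l < l0 → 0 < u l * v l := by
      intro l hl
      have hne := Nat.find_min hex hl
      exact lt_of_le_of_ne (mul_nonneg (hu l) (hv l)) (Ne.symm hne)
    have hbase : ∃ yb, d < yb ∧ Summable fun k => CL u v l0 k * yb ^ k :=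
      ⟨d + 1, by linarith, CL_summable_of_zero u v l0 hl0 (d + 1)⟩
    obtain ⟨y, hy, hsy⟩ := chain l0 u v hu hv hpos d hd hs0 hbase
    exact ⟨y, hy, hsy.congr fun k => by rw [CL_level_zero]⟩
  · push_neg at hzero
    have hpos : ∀ l, l < j0 → 0 < u l * v l := fun l hl =>
      lt_of_le_of_ne (mul_nonneg (hu l) (hv l)) (Ne.symm (hzero l hl))
    have hbase : ∃ yb, d < yb ∧ Summable fun k => CL u v j0 k * yb ^ k := by
      refine ⟨d + 1, by linarith, ?_⟩
      have hCLuS : ∀ j k, CL u v j k = CL u v j k := fun _ _ => rfl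
      have := CL_base_summable (uS u j0) (uS v j0) (fun i => hu _) (fun i => hv _)
        0 ε (d + 1) hε.le (by linarith) hεx
        (fun j _ => (hj0 (j + j0) (by omega)).le)
      -- this : Summable fun k => CL (uS u j0) (uS v j0) 0 k * (d+1)^k
      refine this.congr fun k => ?_
      rw [CL_level_zero]
      rfl
    obtain ⟨y, hy, hsy⟩ := chain j0 u v hu hv hpos d hd hs0 hbase
    exact ⟨y, hy, hsy.congr fun k => by rw [CL_level_zero]⟩

-- Part 10: main theorem
lemma uWt_nonneg (lam rho : ℕ → ℝ) (hlam : ∀ i, 1 ≤ i → 0 ≤ lam i)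
    (hrho : ∀ i, 1 ≤ i → 0 ≤ rho i) (i : ℕ) : 0 ≤ uWt lam rho i := by
  rw [uWt]
  have hD : 0 ≤ Dd rho (i + 1) :=
    Finset.sum_nonneg fun m hm => hrho m (Finset.mem_Icc.mp hm).1
  have hl := hlam (i + 1) (by omega)
  apply div_nonneg hl
  linarith

lemma vWt_nonneg (lam rho : ℕ → ℝ) (hlam : ∀ i, 1 ≤ i → 0 ≤ lam i)
    (hrho : ∀ i, 1 ≤ i → 0 ≤ rho i) (i : ℕ) : 0 ≤ vWt lam rho i := by
  rw [vWt]
  have hD : 0 ≤ Dd rho (i + 2) :=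
    Finset.sum_nonneg fun m hm => hrho m (Finset.mem_Icc.mp hm).1
  have hl := hlam (i + 2) (by omega)
  apply div_nonneg zero_le_one
  linarith

theorem M_le_iff_diverges' (lam rho : ℕ → ℝ)
    (hlam : ∀ i, 1 ≤ i → 0 ≤ lam i) (hrho : ∀ i, 1 ≤ i → 0 ≤ rho i)
    (ha : Tendsto (fun j => uWt lam rho j * vWt lam rho j) atTop (nhds 0))
    (d : ℝ) (hd : 0 < d) :
    radiusM lam rho ≤ ENNReal.ofReal d ↔ ¬ Summable (fun k => Ck lam rho k * d ^ k) := by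
  have hu := uWt_nonneg lam rho hlam hrho
  have hv := vWt_nonneg lam rho hlam hrho
  have hCk : ∀ k, Ck lam rho k = Cg (uWt lam rho) (vWt lam rho) k := Ck_eq_Cg lam rho
  have hCnn : ∀ k, 0 ≤ Ck lam rho k := fun k =>
    (hCk k) ▸ Cg_nonneg _ _ hu hv k
  have hnorm : ∀ n, ‖gSeries lam rho n‖ = Ck lam rho n := by
    intro n
    show ‖FormalMultilinearSeries.ofScalars ℂ (fun k => (Ck lam rho k : ℂ)) n‖ = _
    rw [FormalMultilinearSeries.ofScalars_norm, Complex.norm_real, Real.norm_eq_abs,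
      abs_of_nonneg (hCnn n)]
  constructor
  · intro hle hsum
    obtain ⟨y, hy, hsy⟩ := key_lemma (uWt lam rho) (vWt lam rho) hu hv ha d hd
      (hsum.congr fun k => by rw [hCk k])
    have hy0 : 0 < y := hd.trans hy
    have hsn : Summable fun n => ‖gSeries lam rho n‖ * (y.toNNReal : ℝ) ^ n := by
      refine hsy.congr fun n => ?_
      rw [hnorm n, Real.coe_toNNReal y hy0.le, hCk n]
    have hrad : (y.toNNReal : ENNReal) ≤ radiusM lam rho :=
      FormalMultilinearSeries.le_radius_of_summable_norm (gSeries lam rho) hsn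
    have hlt : ENNReal.ofReal d < ENNReal.ofReal y :=
      (ENNReal.ofReal_lt_ofReal_iff hy0).mpr hy
    have hoy : ENNReal.ofReal y = (y.toNNReal : ENNReal) := rfl
    rw [hoy] at hlt
    exact absurd (lt_of_lt_of_le hlt hrad) (not_lt.mpr hle)
  · intro hns
    by_contra hlt
    have hlt' : (d.toNNReal : ENNReal) < (gSeries lam rho).radius := by
      have : ENNReal.ofReal d < radiusM lam rho := not_le.mp hlt
      exact this
    have hsn := FormalMultilinearSeries.summable_norm_mul_pow (gSeries lam rho) hlt'
    apply hns
    refine hsn.congr fun n => ?_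
    rw [hnorm n, Real.coe_toNNReal d hd.le]


/-- **Lemma 3.3.** If `a_j = u(j)v(j) → 0`, then for every real `d > 0`:
`M ≤ d` if and only if the series `g(d) = Σ_k C_k d^k` diverges. -/
theorem M_le_iff_diverges (lam rho : ℕ → ℝ)
    (hlam : ∀ i, 1 ≤ i → 0 ≤ lam i) (hrho : ∀ i, 1 ≤ i → 0 ≤ rho i)
    (ha : Tendsto (fun j => uWt lam rho j * vWt lam rho j) atTop (nhds 0))
    (d : ℝ) (hd : 0 < d) :
    radiusM lam rho ≤ ENNReal.ofReal d ↔ ¬ Summable (fun k => Ck lam rho k * d ^ k) := by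
  exact M_le_iff_diverges' lam rho hlam hrho ha d hd
end

section
/- (Divergence at the radius for meromorphically extendable nonnegative series) Let Σ_{n≥0} a_n z^n be a power series with real coefficients a_n ≥ 0 and radius of convergence M ∈ (0, ∞), and suppose there exists a function F meromorphic on ℂ that agrees with the sum of the series on {|z| < M}. Then Σ_{n≥0} a_n M^n = ∞. -/
open Filter Finset Topology NNReal ENNReal

/-- Binomial re-expansion table: the coefficient of `y^k` in `a n * (x0 + y)^n`. -/
noncomputable def auxDD (a : ℕ → ℝ) (x0 : ℝ) (n k : ℕ) : ℝ :=
  if k ≤ n then (n.choose k : ℝ) * a n * x0 ^ (n - k) else 0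

/-- Coefficients of the re-expanded power series at `x0`. -/
noncomputable def auxCC (a : ℕ → ℝ) (x0 : ℝ) (k : ℕ) : ℝ := ∑' n, auxDD a x0 n k

lemma auxDD_nonneg {a : ℕ → ℝ} {x0 : ℝ} (ha : ∀ n, 0 ≤ a n) (hx0 : 0 ≤ x0) (n k : ℕ) :
    0 ≤ auxDD a x0 n k := by
  unfold auxDD; split
  · exact mul_nonneg (mul_nonneg (Nat.cast_nonneg _) (ha n)) (pow_nonneg hx0 _)
  · exact le_refl 0

lemma auxDD_eq_zero {a : ℕ → ℝ} {x0 : ℝ} {n k : ℕ} (h : ¬ k ≤ n) : auxDD a x0 n k = 0 :=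
  if_neg h

lemma auxCC_nonneg {a : ℕ → ℝ} {x0 : ℝ} (ha : ∀ n, 0 ≤ a n) (hx0 : 0 ≤ x0) (k : ℕ) :
    0 ≤ auxCC a x0 k := tsum_nonneg fun n => auxDD_nonneg ha hx0 n k

lemma auxRow_sum_real (a : ℕ → ℝ) (x0 r : ℝ) (n : ℕ) :
    ∑ k ∈ range (n + 1), auxDD a x0 n k * r ^ k = a n * (x0 + r) ^ n := by
  rw [add_comm x0 r, add_pow, Finset.mul_sum]
  refine Finset.sum_congr rfl fun k hk => ?_
  rw [Finset.mem_range, Nat.lt_succ_iff] at hk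
  rw [auxDD, if_pos hk]; ring

lemma auxRow_hasSum_complex (a : ℕ → ℝ) (x0 : ℝ) (n : ℕ) (y : ℂ) :
    HasSum (fun k => ((auxDD a x0 n k : ℝ) : ℂ) * y ^ k)
      ((a n : ℂ) * (((x0 : ℝ) : ℂ) + y) ^ n) := by
  have h0 : ∀ k ∉ range (n + 1), ((auxDD a x0 n k : ℝ) : ℂ) * y ^ k = 0 := by
    intro k hk
    rw [Finset.mem_range, Nat.lt_succ_iff] at hk
    rw [auxDD_eq_zero hk]; simp
  have h := hasSum_sum_of_ne_finset_zero (L := SummationFilter.unconditional ℕ) h0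
  convert h using 1
  rw [add_comm ((x0 : ℝ) : ℂ) y, add_pow, Finset.mul_sum]
  refine (Finset.sum_congr rfl fun k hk => ?_).symm
  rw [Finset.mem_range, Nat.lt_succ_iff] at hk
  rw [auxDD, if_pos hk]; push_cast; ring

/-- Pringsheim rearrangement: the re-expanded series at `x0 ≥ 0` has nonnegative coefficients
`auxCC` and sums to the original series, as long as `∑ a n (x0 + r)^n` converges. -/
lemma auxKey {a : ℕ → ℝ} {x0 r : ℝ} (ha : ∀ n, 0 ≤ a n) (hx0 : 0 ≤ x0) (hr : 0 < r)
    (hs : Summable fun n => a n * (x0 + r) ^ n) :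
    (∀ k, Summable fun n => auxDD a x0 n k) ∧
      ∀ y : ℂ, ‖y‖ ≤ r → HasSum (fun k => ((auxCC a x0 k : ℝ) : ℂ) * y ^ k)
        (∑' n, (a n : ℂ) * (((x0 : ℝ) : ℂ) + y) ^ n) := by
  have hddn := auxDD_nonneg ha hx0
  have hg : Summable (fun p : ℕ × ℕ => auxDD a x0 p.1 p.2 * r ^ p.2) := by
    rw [summable_prod_of_nonneg (fun p => mul_nonneg (hddn p.1 p.2) (pow_nonneg hr.le p.2))]
    constructor
    · intro n
      refine summable_of_ne_finset_zero (s := range (n + 1)) fun k hk => ?_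
      rw [Finset.mem_range, Nat.lt_succ_iff] at hk
      rw [auxDD_eq_zero hk, zero_mul]
    · refine hs.congr fun n => ?_
      rw [tsum_eq_sum (s := range (n + 1)) (fun k hk => ?_), auxRow_sum_real]
      rw [Finset.mem_range, Nat.lt_succ_iff] at hk
      rw [auxDD_eq_zero hk, zero_mul]
  have hcol : ∀ k, Summable fun n => auxDD a x0 n k := by
    intro k
    have h1 : Summable fun n => auxDD a x0 n k * r ^ k := hg.prod_symm.prod_factor k
    have h2 := h1.mul_right (r ^ k)⁻¹
    refine h2.congr fun n => ?_
    field_simp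
  refine ⟨hcol, fun y hy => ?_⟩
  have hf : Summable (fun p : ℕ × ℕ => ((auxDD a x0 p.1 p.2 : ℝ) : ℂ) * y ^ p.2) := by
    refine Summable.of_norm_bounded hg fun p => ?_
    rw [norm_mul, norm_pow, Complex.norm_real, Real.norm_of_nonneg (hddn p.1 p.2)]
    exact mul_le_mul_of_nonneg_left (pow_le_pow_left₀ (norm_nonneg y) hy p.2) (hddn p.1 p.2)
  set T := ∑' p : ℕ × ℕ, ((auxDD a x0 p.1 p.2 : ℝ) : ℂ) * y ^ p.2 with hT
  have hfT : HasSum (fun p : ℕ × ℕ => ((auxDD a x0 p.1 p.2 : ℝ) : ℂ) * y ^ p.2) T := hf.hasSum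
  have hrows : HasSum (fun n => (a n : ℂ) * (((x0 : ℝ) : ℂ) + y) ^ n) T :=
    hfT.prod_fiberwise fun n => auxRow_hasSum_complex a x0 n y
  have hswap : HasSum (fun p : ℕ × ℕ => ((auxDD a x0 p.2 p.1 : ℝ) : ℂ) * y ^ p.1) T :=
    ((Equiv.prodComm ℕ ℕ).hasSum_iff).2 hfT
  have hcols : ∀ k, HasSum (fun n => ((auxDD a x0 n k : ℝ) : ℂ) * y ^ k)
      (((auxCC a x0 k : ℝ) : ℂ) * y ^ k) := by
    intro k
    have h1 : Summable fun n => ((auxDD a x0 n k : ℝ) : ℂ) :=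
      (Complex.summable_ofReal).2 (hcol k)
    have h2 := (h1.hasSum).mul_right (y ^ k)
    rwa [← Complex.ofReal_tsum] at h2
  have hfin := hswap.prod_fiberwise hcols
  exact hrows.tsum_eq ▸ hfin

/-- Final step: summability of the re-expanded series at `t` gives summability of the original
series at `x0 + t`. -/
lemma auxFinal {a : ℕ → ℝ} {x0 t : ℝ} (ha : ∀ n, 0 ≤ a n) (hx0 : 0 ≤ x0) (ht : 0 ≤ t)
    (hcol : ∀ k, Summable fun n => auxDD a x0 n k)
    (hcc : Summable fun k => auxCC a x0 k * t ^ k) :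
    Summable fun n => a n * (x0 + t) ^ n := by
  refine summable_of_sum_range_le
    (c := ∑' k, auxCC a x0 k * t ^ k)
    (fun n => mul_nonneg (ha n) (pow_nonneg (by linarith) n)) fun N => ?_
  have h1 : ∀ n ∈ range N, a n * (x0 + t) ^ n = ∑ k ∈ range N, auxDD a x0 n k * t ^ k := by
    intro n hn
    rw [Finset.mem_range] at hn
    rw [← auxRow_sum_real a x0 t n]
    refine Finset.sum_subset (Finset.range_subset_range.2 hn) fun k hk hk' => ?_
    rw [Finset.mem_range, Nat.lt_succ_iff] at hk'
    rw [auxDD_eq_zero hk', zero_mul]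
  calc ∑ n ∈ range N, a n * (x0 + t) ^ n
      = ∑ n ∈ range N, ∑ k ∈ range N, auxDD a x0 n k * t ^ k := Finset.sum_congr rfl h1
    _ = ∑ k ∈ range N, (∑ n ∈ range N, auxDD a x0 n k) * t ^ k := by
        rw [Finset.sum_comm]
        exact Finset.sum_congr rfl fun k _ => (Finset.sum_mul _ _ _).symm
    _ ≤ ∑ k ∈ range N, auxCC a x0 k * t ^ k := by
        refine Finset.sum_le_sum fun k _ => ?_
        exact mul_le_mul_of_nonneg_right
          (Summable.sum_le_tsum (range N) (fun n _ => auxDD_nonneg ha hx0 n k) (hcol k))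
          (pow_nonneg ht k)
    _ ≤ ∑' k, auxCC a x0 k * t ^ k :=
        Summable.sum_le_tsum (range N)
          (fun k _ => mul_nonneg (auxCC_nonneg ha hx0 k) (pow_nonneg ht k)) hcc

/-- A function meromorphic at `M` which is bounded on the real segment `(0, M)` has an analytic
extension at `M` (no pole, no essential singularity). -/
lemma auxMeroNoPole {F : ℂ → ℂ} {M C : ℝ} (hM : 0 < M)
    (hFm : MeromorphicAt F (M : ℂ))
    (hbd : ∀ x : ℝ, 0 < x → x < M → ‖F ((x : ℝ) : ℂ)‖ ≤ C) :
    ∃ g : ℂ → ℂ, AnalyticAt ℂ g (M : ℂ) ∧ ∀ᶠ z in 𝓝[≠] (M : ℂ), F z = g z := by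
  obtain ⟨n, g0, hg0, heq⟩ := MeromorphicAt.iff_eventuallyEq_zpow_smul_analyticAt.mp hFm
  by_cases htop : analyticOrderAt g0 (M : ℂ) = ⊤
  · refine ⟨0, analyticAt_const, ?_⟩
    have h0 : ∀ᶠ z in 𝓝 (M : ℂ), g0 z = 0 := analyticOrderAt_eq_top.mp htop
    filter_upwards [heq, h0.filter_mono nhdsWithin_le_nhds] with z h1 h2
    simp [h1, h2]
  · obtain ⟨g1, hg1, hg1ne, hg1eq⟩ := (hg0.analyticOrderAt_eq_natCast (n := (analyticOrderAt g0 (M : ℂ)).toNat)).mp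
      (ENat.coe_toNat htop).symm
    set m : ℕ := (analyticOrderAt g0 (M : ℂ)).toNat with hm
    set k : ℤ := n + m with hkdef
    have heq2 : ∀ᶠ z in 𝓝[≠] (M : ℂ), F z = (z - M) ^ k • g1 z := by
      filter_upwards [heq, hg1eq.filter_mono nhdsWithin_le_nhds, self_mem_nhdsWithin]
        with z h1 h2 hz
      have hzM : z - (M : ℂ) ≠ 0 := sub_ne_zero.mpr hz
      rw [h1, h2, smul_smul, hkdef, zpow_add₀ hzM, zpow_natCast]
    by_cases hk : 0 ≤ k
    · lift k to ℕ using hk with k0 hk0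
      refine ⟨fun z => (z - M) ^ k0 • g1 z,
        ((analyticAt_id.sub analyticAt_const).pow k0).smul hg1, ?_⟩
      filter_upwards [heq2] with z h1
      rw [h1, zpow_natCast]
    · exfalso
      push_neg at hk
      have hk1 : k ≤ -1 := by omega
      have hg1pos : 0 < ‖g1 (M : ℂ)‖ := norm_pos_iff.2 hg1ne
      have hcoe : Filter.Tendsto (fun x : ℝ => (x : ℂ)) (𝓝[<] M) (𝓝[≠] (M : ℂ)) := by
        refine tendsto_nhdsWithin_of_tendsto_nhds_of_eventually_within _
          ((Complex.continuous_ofReal.tendsto M).mono_left nhdsWithin_le_nhds) ?_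
        filter_upwards [self_mem_nhdsWithin] with x hx
        simp only [Set.mem_compl_iff, Set.mem_singleton_iff, Complex.ofReal_inj]
        exact ne_of_lt hx
      have E1 := hcoe.eventually heq2
      have E3 : ∀ᶠ x : ℝ in 𝓝[<] M, ‖g1 (M : ℂ)‖ / 2 < ‖g1 ((x : ℝ) : ℂ)‖ := by
        have hg1c : Filter.Tendsto (fun x : ℝ => ‖g1 ((x : ℝ) : ℂ)‖) (𝓝[<] M)
            (𝓝 ‖g1 (M : ℂ)‖) :=
          (hg1.continuousAt.tendsto.comp
            ((Complex.continuous_ofReal.tendsto M).mono_left nhdsWithin_le_nhds)).norm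
        exact hg1c.eventually (eventually_gt_nhds (half_lt_self hg1pos))
      have E4 : ∀ᶠ x : ℝ in 𝓝[<] M, |x - M| < min 1 (‖g1 (M : ℂ)‖ / (2 * (|C| + 1))) :=
        (eventually_abs_sub_lt M (by positivity)).filter_mono nhdsWithin_le_nhds
      have E5 : ∀ᶠ x : ℝ in 𝓝[<] M, 0 < x :=
        (eventually_gt_nhds hM).filter_mono nhdsWithin_le_nhds
      have E6 : ∀ᶠ x : ℝ in 𝓝[<] M, x < M := eventually_mem_nhdsWithin
      obtain ⟨x, h1, h3, h4, h5, h6⟩ := (E1.and (E3.and (E4.and (E5.and E6)))).exists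
      set e : ℝ := M - x with he
      have he0 : 0 < e := by simp only [he, sub_pos]; exact h6
      have habs : |x - M| = e := by rw [abs_sub_comm, abs_of_pos he0]
      rw [habs, lt_min_iff] at h4
      have he1 : e ≤ 1 := h4.1.le
      have hnorm : ‖((x : ℝ) : ℂ) - (M : ℂ)‖ = e := by
        rw [← Complex.ofReal_sub, Complex.norm_real, Real.norm_eq_abs, abs_sub_comm,
          abs_of_pos he0]
      have hFx : ‖F ((x : ℝ) : ℂ)‖ = e ^ k * ‖g1 ((x : ℝ) : ℂ)‖ := by
        rw [h1, norm_smul, norm_zpow, hnorm]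
      have hzpow : e ^ (-1 : ℤ) ≤ e ^ k := zpow_le_zpow_right_of_le_one₀ he0 he1 hk1
      have hzinv : e ^ (-1 : ℤ) = e⁻¹ := zpow_neg_one e
      have hA : e * (2 * (|C| + 1)) < ‖g1 (M : ℂ)‖ :=
        (lt_div_iff₀ (by positivity)).mp h4.2
      have hB : |C| + 1 < e⁻¹ * (‖g1 (M : ℂ)‖ / 2) := by
        have h7 : e * (|C| + 1) < ‖g1 (M : ℂ)‖ / 2 := by nlinarith [hA]
        have h8 := mul_lt_mul_of_pos_left h7 (inv_pos.2 he0)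
        rwa [← mul_assoc, inv_mul_cancel₀ he0.ne', one_mul] at h8
      have hC2 : e⁻¹ * (‖g1 (M : ℂ)‖ / 2) ≤ ‖F ((x : ℝ) : ℂ)‖ := by
        rw [hFx, ← hzinv]
        exact mul_le_mul hzpow h3.le (by positivity) (zpow_nonneg he0.le _)
      have hCb := hbd x h5 h6
      have hCabs : C ≤ |C| := le_abs_self C
      linarith

/-- Geometry: a disk centered at `M - ε` of radius `ε + η` is contained in the union of the
disk of radius `M` at `0` and the disk of radius `δ` at `M`. -/
lemma auxGeom {M δ ε η : ℝ} (hM : 0 < M) (hδ : 0 < δ) (hε : 0 < ε) (hη : 0 < η)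
    (hεδ : ε ≤ δ / 2) (hεM : ε ≤ M / 2) (hηε : η ≤ ε) (hηδ : η ≤ δ / 4)
    (z : ℂ) (hz1 : ‖z - ((M - ε : ℝ) : ℂ)‖ ≤ ε + η) (hz2 : ¬ ‖z‖ < M) :
    ‖z - ((M : ℝ) : ℂ)‖ < δ := by
  push_neg at hz2
  have h1 : (z.re - (M - ε)) ^ 2 + z.im ^ 2 ≤ (ε + η) ^ 2 := by
    have h := pow_le_pow_left₀ (norm_nonneg _) hz1 2
    rw [Complex.sq_norm] at h
    simpa [Complex.normSq_apply, Complex.sub_re, Complex.sub_im, Complex.ofReal_re,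
      Complex.ofReal_im, pow_two] using h
  have h2 : M ^ 2 ≤ z.re ^ 2 + z.im ^ 2 := by
    have h := pow_le_pow_left₀ hM.le hz2 2
    rw [Complex.sq_norm] at h
    simpa [Complex.normSq_apply, pow_two] using h
  have hx0 : 0 < M - ε := by linarith
  have P1 : M * ((z.re - (M - ε)) ^ 2 + z.im ^ 2) ≤ M * (ε + η) ^ 2 :=
    mul_le_mul_of_nonneg_left h1 hM.le
  have P2 : ε * M ^ 2 ≤ ε * (z.re ^ 2 + z.im ^ 2) := mul_le_mul_of_nonneg_left h2 hε.le
  have step1 : (M - ε) * ((z.re - M) ^ 2 + z.im ^ 2) ≤ M * ((ε + η) ^ 2 - ε ^ 2) := by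
    nlinarith [P1, P2]
  have Q : η * η ≤ ε * η := mul_le_mul_of_nonneg_right hηε hη.le
  have Q2 : ε * η ≤ (δ / 2) * (δ / 4) := mul_le_mul hεδ hηδ hη.le (by positivity)
  have step2 : M * ((ε + η) ^ 2 - ε ^ 2) ≤ M * (3 * ((δ / 2) * (δ / 4))) := by
    have h3 : (ε + η) ^ 2 - ε ^ 2 ≤ 3 * ((δ / 2) * (δ / 4)) := by nlinarith [Q, Q2]
    exact mul_le_mul_of_nonneg_left h3 hM.le
  have step3 : M * (3 * ((δ / 2) * (δ / 4))) < (M - ε) * δ ^ 2 := by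
    nlinarith [mul_pos hM (mul_pos hδ hδ), mul_nonneg (sub_nonneg.2 hεM) (sq_nonneg δ)]
  have key : (z.re - M) ^ 2 + z.im ^ 2 < δ ^ 2 :=
    lt_of_mul_lt_mul_left (by linarith) hx0.le
  have hfin : ‖z - ((M : ℝ) : ℂ)‖ ^ 2 < δ ^ 2 := by
    rw [Complex.sq_norm]
    simpa [Complex.normSq_apply, Complex.sub_re, Complex.sub_im, Complex.ofReal_re,
      Complex.ofReal_im, pow_two] using key
  exact lt_of_pow_lt_pow_left₀ 2 hδ.le hfin

/-- **Divergence at the radius for meromorphically extendable nonnegative series.**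
If `Σ aₙ zⁿ` has nonnegative real coefficients, radius of convergence `M ∈ (0, ∞)`, and
its sum extends to a function meromorphic on `ℂ`, then `Σ aₙ Mⁿ = ∞`. -/
theorem diverges_at_radius (a : ℕ → ℝ) (ha : ∀ n, 0 ≤ a n) (M : ℝ) (hM : 0 < M)
    (hconv : ∀ r : ℝ, 0 ≤ r → r < M → Summable fun n => a n * r ^ n)
    (hdiv : ∀ r : ℝ, M < r → ¬ Summable fun n => a n * r ^ n)
    (F : ℂ → ℂ) (hF : MeromorphicOn F (Set.univ : Set ℂ))
    (hagree : ∀ z : ℂ, ‖z‖ < M → F z = ∑' n, (a n : ℂ) * z ^ n) :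
    ¬ Summable fun n => a n * M ^ n := by
  intro h
  set S : ℂ → ℂ := fun z => ∑' n, (a n : ℂ) * z ^ n with hSdef
  -- boundedness of F on the real segment (0, M)
  have hC : ∀ x : ℝ, 0 < x → x < M → ‖F ((x : ℝ) : ℂ)‖ ≤ ∑' n, a n * M ^ n := by
    intro x hx0 hxM
    have hxn : ‖((x : ℝ) : ℂ)‖ < M := by
      rwa [Complex.norm_real, Real.norm_eq_abs, abs_of_pos hx0]
    rw [hagree _ hxn]
    have hsx : Summable fun n => a n * x ^ n := hconv x hx0.le hxM
    have hnorm : (fun n => ‖(a n : ℂ) * ((x : ℝ) : ℂ) ^ n‖) = fun n => a n * x ^ n := by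
      funext n
      rw [norm_mul, norm_pow, Complex.norm_real, Complex.norm_real, Real.norm_eq_abs,
        Real.norm_eq_abs, abs_of_nonneg (ha n), abs_of_pos hx0]
    calc ‖∑' n, (a n : ℂ) * ((x : ℝ) : ℂ) ^ n‖
        ≤ ∑' n, ‖(a n : ℂ) * ((x : ℝ) : ℂ) ^ n‖ :=
          norm_tsum_le_tsum_norm (by rw [hnorm]; exact hsx)
      _ = ∑' n, a n * x ^ n := by rw [hnorm]
      _ ≤ ∑' n, a n * M ^ n := by
          refine Summable.tsum_le_tsum (fun n => ?_) hsx h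
          exact mul_le_mul_of_nonneg_left (pow_le_pow_left₀ hx0.le hxM.le n) (ha n)
  -- analytic extension g of F at M
  obtain ⟨g, hg_an, hg_ev⟩ := auxMeroNoPole hM (hF (M : ℂ) (Set.mem_univ _)) hC
  obtain ⟨δ0, hδ0, hg_on⟩ := hg_an.exists_ball_analyticOnNhd
  have hg_ev' : ∀ᶠ z in 𝓝 ((M : ℝ) : ℂ), z ∈ ({((M : ℝ) : ℂ)}ᶜ : Set ℂ) → F z = g z :=
    eventually_nhdsWithin_iff.mp hg_ev
  obtain ⟨δ1, hδ1, hball1⟩ := Metric.eventually_nhds_iff_ball.mp hg_ev'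
  set δ : ℝ := min δ0 δ1 with hδdef
  have hδ : 0 < δ := lt_min hδ0 hδ1
  -- S is analytic on the open disk of radius M
  set p := FormalMultilinearSeries.ofScalars ℂ (fun n => (a n : ℂ)) with hpdef
  have hpnorm : ∀ n, ‖p n‖ = a n := by
    intro n
    rw [hpdef, FormalMultilinearSeries.ofScalars_norm, Complex.norm_real,
      Real.norm_eq_abs, abs_of_nonneg (ha n)]
  have hrad : (M.toNNReal : ℝ≥0∞) ≤ p.radius := by
    apply p.le_radius_of_summable_norm
    refine h.congr fun n => ?_
    rw [hpnorm, Real.coe_toNNReal _ hM.le]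
  have hradpos : 0 < p.radius := by
    refine lt_of_lt_of_le ?_ hrad
    simp [Real.toNNReal_pos.2 hM]
  have hpsum : p.sum = S := by
    funext z
    rw [hSdef]
    exact (FormalMultilinearSeries.ofScalars_sum_eq (fun n => (a n : ℂ)) z).trans
      (tsum_congr fun n => by rw [smul_eq_mul])
  have hS_an : ∀ z : ℂ, ‖z‖ < M → AnalyticAt ℂ S z := by
    intro z hz
    have hz' : z ∈ Metric.eball (0 : ℂ) p.radius := by
      rw [EMetric.mem_ball, edist_eq_enorm_sub, enorm_eq_nnnorm, sub_zero]
      refine lt_of_lt_of_le ?_ hrad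
      rw [ENNReal.coe_lt_coe, ← NNReal.coe_lt_coe, coe_nnnorm, Real.coe_toNNReal _ hM.le]
      exact hz
    exact hpsum ▸ ((p.hasFPowerSeriesOnBall hradpos).analyticOnNhd z hz')
  -- constants
  set ε : ℝ := min (δ / 2) (M / 2) with hεdef
  have hεpos : 0 < ε := lt_min (by linarith) (by linarith)
  have hεδ : ε ≤ δ / 2 := min_le_left _ _
  have hεM : ε ≤ M / 2 := min_le_right _ _
  set η : ℝ := min ε (δ / 4) with hηdef
  have hηpos : 0 < η := lt_min hεpos (by linarith)
  have hηε : η ≤ ε := min_le_left _ _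
  have hηδ : η ≤ δ / 4 := min_le_right _ _
  set x0 : ℝ := M - ε with hx0def
  have hx0pos : 0 < x0 := by simp only [hx0def]; linarith
  have hx0M : x0 < M := by simp only [hx0def]; linarith
  set x0c : ℂ := ((x0 : ℝ) : ℂ) with hx0cdef
  -- the glued function H
  set H : ℂ → ℂ := fun z => if ‖z‖ < M then S z else g z with hHdef
  have hHS : ∀ z : ℂ, ‖z‖ < M → H z = S z := fun z hz => if_pos hz
  have hSg : ∀ z : ℂ, ‖z‖ < M → dist z ((M : ℝ) : ℂ) < δ → S z = g z := by
    intro z h1 h2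
    have hzM : z ∈ ({((M : ℝ) : ℂ)}ᶜ : Set ℂ) := by
      simp only [Set.mem_compl_iff, Set.mem_singleton_iff]
      intro hc
      rw [hc, Complex.norm_real, Real.norm_eq_abs, abs_of_pos hM] at h1
      exact lt_irrefl M h1
    have hFg := hball1 z (Metric.mem_ball.mpr (lt_of_lt_of_le h2 (min_le_right _ _))) hzM
    have hFS : S z = F z := (hagree z h1).symm
    rw [hFS]
    exact hFg
  have hHg : ∀ z ∈ Metric.ball ((M : ℝ) : ℂ) δ, H z = g z := by
    intro z hz
    rw [hHdef]
    by_cases h1 : ‖z‖ < M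
    · simp only [if_pos h1]
      exact hSg z h1 (Metric.mem_ball.mp hz)
    · simp only [if_neg h1]
  -- differentiability of H on the closed disk around x0
  set Rr : ℝ := ε + η with hRrdef
  have hRpos : 0 < Rr := by positivity
  set Rnn : ℝ≥0 := Rr.toNNReal with hRnndef
  have hRnnpos : 0 < Rnn := Real.toNNReal_pos.2 hRpos
  have hdiff : DifferentiableOn ℂ H (Metric.closedBall x0c Rnn) := by
    intro z hz
    rw [Metric.mem_closedBall, dist_eq_norm] at hz
    have hz1 : ‖z - ((M - ε : ℝ) : ℂ)‖ ≤ ε + η := by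
      have : (Rnn : ℝ) = Rr := Real.coe_toNNReal _ hRpos.le
      rw [this] at hz
      simpa [hx0cdef, hx0def] using hz
    by_cases h1 : ‖z‖ < M
    · have hev : H =ᶠ[𝓝 z] S := by
        have hop : IsOpen {w : ℂ | ‖w‖ < M} := isOpen_lt continuous_norm continuous_const
        filter_upwards [hop.mem_nhds h1] with w hw
        exact hHS w hw
      exact ((hS_an z h1).congr hev.symm).differentiableAt.differentiableWithinAt
    · have h2 : z ∈ Metric.ball ((M : ℝ) : ℂ) δ := by
        rw [Metric.mem_ball, dist_eq_norm]
        exact auxGeom hM hδ hεpos hηpos hεδ hεM hηε hηδ z hz1 h1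
      have hg_at : AnalyticAt ℂ g z :=
        hg_on z (Metric.ball_subset_ball (min_le_left _ _) h2)
      have hev : H =ᶠ[𝓝 z] g := by
        filter_upwards [Metric.isOpen_ball.mem_nhds h2] with w hw
        exact hHg w hw
      exact (hg_at.congr hev.symm).differentiableAt.differentiableWithinAt
  have hq := hdiff.hasFPowerSeriesOnBall hRnnpos
  -- the re-expanded series
  have hkey := auxKey (x0 := x0) (r := ε / 2) ha hx0pos.le (by linarith)
    (hconv (x0 + ε / 2) (by linarith) (by simp only [hx0def]; linarith))
  obtain ⟨hcol, hkey2⟩ := hkey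
  set cs := FormalMultilinearSeries.ofScalars ℂ (fun k => ((auxCC a x0 k : ℝ) : ℂ)) with hcsdef
  have hcsnorm : ∀ k, ‖cs k‖ = auxCC a x0 k := by
    intro k
    rw [hcsdef, FormalMultilinearSeries.ofScalars_norm, Complex.norm_real,
      Real.norm_eq_abs, abs_of_nonneg (auxCC_nonneg ha hx0pos.le k)]
  have hsum_half : Summable fun k => auxCC a x0 k * (ε / 2) ^ k := by
    have h1 := (hkey2 (((ε / 2 : ℝ)) : ℂ) (by
      rw [Complex.norm_real, Real.norm_eq_abs, abs_of_pos (by linarith : (0:ℝ) < ε / 2)]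
      )).summable
    rw [← Complex.summable_ofReal]
    refine h1.congr fun k => ?_
    push_cast
    ring
  have hcs_ball : HasFPowerSeriesOnBall S cs x0c (ENNReal.ofReal (ε / 2)) := by
    constructor
    · have h1 : Summable fun k => ‖cs k‖ * ((ε / 2).toNNReal : ℝ) ^ k := by
        refine hsum_half.congr fun k => ?_
        rw [hcsnorm, Real.coe_toNNReal _ (by linarith : (0:ℝ) ≤ ε / 2)]
      have h2 := cs.le_radius_of_summable_norm h1
      rwa [ENNReal.ofReal]
    · exact ENNReal.ofReal_pos.2 (by linarith)
    · intro y hy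
      rw [EMetric.mem_ball, edist_eq_enorm_sub, enorm_eq_nnnorm, sub_zero] at hy
      have hy' : ‖y‖ ≤ ε / 2 := by
        rw [ENNReal.ofReal] at hy
        rw [ENNReal.coe_lt_coe, ← NNReal.coe_lt_coe, coe_nnnorm,
          Real.coe_toNNReal _ (by linarith : (0:ℝ) ≤ ε / 2)] at hy
        exact hy.le
      have h1 := hkey2 y hy'
      have h2 : ∀ k, cs k (fun _ => y) = ((auxCC a x0 k : ℝ) : ℂ) * y ^ k := by
        intro k
        rw [hcsdef, FormalMultilinearSeries.ofScalars_apply_eq, smul_eq_mul]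
      simp only [h2]
      convert h1 using 2
  have hSH_eq : Set.EqOn S H (Metric.eball x0c (ENNReal.ofReal (ε / 2))) := by
    intro z hz
    rw [EMetric.mem_ball, edist_eq_enorm_sub, enorm_eq_nnnorm, ENNReal.ofReal] at hz
    rw [ENNReal.coe_lt_coe, ← NNReal.coe_lt_coe, coe_nnnorm,
      Real.coe_toNNReal _ (by linarith : (0:ℝ) ≤ ε / 2)] at hz
    have hx0cn : ‖x0c‖ = x0 := by
      rw [hx0cdef, Complex.norm_real, Real.norm_eq_abs, abs_of_pos hx0pos]
    have h3 : ‖z‖ ≤ ‖z - x0c‖ + ‖x0c‖ := by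
      calc ‖z‖ = ‖z - x0c + x0c‖ := by rw [sub_add_cancel]
        _ ≤ ‖z - x0c‖ + ‖x0c‖ := norm_add_le _ _
    have hzn : ‖z‖ < M := by
      rw [hx0cn] at h3
      have : x0 = M - ε := hx0def
      linarith
    exact (hHS z hzn).symm
  have hH_ball : HasFPowerSeriesOnBall H cs x0c (ENNReal.ofReal (ε / 2)) :=
    hcs_ball.congr hSH_eq
  have hbig : HasFPowerSeriesOnBall H cs x0c (Rnn : ℝ≥0∞) := hH_ball.exchange_radius hq
  -- summability of cs coefficients just past the radius
  set t : ℝ := ε + η / 2 with htdef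
  have htpos : 0 < t := by positivity
  have htR : t < Rr := by simp only [htdef, hRrdef]; linarith
  have htlt : ((t.toNNReal : ℝ≥0) : ℝ≥0∞) < cs.radius := by
    refine lt_of_lt_of_le ?_ hbig.r_le
    rw [ENNReal.coe_lt_coe, hRnndef]
    rw [Real.toNNReal_lt_toNNReal_iff hRpos]
    exact htR
  have hsum_t : Summable fun k => auxCC a x0 k * t ^ k := by
    have h1 := cs.summable_norm_mul_pow htlt
    refine h1.congr fun k => ?_
    rw [hcsnorm, Real.coe_toNNReal _ htpos.le]
  have hfinal : Summable fun n => a n * (x0 + t) ^ n :=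
    auxFinal ha hx0pos.le htpos.le hcol hsum_t
  refine hdiv (x0 + t) ?_ hfinal
  simp only [hx0def, htdef]
  linarith
end

section
/- (Weight ratio identity for the path modification) Fix sequences λ with λ_i > 0 and ρ with ρ_i ≥ 0, and integers k ≥ 2 and 2 ≤ ℓ ≤ k. For γ ∈ Γ_ℓ^{(k)}, let γ̃ ∈ Γ_2^{(k)} be the path obtained from γ by inserting ℓ−2 consecutive down-steps immediately before the final up-step of γ. Then q(γ) · λ_1 · ∏_{n=3}^{ℓ} (1 + D_n) = q(γ̃) · λ_{ℓ−1} · ∏_{h=1}^{ℓ−2} (1 + λ_h + D_h). Equivalently, q(γ) = q(γ̃) · (λ_{ℓ−1}/λ_1) · (1+λ_1+D_1)(1+λ_2+D_2) / ((1+D_{ℓ−1})(1+D_ℓ)) · ∏_{i=3}^{ℓ−2} (1 + λ_i/(1+D_i)). -/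
open Filter Finset

lemma jwt_append (lam D : ℕ → ℝ) (s t : List Bool) : ∀ j,
    jwt lam D j (s ++ t) = jwt lam D j s * jwt lam D (endH j s) t := by
  induction s with
  | nil => intro j; simp [jwt, endH]
  | cons b s ih => intro j; cases b <;> simp [jwt, endH, ih, mul_assoc]

lemma endH_replicate_false (m c : ℕ) : endH (m + c) (List.replicate m false) = c := by
  induction m generalizing c with
  | zero => simp [endH]
  | succ m ih =>
    have h1 : m + 1 + c - 1 = m + c := by omega
    simpa [List.replicate_succ, endH, h1] using ih c

lemma jwt_replicate_false (lam D : ℕ → ℝ) (m c : ℕ) :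
    jwt lam D (m + c) (List.replicate m false) =
      ∏ i ∈ Finset.Icc (c + 1) (m + c), 1 / (1 + lam i + D i) := by
  induction m generalizing c with
  | zero => simp [jwt]
  | succ m ih =>
    have h1 : m + 1 + c - 1 = m + c := by omega
    have h2 : c + 1 ≤ m + 1 + c := by omega
    rw [show m + 1 + c = (m + c) + 1 from by omega, Finset.prod_Icc_succ_top (by omega : c + 1 ≤ m + c + 1)]
    simp only [List.replicate_succ, jwt]
    rw [show m + c + 1 - 1 = m + c from by omega, ih c]
    ring

/-- **Weight ratio identity for the path modification.** For `γ ∈ Γ_ℓ^{(k)}` and its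
modification `γ̃ ∈ Γ_2^{(k)}` (insert `ℓ−2` down-steps before the final up-step),
`q(γ) · λ₁ · ∏_{n=3}^{ℓ} (1 + D_n) = q(γ̃) · λ_{ℓ−1} · ∏_{h=1}^{ℓ−2} (1 + λ_h + D_h)`,
where `q(γ) = p(γ) σ(ℓ)` and `q(γ̃) = p(γ̃) σ(2)`. -/
theorem weight_ratio_identity (lam rho : ℕ → ℝ)
    (hlam : ∀ i, 1 ≤ i → 0 < lam i) (hrho : ∀ i, 1 ≤ i → 0 ≤ rho i)
    (k l : ℕ) (hk : 2 ≤ k) (hl : 2 ≤ l) (hlk : l ≤ k)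
    (γ : List Bool) (hγ : γ ∈ Gamma k l) :
    jwt lam (Dd rho) 1 γ * sigmaWt rho l * lam 1 *
        (∏ n ∈ Finset.Icc 3 l, (1 + Dd rho n)) =
      jwt lam (Dd rho) 1 (tilde l γ) * sigmaWt rho 2 * lam (l - 1) *
        (∏ h ∈ Finset.Icc 1 (l - 2), (1 + lam h + Dd rho h)) := by
  obtain ⟨hlen, hjump, hend, hlast⟩ := hγ
  have hne : γ ≠ [] := by intro h; rw [h] at hlast; simp at hlast
  have hlast' : γ.getLast hne = true := by
    have := List.getLast?_eq_getLast hne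
    rw [hlast] at this; exact (Option.some_inj.mp this).symm
  have hsplit : γ = γ.dropLast ++ [true] := by
    conv_lhs => rw [← List.dropLast_append_getLast hne, hlast']
  set s := γ.dropLast with hs
  have hendH : endH 1 s = l - 1 := by
    have := hend
    rw [hsplit, endH_append] at this
    simp only [endH] at this
    omega
  -- weights of γ and tilde l γ
  have hγwt : jwt lam (Dd rho) 1 γ =
      jwt lam (Dd rho) 1 s * (lam (l-1) / (1 + lam (l-1) + Dd rho (l-1))) := by
    conv_lhs => rw [hsplit]
    rw [jwt_append, hendH]; simp [jwt]
  have htl : tilde l γ = s ++ (List.replicate (l-2) false ++ [true]) := by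
    simp [tilde, hs, List.append_assoc]
  have hrep : jwt lam (Dd rho) (l-1) (List.replicate (l-2) false) =
      ∏ i ∈ Finset.Icc 2 (l-1), 1 / (1 + lam i + Dd rho i) := by
    have := jwt_replicate_false lam (Dd rho) (l-2) 1
    rw [show l - 2 + 1 = l - 1 from by omega] at this
    exact this
  have hendrep : endH (l-1) (List.replicate (l-2) false) = 1 := by
    have := endH_replicate_false (l-2) 1
    rwa [show l - 2 + 1 = l - 1 from by omega] at this
  have htwt : jwt lam (Dd rho) 1 (tilde l γ) =
      jwt lam (Dd rho) 1 s * ((∏ i ∈ Finset.Icc 2 (l-1), 1 / (1 + lam i + Dd rho i)) *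
        (lam 1 / (1 + lam 1 + Dd rho 1))) := by
    rw [htl, jwt_append, hendH, jwt_append, hrep, hendrep]
    simp [jwt]
  -- positivity
  have hD : ∀ n, 0 ≤ Dd rho n := fun n =>
    Finset.sum_nonneg fun i hi => hrho i (Finset.mem_Icc.mp hi).1
  have hE : ∀ i, 1 ≤ i → (1 + lam i + Dd rho i) ≠ 0 := fun i hi => by
    have := hlam i hi; have := hD i; positivity
  have hDn : ∀ n, (1 + Dd rho n) ≠ 0 := fun n => by have := hD n; positivity
  -- sigma relation
  have hsig : sigmaWt rho l * (∏ n ∈ Finset.Icc 3 l, (1 + Dd rho n)) = sigmaWt rho 2 := by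
    unfold sigmaWt
    have hsplit2 : Finset.Icc 1 l = Finset.Icc 1 2 ∪ Finset.Icc 3 l := by
      ext x; simp [Finset.mem_Icc]; omega
    rw [hsplit2, Finset.prod_union (by
      simp [Finset.disjoint_left, Finset.mem_Icc]; omega)]
    rw [mul_assoc, ← Finset.prod_mul_distrib]
    have : ∀ n ∈ Finset.Icc 3 l, 1 / (1 + Dd rho n) * (1 + Dd rho n) = 1 := fun n _ =>
      one_div_mul_cancel (hDn n)
    rw [Finset.prod_congr rfl this]
    simp
  -- product relation
  have hE1 : (1 + lam 1 + Dd rho 1) ≠ 0 := hE 1 le_rfl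
  have hEl : (1 + lam (l-1) + Dd rho (l-1)) ≠ 0 := hE (l-1) (by omega)
  have key : (∏ i ∈ Finset.Icc 2 (l-1), 1 / (1 + lam i + Dd rho i)) *
      (∏ h ∈ Finset.Icc 1 (l-2), (1 + lam h + Dd rho h)) * (1 + lam (l-1) + Dd rho (l-1)) =
      (1 + lam 1 + Dd rho 1) := by
    rcases eq_or_lt_of_le hl with h2 | h3
    · subst h2; simp
    · have h3' : 3 ≤ l := h3
      have e1 : Finset.Icc 2 (l-1) = Finset.Icc 2 ((l-2)+1) := by
        congr 1; omega
      have e2 : Finset.Icc 1 (l-2) = insert 1 (Finset.Icc 2 (l-2)) := by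
        ext x; simp [Finset.mem_Icc]; omega
      rw [e1, Finset.prod_Icc_succ_top (by omega : 2 ≤ (l-2)+1), e2,
        Finset.prod_insert (by simp), show (l:ℕ) - 2 + 1 = l - 1 from by omega]
      have hcancel : (∏ i ∈ Finset.Icc 2 (l-2), 1 / (1 + lam i + Dd rho i)) *
          (∏ h ∈ Finset.Icc 2 (l-2), (1 + lam h + Dd rho h)) = 1 := by
        rw [← Finset.prod_mul_distrib]
        refine Finset.prod_eq_one fun i hi => one_div_mul_cancel (hE i ?_)
        have := (Finset.mem_Icc.mp hi).1; omega
      have hd : 1 / (1 + lam (l-1) + Dd rho (l-1)) * (1 + lam (l-1) + Dd rho (l-1)) = 1 :=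
        one_div_mul_cancel hEl
      linear_combination (1 + lam 1 + Dd rho 1) * hcancel +
        ((∏ i ∈ Finset.Icc 2 (l-2), 1 / (1 + lam i + Dd rho i)) *
          (∏ h ∈ Finset.Icc 2 (l-2), (1 + lam h + Dd rho h)) * (1 + lam 1 + Dd rho 1)) * hd
  rw [hγwt, htwt, ← hsig]
  have i1 : (1 + lam 1 + Dd rho 1)⁻¹ * (1 + lam 1 + Dd rho 1) = 1 := inv_mul_cancel₀ hE1
  have il : (1 + lam (l-1) + Dd rho (l-1))⁻¹ * (1 + lam (l-1) + Dd rho (l-1)) = 1 :=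
    inv_mul_cancel₀ hEl
  set S := jwt lam (Dd rho) 1 s * sigmaWt rho l *
    (∏ n ∈ Finset.Icc 3 l, (1 + Dd rho n)) * lam 1 * lam (l-1) with hS
  linear_combination
    (-(S * (1 + lam (l-1) + Dd rho (l-1))⁻¹ * (1 + lam 1 + Dd rho 1)⁻¹)) * key -
    (S * (1 + lam (l-1) + Dd rho (l-1))⁻¹) * i1 +
    (S * (∏ i ∈ Finset.Icc 2 (l-1), 1 / (1 + lam i + Dd rho i)) *
      (∏ h ∈ Finset.Icc 1 (l-2), (1 + lam h + Dd rho h)) * (1 + lam 1 + Dd rho 1)⁻¹) * il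
end

section
/- (Comparison of level sums, cf. eq. (2.6)) Fix sequences λ with λ_i > 0 and ρ with ρ_i ≥ 0, and suppose there exist c > 0 and m ≥ 1 such that ∏_{i=3}^{ℓ−2} (1 + λ_i/(1+D_i)) ≤ c·ℓ^m for all ℓ ≥ 5. Then there exist constants c_0 > 0 and m' ≥ 1, not depending on k or ℓ, such that for all integers k ≥ 2 and all 2 ≤ ℓ ≤ k, q_ℓ^{(k)} ≤ c_0 · ℓ^{m'} · q_2^{(k)}. -/
open Filter Finset

namespace LSC

/-! ### Structural lemmas for paths -/

lemma endH_append : ∀ (s t : List Bool) (j : ℕ), endH j (s ++ t) = endH (endH j s) t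
  | [], _, _ => rfl
  | true :: s, t, j => endH_append s t (j + 1)
  | false :: s, t, j => endH_append s t (j - 1)

lemma isJump_append : ∀ (s t : List Bool) (j : ℕ),
    isJump j (s ++ t) = (isJump j s && isJump (endH j s) t)
  | [], _, _ => rfl
  | true :: s, t, j => by
      simp only [List.cons_append, isJump, endH, List.append_eq, isJump_append s t (j + 1)]
  | false :: s, t, j => by
      simp only [List.cons_append, isJump, endH, List.append_eq, isJump_append s t (j - 1), Bool.and_assoc]

lemma jwt_append (lam Dd : ℕ → ℝ) : ∀ (s t : List Bool) (j : ℕ),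
    jwt lam Dd j (s ++ t) = jwt lam Dd j s * jwt lam Dd (endH j s) t
  | [], t, j => by simp [jwt, endH]
  | true :: s, t, j => by
      simp only [List.cons_append, jwt, endH, List.append_eq, jwt_append lam Dd s t (j + 1), mul_assoc]
  | false :: s, t, j => by
      simp only [List.cons_append, jwt, endH, List.append_eq, jwt_append lam Dd s t (j - 1), mul_assoc]

lemma endH_replicate : ∀ (n j : ℕ), endH j (List.replicate n false) = j - n
  | 0, j => rfl
  | n + 1, j => by
      simp only [List.replicate_succ, endH, endH_replicate n (j - 1)]
      omega

lemma isJump_replicate : ∀ (n j : ℕ), n + 1 ≤ j → isJump j (List.replicate n false) = true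
  | 0, j, _ => rfl
  | n + 1, j, h => by
      simp only [List.replicate_succ, isJump, Bool.and_eq_true, decide_eq_true_eq]
      exact ⟨by omega, isJump_replicate n (j - 1) (by omega)⟩

/-- Denominator weight. -/
noncomputable def den (lam rho : ℕ → ℝ) (j : ℕ) : ℝ := 1 + lam j + Dd rho j

lemma jwt_replicate (lam rho : ℕ → ℝ) : ∀ (n j : ℕ),
    jwt lam (Dd rho) j (List.replicate n false)
      = ∏ i ∈ Finset.range n, 1 / den lam rho (j - i)
  | 0, j => by simp [jwt]
  | n + 1, j => by
      simp only [List.replicate_succ, jwt, jwt_replicate lam rho n (j - 1)]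
      rw [Finset.prod_range_succ']
      simp only [Nat.sub_zero]
      rw [mul_comm]
      congr 1
      apply Finset.prod_congr rfl
      intro i _
      have h : j - 1 - i = j - (i + 1) := by omega
      rw [h]

lemma D_nonneg (rho : ℕ → ℝ) (hrho : ∀ i, 1 ≤ i → 0 ≤ rho i) (j : ℕ) : 0 ≤ Dd rho j :=
  Finset.sum_nonneg fun i hi => hrho i (Finset.mem_Icc.mp hi).1

lemma D_mono (rho : ℕ → ℝ) (hrho : ∀ i, 1 ≤ i → 0 ≤ rho i) {i j : ℕ} (h : i ≤ j) :
    Dd rho i ≤ Dd rho j :=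
  Finset.sum_le_sum_of_subset_of_nonneg (Finset.Icc_subset_Icc_right h)
    (fun a ha _ => hrho a (Finset.mem_Icc.mp ha).1)

lemma oneD_pos (rho : ℕ → ℝ) (hrho : ∀ i, 1 ≤ i → 0 ≤ rho i) (j : ℕ) : 0 < 1 + Dd rho j := by
  have := D_nonneg rho hrho j; linarith

lemma den_pos (lam rho : ℕ → ℝ) (hlam : ∀ i, 1 ≤ i → 0 < lam i)
    (hrho : ∀ i, 1 ≤ i → 0 ≤ rho i) {j : ℕ} (hj : 1 ≤ j) : 0 < den lam rho j := by
  have h1 := hlam j hj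
  have h2 := D_nonneg rho hrho j
  unfold den; linarith

lemma jwt_nonneg (lam rho : ℕ → ℝ) (hlam : ∀ i, 1 ≤ i → 0 < lam i)
    (hrho : ∀ i, 1 ≤ i → 0 ≤ rho i) :
    ∀ (s : List Bool) (j : ℕ), 1 ≤ j → isJump j s = true → 0 ≤ jwt lam (Dd rho) j s
  | [], _, _, _ => by simp [jwt]
  | true :: s, j, hj, hJ => by
      simp only [isJump] at hJ
      have hd := den_pos lam rho hlam hrho hj
      have := hlam j hj
      exact mul_nonneg (div_nonneg this.le (by unfold den at hd; linarith))
        (jwt_nonneg lam rho hlam hrho s (j + 1) (by omega) hJ)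
  | false :: s, j, hj, hJ => by
      simp only [isJump, Bool.and_eq_true, decide_eq_true_eq] at hJ
      have hd := den_pos lam rho hlam hrho hj
      exact mul_nonneg (div_nonneg zero_le_one (by unfold den at hd; linarith))
        (jwt_nonneg lam rho hlam hrho s (j - 1) (by omega) hJ.2)

lemma sigmaWt_nonneg (rho : ℕ → ℝ) (hrho : ∀ i, 1 ≤ i → 0 ≤ rho i) (l : ℕ) :
    0 ≤ sigmaWt rho l :=
  Finset.prod_nonneg fun i _ => div_nonneg zero_le_one (oneD_pos rho hrho i).le

end LSC

namespace LSC

/-- The comparison constant `R(ℓ)`. -/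
noncomputable def Rc (lam rho : ℕ → ℝ) (l : ℕ) : ℝ :=
  (lam (l - 1) / den lam rho (l - 1)) * sigmaWt rho l *
    (∏ j ∈ Finset.Icc 2 (l - 1), den lam rho j) * (den lam rho 1 / lam 1) *
    ((1 + Dd rho 1) * (1 + Dd rho 2))

lemma prod_repl (lam rho : ℕ → ℝ) (l : ℕ) :
    (∏ i ∈ Finset.range (l - 2), 1 / den lam rho (l - 1 - i))
      = ∏ j ∈ Finset.Icc 2 (l - 1), 1 / den lam rho j := by
  apply Finset.prod_nbij' (fun i => l - 1 - i) (fun j => l - 1 - j)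
  · intro a ha; simp only [Finset.mem_range] at ha; simp only [Finset.mem_Icc]; omega
  · intro a ha; simp only [Finset.mem_Icc] at ha; simp only [Finset.mem_range]; omega
  · intro a ha; simp only [Finset.mem_range] at ha; omega
  · intro a ha; simp only [Finset.mem_Icc] at ha; omega
  · intro a _; rfl

lemma sigma_two (rho : ℕ → ℝ) :
    sigmaWt rho 2 = 1 / (1 + Dd rho 1) * (1 / (1 + Dd rho 2)) := by
  unfold sigmaWt
  rw [show Finset.Icc 1 2 = {1, 2} by decide, Finset.prod_pair (by norm_num)]

lemma eq_dropLast_concat {s : List Bool} (hL : s.getLast? = some true) :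
    s = s.dropLast ++ [true] := by
  have hne : s ≠ [] := by intro h; rw [h] at hL; simp at hL
  have h1 := List.dropLast_append_getLast hne
  rw [List.getLast?_eq_getLast hne, Option.some_inj] at hL
  rw [hL] at h1
  exact h1.symm

lemma key (lam rho : ℕ → ℝ) (hlam : ∀ i, 1 ≤ i → 0 < lam i)
    (hrho : ∀ i, 1 ≤ i → 0 ≤ rho i)
    {l : ℕ} (hl : 2 ≤ l) {s : List Bool} (hJ : isJump 1 s = true) (hE : endH 1 s = l)
    (hL : s.getLast? = some true) :
    (isJump 1 (tilde l s) = true ∧ endH 1 (tilde l s) = 2 ∧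
      (tilde l s).getLast? = some true) ∧
    jwt lam (Dd rho) 1 s * sigmaWt rho l
      = Rc lam rho l * (jwt lam (Dd rho) 1 (tilde l s) * sigmaWt rho 2) := by
  have hs : s = s.dropLast ++ [true] := eq_dropLast_concat hL
  set t := s.dropLast with ht
  have hEt : endH 1 t = l - 1 := by
    have h1 : endH 1 s = endH 1 t + 1 := by
      conv_lhs => rw [hs]
      rw [endH_append]; rfl
    omega
  have hJt : isJump 1 t = true := by
    have h2 := hJ
    rw [hs, isJump_append] at h2
    exact ((Bool.and_eq_true _ _).mp h2).1
  have htilde : tilde l s = (t ++ List.replicate (l - 2) false) ++ [true] := by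
    simp [tilde, List.append_assoc, ht]
  have hEr : endH (l - 1) (List.replicate (l - 2) false) = 1 := by
    rw [endH_replicate]; omega
  have hE2 : endH 1 (tilde l s) = 2 := by
    rw [htilde, endH_append, endH_append, hEt, hEr]
    rfl
  have hJr : isJump (l - 1) (List.replicate (l - 2) false) = true :=
    isJump_replicate _ _ (by omega)
  have hJ2 : isJump 1 (tilde l s) = true := by
    rw [htilde, isJump_append, isJump_append, hEt, hJt, hJr, endH_append, hEt, hEr]
    rfl
  have hL2 : (tilde l s).getLast? = some true := by
    rw [htilde]; exact List.getLast?_concat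
  refine ⟨⟨hJ2, hE2, hL2⟩, ?_⟩
  have hws : jwt lam (Dd rho) 1 s
      = jwt lam (Dd rho) 1 t * (lam (l - 1) / den lam rho (l - 1)) := by
    conv_lhs => rw [hs]
    rw [jwt_append, hEt]
    simp [jwt, den]
  have hwt : jwt lam (Dd rho) 1 (tilde l s)
      = jwt lam (Dd rho) 1 t * ((∏ j ∈ Finset.Icc 2 (l - 1), 1 / den lam rho j)
          * (lam 1 / den lam rho 1)) := by
    rw [htilde, jwt_append, jwt_append, hEt, endH_append, hEt, hEr,
      jwt_replicate, prod_repl]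
    simp [jwt, den, mul_assoc]
  have hden1 : den lam rho 1 ≠ 0 := (den_pos lam rho hlam hrho le_rfl).ne'
  have hlam1 : lam 1 ≠ 0 := (hlam 1 le_rfl).ne'
  have hQ : (∏ j ∈ Finset.Icc 2 (l - 1), 1 / den lam rho j)
      * (∏ j ∈ Finset.Icc 2 (l - 1), den lam rho j) = 1 := by
    rw [← Finset.prod_mul_distrib]
    apply Finset.prod_eq_one
    intro j hj
    have hj0 := (den_pos lam rho hlam hrho
      (le_trans (by norm_num) (Finset.mem_Icc.mp hj).1)).ne'
    field_simp
  have hb : den lam rho 1 / lam 1 * (lam 1 / den lam rho 1) = 1 := by field_simp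
  have hD1 : (1 + Dd rho 1) ≠ 0 := (oneD_pos rho hrho 1).ne'
  have hD2 : (1 + Dd rho 2) ≠ 0 := (oneD_pos rho hrho 2).ne'
  have hσ : sigmaWt rho 2 * ((1 + Dd rho 1) * (1 + Dd rho 2)) = 1 := by
    rw [sigma_two]
    field_simp
  rw [hws, hwt]
  unfold Rc
  calc jwt lam (Dd rho) 1 t * (lam (l - 1) / den lam rho (l - 1)) * sigmaWt rho l
      = jwt lam (Dd rho) 1 t * (lam (l - 1) / den lam rho (l - 1)) * sigmaWt rho l
        * (((∏ j ∈ Finset.Icc 2 (l - 1), 1 / den lam rho j)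
            * (∏ j ∈ Finset.Icc 2 (l - 1), den lam rho j))
          * (den lam rho 1 / lam 1 * (lam 1 / den lam rho 1))
          * (sigmaWt rho 2 * ((1 + Dd rho 1) * (1 + Dd rho 2)))) := by
        rw [hQ, hb, hσ]; ring
    _ = _ := by ring

end LSC

namespace LSC

lemma Rc_nonneg (lam rho : ℕ → ℝ) (hlam : ∀ i, 1 ≤ i → 0 < lam i)
    (hrho : ∀ i, 1 ≤ i → 0 ≤ rho i) {l : ℕ} (hl : 2 ≤ l) : 0 ≤ Rc lam rho l := by
  unfold Rc
  have h1 : (0:ℝ) ≤ lam (l - 1) / den lam rho (l - 1) :=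
    div_nonneg (hlam (l - 1) (by omega)).le (den_pos lam rho hlam hrho (by omega)).le
  refine mul_nonneg (mul_nonneg (mul_nonneg
    (mul_nonneg h1 (sigmaWt_nonneg rho hrho l)) ?_) ?_) ?_
  · exact Finset.prod_nonneg fun j hj =>
      (den_pos lam rho hlam hrho (le_trans (by norm_num) (Finset.mem_Icc.mp hj).1)).le
  · exact div_nonneg (den_pos lam rho hlam hrho le_rfl).le (hlam 1 le_rfl).le
  · exact mul_nonneg (oneD_pos rho hrho 1).le (oneD_pos rho hrho 2).le

lemma Rc_le (lam rho : ℕ → ℝ) (hlam : ∀ i, 1 ≤ i → 0 < lam i)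
    (hrho : ∀ i, 1 ≤ i → 0 ≤ rho i) {c m : ℝ} (hc : 0 < c) (hm : 1 ≤ m)
    (hbound : ∀ l : ℕ, 5 ≤ l →
      (∏ i ∈ Finset.Icc 3 (l - 2), (1 + lam i / (1 + Dd rho i))) ≤ c * (l : ℝ) ^ m)
    {l : ℕ} (hl : 2 ≤ l) :
    Rc lam rho l ≤ den lam rho 1 / lam 1 * (1 + lam 2 / (1 + Dd rho 2))
      * (c * 2 ^ m + c * 5 ^ m) * (l : ℝ) ^ m := by
  have hm0 : (0:ℝ) ≤ m := by linarith
  have hD1 : (1 + Dd rho 1) ≠ 0 := (oneD_pos rho hrho 1).ne'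
  have hD2 : (1 + Dd rho 2) ≠ 0 := (oneD_pos rho hrho 2).ne'
  have hb'0 : (0:ℝ) ≤ den lam rho 1 / lam 1 :=
    div_nonneg (den_pos lam rho hlam hrho le_rfl).le (hlam 1 le_rfl).le
  -- Step 1 : split sigma
  have hsplit : sigmaWt rho l = sigmaWt rho 2 * ∏ n ∈ Finset.Icc 3 l, 1 / (1 + Dd rho n) := by
    unfold sigmaWt
    rw [(show Finset.Icc 1 l = Finset.Ioc 0 l from Finset.Icc_add_one_left_eq_Ioc 0 l), (show Finset.Icc 1 2 = Finset.Ioc 0 2 from Finset.Icc_add_one_left_eq_Ioc 0 2), (show Finset.Icc 3 l = Finset.Ioc 2 l from Finset.Icc_add_one_left_eq_Ioc 2 l),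
      ← Finset.prod_Ioc_consecutive _ (by norm_num : (0:ℕ) ≤ 2) (by omega : 2 ≤ l)]
  -- Step 2 : reindex
  have hre : (∏ n ∈ Finset.Icc 3 l, 1 / (1 + Dd rho n))
      = ∏ j ∈ Finset.Icc 2 (l - 1), 1 / (1 + Dd rho (j + 1)) := by
    apply Finset.prod_nbij' (fun n => n - 1) (fun j => j + 1)
    · intro a ha; simp only [Finset.mem_Icc] at ha ⊢; omega
    · intro a ha; simp only [Finset.mem_Icc] at ha ⊢; omega
    · intro a ha; simp only [Finset.mem_Icc] at ha; omega
    · intro a ha; simp only [Finset.mem_Icc] at ha; omega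
    · intro a ha
      simp only [Finset.mem_Icc] at ha
      have h : a - 1 + 1 = a := by omega
      rw [h]
  have hσE : sigmaWt rho 2 * ((1 + Dd rho 1) * (1 + Dd rho 2)) = 1 := by
    rw [sigma_two]; field_simp
  have hcomb : (∏ j ∈ Finset.Icc 2 (l - 1), 1 / (1 + Dd rho (j + 1)))
      * (∏ j ∈ Finset.Icc 2 (l - 1), den lam rho j)
      = ∏ j ∈ Finset.Icc 2 (l - 1), den lam rho j / (1 + Dd rho (j + 1)) := by
    rw [← Finset.prod_mul_distrib]
    apply Finset.prod_congr rfl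
    intro j _
    rw [one_div, inv_mul_eq_div]
  have hRc : Rc lam rho l = (lam (l - 1) / den lam rho (l - 1)) * (den lam rho 1 / lam 1)
      * ∏ j ∈ Finset.Icc 2 (l - 1), den lam rho j / (1 + Dd rho (j + 1)) := by
    unfold Rc
    rw [hsplit, hre]
    calc lam (l - 1) / den lam rho (l - 1)
          * (sigmaWt rho 2 * ∏ j ∈ Finset.Icc 2 (l - 1), 1 / (1 + Dd rho (j + 1)))
          * (∏ j ∈ Finset.Icc 2 (l - 1), den lam rho j) * (den lam rho 1 / lam 1)
          * ((1 + Dd rho 1) * (1 + Dd rho 2))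
        = lam (l - 1) / den lam rho (l - 1) * (den lam rho 1 / lam 1)
          * (sigmaWt rho 2 * ((1 + Dd rho 1) * (1 + Dd rho 2)))
          * ((∏ j ∈ Finset.Icc 2 (l - 1), 1 / (1 + Dd rho (j + 1)))
            * (∏ j ∈ Finset.Icc 2 (l - 1), den lam rho j)) := by ring
      _ = _ := by rw [hσE, hcomb]; ring
  -- Step 3 : factorwise bound
  have hfac : ∀ j ∈ Finset.Icc 2 (l - 1),
      den lam rho j / (1 + Dd rho (j + 1)) ≤ 1 + lam j / (1 + Dd rho j) := by
    intro j hj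
    have hj1 : 1 ≤ j := le_trans (by norm_num) (Finset.mem_Icc.mp hj).1
    have hmono := D_mono rho hrho (Nat.le_succ j)
    have h1 : den lam rho j / (1 + Dd rho (j + 1)) ≤ den lam rho j / (1 + Dd rho j) :=
      div_le_div_of_nonneg_left (den_pos lam rho hlam hrho hj1).le
        (oneD_pos rho hrho j) (by linarith)
    have hne : (1 + Dd rho j) ≠ 0 := (oneD_pos rho hrho j).ne'
    have h2 : den lam rho j / (1 + Dd rho j) = 1 + lam j / (1 + Dd rho j) := by
      unfold den; field_simp; ring
    linarith
  have hfac0 : ∀ j ∈ Finset.Icc 2 (l - 1),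
      (0:ℝ) ≤ den lam rho j / (1 + Dd rho (j + 1)) := by
    intro j hj
    have hj1 : 1 ≤ j := le_trans (by norm_num) (Finset.mem_Icc.mp hj).1
    exact div_nonneg (den_pos lam rho hlam hrho hj1).le (oneD_pos rho hrho (j + 1)).le
  have hprod1 : (∏ j ∈ Finset.Icc 2 (l - 1), den lam rho j / (1 + Dd rho (j + 1)))
      ≤ ∏ j ∈ Finset.Icc 2 (l - 1), (1 + lam j / (1 + Dd rho j)) :=
    Finset.prod_le_prod hfac0 hfac
  have hfacpos : ∀ j : ℕ, 1 ≤ j → (0:ℝ) ≤ lam j / (1 + Dd rho j) := fun j hj =>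
    div_nonneg (hlam j hj).le (oneD_pos rho hrho j).le
  -- Step 4 : peel off the j = 2 factor
  have hsplit2 : (∏ j ∈ Finset.Icc 2 (l - 1), (1 + lam j / (1 + Dd rho j)))
      ≤ (1 + lam 2 / (1 + Dd rho 2))
        * ∏ j ∈ Finset.Icc 3 (l - 1), (1 + lam j / (1 + Dd rho j)) := by
    rcases Nat.lt_or_ge l 3 with h3 | h3
    · have hl2 : l = 2 := by omega
      subst hl2
      rw [show Finset.Icc 2 (2 - 1) = ∅ by decide, show Finset.Icc 3 (2 - 1) = ∅ by decide]
      simp only [Finset.prod_empty, mul_one]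
      have := hfacpos 2 (by norm_num)
      linarith
    · rw [(show Finset.Icc 2 (l - 1) = Finset.Ioc 1 (l - 1) from Finset.Icc_add_one_left_eq_Ioc 1 (l - 1)), (show Finset.Icc 3 (l - 1) = Finset.Ioc 2 (l - 1) from Finset.Icc_add_one_left_eq_Ioc 2 (l - 1)),
        ← Finset.prod_Ioc_consecutive _ (by norm_num : (1:ℕ) ≤ 2) (by omega : 2 ≤ l - 1),
        show Finset.Ioc 1 2 = {2} by decide, Finset.prod_singleton]
  -- Step 5 : bound the tail product
  have hl1 : (1:ℝ) ≤ (l : ℝ) ^ m :=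
    Real.one_le_rpow (by exact_mod_cast le_trans (by norm_num) hl) hm0
  have htail : (∏ j ∈ Finset.Icc 3 (l - 1), (1 + lam j / (1 + Dd rho j)))
      ≤ (c * 2 ^ m + c * 5 ^ m) * (l : ℝ) ^ m := by
    have hc2 : (0:ℝ) ≤ c * 2 ^ m :=
      mul_nonneg hc.le (Real.rpow_nonneg (by norm_num) m)
    have hc5 : (0:ℝ) ≤ c * 5 ^ m :=
      mul_nonneg hc.le (Real.rpow_nonneg (by norm_num) m)
    rcases Nat.lt_or_ge l 4 with h4 | h4
    · rw [Finset.Icc_eq_empty_of_lt (by omega), Finset.prod_empty]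
      have h5 := hbound 5 (by norm_num)
      rw [show Finset.Icc 3 (5 - 2) = {3} by decide, Finset.prod_singleton] at h5
      have hone : (1:ℝ) ≤ 1 + lam 3 / (1 + Dd rho 3) := by
        have := hfacpos 3 (by norm_num); linarith
      have h1le : (1:ℝ) ≤ c * (5:ℕ) ^ m := le_trans hone h5
      have h1le' : (1:ℝ) ≤ c * (5:ℝ) ^ m := by
        have : ((5:ℕ):ℝ) = (5:ℝ) := by norm_num
        rwa [this] at h1le
      calc (1:ℝ) ≤ c * 5 ^ m := h1le'
        _ = c * 5 ^ m * 1 := (mul_one _).symm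
        _ ≤ c * 5 ^ m * (l : ℝ) ^ m :=
            mul_le_mul_of_nonneg_left hl1 (by linarith)
        _ ≤ (c * 2 ^ m + c * 5 ^ m) * (l : ℝ) ^ m :=
            mul_le_mul_of_nonneg_right (by linarith) (by linarith)
    · have h5 := hbound (l + 1) (by omega)
      rw [show (l + 1) - 2 = l - 1 by omega] at h5
      have hcast : ((l + 1 : ℕ) : ℝ) = (l : ℝ) + 1 := by push_cast; ring
      rw [hcast] at h5
      have hstep : ((l : ℝ) + 1) ^ m ≤ (2:ℝ) ^ m * (l : ℝ) ^ m := by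
        rw [← Real.mul_rpow (by norm_num) (Nat.cast_nonneg l)]
        apply Real.rpow_le_rpow (by positivity) ?_ hm0
        have h2l : (2:ℝ) ≤ (l:ℝ) := by exact_mod_cast hl
        linarith
      have h0 : 0 ≤ c * 5 ^ m * (l : ℝ) ^ m :=
        mul_nonneg hc5 (Real.rpow_nonneg (Nat.cast_nonneg l) m)
      calc (∏ j ∈ Finset.Icc 3 (l - 1), (1 + lam j / (1 + Dd rho j)))
          ≤ c * ((l : ℝ) + 1) ^ m := h5
        _ ≤ c * ((2:ℝ) ^ m * (l : ℝ) ^ m) := mul_le_mul_of_nonneg_left hstep hc.le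
        _ = c * 2 ^ m * (l : ℝ) ^ m := by ring
        _ ≤ (c * 2 ^ m + c * 5 ^ m) * (l : ℝ) ^ m := by nlinarith [h0]
  -- assemble
  have ha1 : lam (l - 1) / den lam rho (l - 1) ≤ 1 := by
    rw [div_le_one (den_pos lam rho hlam hrho (by omega : 1 ≤ l - 1))]
    unfold den
    have := D_nonneg rho hrho (l - 1)
    linarith
  have hP0 : (0:ℝ) ≤ ∏ j ∈ Finset.Icc 2 (l - 1), den lam rho j / (1 + Dd rho (j + 1)) :=
    Finset.prod_nonneg hfac0
  have hP0' : (0:ℝ) ≤ ∏ j ∈ Finset.Icc 2 (l - 1), (1 + lam j / (1 + Dd rho j)) :=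
    Finset.prod_nonneg fun j hj => by
      have := hfacpos j (le_trans (by norm_num) (Finset.mem_Icc.mp hj).1)
      linarith
  have h1l2 : (0:ℝ) ≤ 1 + lam 2 / (1 + Dd rho 2) := by
    have := hfacpos 2 (by norm_num); linarith
  calc Rc lam rho l
      = (lam (l - 1) / den lam rho (l - 1)) * ((den lam rho 1 / lam 1)
        * ∏ j ∈ Finset.Icc 2 (l - 1), den lam rho j / (1 + Dd rho (j + 1))) := by
        rw [hRc]; ring
    _ ≤ 1 * ((den lam rho 1 / lam 1)
        * ∏ j ∈ Finset.Icc 2 (l - 1), den lam rho j / (1 + Dd rho (j + 1))) :=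
        mul_le_mul_of_nonneg_right ha1 (mul_nonneg hb'0 hP0)
    _ = (den lam rho 1 / lam 1)
        * ∏ j ∈ Finset.Icc 2 (l - 1), den lam rho j / (1 + Dd rho (j + 1)) := one_mul _
    _ ≤ (den lam rho 1 / lam 1)
        * ∏ j ∈ Finset.Icc 2 (l - 1), (1 + lam j / (1 + Dd rho j)) :=
        mul_le_mul_of_nonneg_left hprod1 hb'0
    _ ≤ (den lam rho 1 / lam 1) * ((1 + lam 2 / (1 + Dd rho 2))
        * ∏ j ∈ Finset.Icc 3 (l - 1), (1 + lam j / (1 + Dd rho j))) :=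
        mul_le_mul_of_nonneg_left hsplit2 hb'0
    _ ≤ (den lam rho 1 / lam 1) * ((1 + lam 2 / (1 + Dd rho 2))
        * ((c * 2 ^ m + c * 5 ^ m) * (l : ℝ) ^ m)) :=
        mul_le_mul_of_nonneg_left (mul_le_mul_of_nonneg_left htail h1l2) hb'0
    _ = den lam rho 1 / lam 1 * (1 + lam 2 / (1 + Dd rho 2))
        * (c * 2 ^ m + c * 5 ^ m) * (l : ℝ) ^ m := by ring

end LSC

namespace LSC

lemma ofFn_get_cast {α : Type*} {n : ℕ} (ll : List α) (h : ll.length = n) :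
    List.ofFn (fun i : Fin n => ll.get (Fin.cast h.symm i)) = ll := by
  subst h
  simp [List.ofFn_get]

lemma qsum_le (lam rho : ℕ → ℝ) (hlam : ∀ i, 1 ≤ i → 0 < lam i)
    (hrho : ∀ i, 1 ≤ i → 0 ≤ rho i) {k l : ℕ} (hk : 2 ≤ k) (hl : 2 ≤ l) (hlk : l ≤ k) :
    qsum lam rho k l ≤ Rc lam rho l * qsum lam rho k 2 := by
  classical
  have hlen : ∀ γ : Fin (2 * k - l - 1) → Bool,
      (tilde l (List.ofFn γ)).length = 2 * k - 2 - 1 := by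
    intro γ
    simp only [tilde, List.length_append, List.length_dropLast, List.length_ofFn,
      List.length_replicate, List.length_cons, List.length_nil]
    omega
  set T : (Fin (2 * k - l - 1) → Bool) → (Fin (2 * k - 2 - 1) → Bool) :=
    fun γ i => (tilde l (List.ofFn γ)).get (Fin.cast (hlen γ).symm i) with hT
  have hofT : ∀ γ, List.ofFn (T γ) = tilde l (List.ofFn γ) := fun γ =>
    ofFn_get_cast _ (hlen γ)
  set S : Finset (Fin (2 * k - l - 1) → Bool) :=
    Finset.univ.filter (fun γ => isJump 1 (List.ofFn γ) = true ∧
      endH 1 (List.ofFn γ) = l ∧ (List.ofFn γ).getLast? = some true) with hS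
  have hql : qsum lam rho k l
      = ∑ γ ∈ S, jwt lam (Dd rho) 1 (List.ofFn γ) * sigmaWt rho l := by
    unfold qsum
    rw [Finset.sum_mul, hS, Finset.sum_filter]
    exact Finset.sum_congr rfl fun γ _ => by rw [ite_mul, zero_mul]
  have hstep : ∀ γ ∈ S, (jwt lam (Dd rho) 1 (List.ofFn γ) * sigmaWt rho l
      = Rc lam rho l * sigmaWt rho 2 * jwt lam (Dd rho) 1 (List.ofFn (T γ))) ∧
        (isJump 1 (List.ofFn (T γ)) = true ∧ endH 1 (List.ofFn (T γ)) = 2 ∧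
          (List.ofFn (T γ)).getLast? = some true) := by
    intro γ hγ
    rw [hS, Finset.mem_filter] at hγ
    obtain ⟨-, h1, h2, h3⟩ := hγ
    have hk2 := key lam rho hlam hrho hl h1 h2 h3
    rw [hofT γ]
    exact ⟨by rw [hk2.2]; ring, hk2.1⟩
  have hinj : ∀ x ∈ S, ∀ y ∈ S, T x = T y → x = y := by
    intro x hx y hy hxy
    have hx' := (Finset.mem_filter.mp (hS ▸ hx)).2
    have hy' := (Finset.mem_filter.mp (hS ▸ hy)).2
    have h1 : tilde l (List.ofFn x) = tilde l (List.ofFn y) := by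
      rw [← hofT, ← hofT, hxy]
    unfold tilde at h1
    rw [List.append_assoc, List.append_assoc] at h1
    have h2 : (List.ofFn x).dropLast = (List.ofFn y).dropLast :=
      List.append_cancel_right h1
    apply List.ofFn_injective
    calc List.ofFn x = (List.ofFn x).dropLast ++ [true] := eq_dropLast_concat hx'.2.2
      _ = (List.ofFn y).dropLast ++ [true] := by rw [h2]
      _ = List.ofFn y := (eq_dropLast_concat hy'.2.2).symm
  have hRσ : 0 ≤ Rc lam rho l * sigmaWt rho 2 :=
    mul_nonneg (Rc_nonneg lam rho hlam hrho hl) (sigmaWt_nonneg rho hrho 2)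
  calc qsum lam rho k l
      = ∑ γ ∈ S, jwt lam (Dd rho) 1 (List.ofFn γ) * sigmaWt rho l := hql
    _ = ∑ γ ∈ S, Rc lam rho l * sigmaWt rho 2 * jwt lam (Dd rho) 1 (List.ofFn (T γ)) :=
        Finset.sum_congr rfl fun γ hγ => (hstep γ hγ).1
    _ = Rc lam rho l * sigmaWt rho 2
        * ∑ γ ∈ S, jwt lam (Dd rho) 1 (List.ofFn (T γ)) := by rw [Finset.mul_sum]
    _ = Rc lam rho l * sigmaWt rho 2
        * ∑ δ ∈ S.image T, jwt lam (Dd rho) 1 (List.ofFn δ) := by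
        rw [Finset.sum_image hinj]
    _ = Rc lam rho l * sigmaWt rho 2
        * ∑ δ ∈ S.image T, (if isJump 1 (List.ofFn δ) = true ∧ endH 1 (List.ofFn δ) = 2 ∧
            (List.ofFn δ).getLast? = some true then jwt lam (Dd rho) 1 (List.ofFn δ)
          else 0) := by
        congr 1
        apply Finset.sum_congr rfl
        intro δ hδ
        obtain ⟨γ, hγ, rfl⟩ := Finset.mem_image.mp hδ
        rw [if_pos (hstep γ hγ).2]
    _ ≤ Rc lam rho l * sigmaWt rho 2
        * ∑ δ : Fin (2 * k - 2 - 1) → Bool,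
            (if isJump 1 (List.ofFn δ) = true ∧ endH 1 (List.ofFn δ) = 2 ∧
              (List.ofFn δ).getLast? = some true then jwt lam (Dd rho) 1 (List.ofFn δ)
            else 0) := by
        apply mul_le_mul_of_nonneg_left _ hRσ
        apply Finset.sum_le_sum_of_subset_of_nonneg (Finset.subset_univ _)
        intro δ _ _
        split_ifs with h
        · exact jwt_nonneg lam rho hlam hrho _ 1 le_rfl h.1
        · exact le_rfl
    _ = Rc lam rho l * qsum lam rho k 2 := by
        unfold qsum
        ring

end LSC

/-- **Comparison of level sums (eq. (2.6)).** Under the product growth hypothesis,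
there are constants `c₀ > 0` and `m' ≥ 1`, independent of `k` and `ℓ`, with
`q_ℓ^{(k)} ≤ c₀ ℓ^{m'} q_2^{(k)}` for all `2 ≤ ℓ ≤ k`. -/
theorem level_sum_comparison (lam rho : ℕ → ℝ)
    (hlam : ∀ i, 1 ≤ i → 0 < lam i) (hrho : ∀ i, 1 ≤ i → 0 ≤ rho i)
    (hyp : ∃ c : ℝ, 0 < c ∧ ∃ m : ℝ, 1 ≤ m ∧ ∀ l : ℕ, 5 ≤ l →
      (∏ i ∈ Finset.Icc 3 (l - 2), (1 + lam i / (1 + Dd rho i))) ≤ c * (l : ℝ) ^ m) :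
    ∃ c₀ : ℝ, 0 < c₀ ∧ ∃ m' : ℝ, 1 ≤ m' ∧ ∀ k l : ℕ, 2 ≤ k → 2 ≤ l → l ≤ k →
      qsum lam rho k l ≤ c₀ * (l : ℝ) ^ m' * qsum lam rho k 2 := by
  classical
  obtain ⟨c, hc, m, hm, hbound⟩ := hyp
  refine ⟨LSC.den lam rho 1 / lam 1 * (1 + lam 2 / (1 + Dd rho 2)) * (c * 2 ^ m + c * 5 ^ m),
    ?_, m, hm, ?_⟩
  · have h1 := LSC.den_pos lam rho hlam hrho (le_refl 1)
    have h2 := hlam 1 le_rfl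
    have h3 := div_pos (hlam 2 (by norm_num)) (LSC.oneD_pos rho hrho 2)
    have h4 : (0:ℝ) < c * 2 ^ m := mul_pos hc (Real.rpow_pos_of_pos (by norm_num) m)
    have h5 : (0:ℝ) < c * 5 ^ m := mul_pos hc (Real.rpow_pos_of_pos (by norm_num) m)
    exact mul_pos (mul_pos (div_pos h1 h2) (by linarith)) (by linarith)
  · intro k l hk hl hlk
    have hRle := LSC.Rc_le lam rho hlam hrho hc hm hbound hl
    have hq2 : 0 ≤ qsum lam rho k 2 := by
      unfold qsum
      apply mul_nonneg _ (LSC.sigmaWt_nonneg rho hrho 2)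
      apply Finset.sum_nonneg
      intro γ _
      split_ifs with h
      · exact LSC.jwt_nonneg lam rho hlam hrho _ 1 le_rfl h.1
      · exact le_rfl
    calc qsum lam rho k l ≤ LSC.Rc lam rho l * qsum lam rho k 2 :=
        LSC.qsum_le lam rho hlam hrho hk hl hlk
      _ ≤ LSC.den lam rho 1 / lam 1 * (1 + lam 2 / (1 + Dd rho 2))
          * (c * 2 ^ m + c * 5 ^ m) * (l : ℝ) ^ m * qsum lam rho k 2 :=
        mul_le_mul_of_nonneg_right hRle hq2
end
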